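/- arXiv:2504.03390 — 9 statements merged into one kernel-verified Lean document; each statement's English description precedes it below -/
import Mathlib

section
/- Suppose (H, c, ν) satisfies the Marchenko–Pastur relation. Then for every z̃ ∈ ℂ⁺ the companion transform satisfies s_ν̲(z̃) ≠ 0, the point φ_{ν,c}(z̃) lies in the spectral domain 𝔻_{H,c}(∞), and Φ_{H,c}(φ_{ν,c}(z̃)) = z̃. In particular φ_{ν,c} : ℂ⁺ → 𝔻_{H,c}(∞) is injective. -/
open MeasureTheory Filter Complex Set

noncomputable section

/-- The Stieltjes transform of a measure on `ℝ`. -/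
def St (μ : Measure ℝ) (z : ℂ) : ℂ := ∫ l, ((l : ℂ) - z)⁻¹ ∂μ

/-- The (topological) support of a measure on `ℝ`. -/
def msupport (μ : Measure ℝ) : Set ℝ := {x : ℝ | ∀ U ∈ nhds x, 0 < μ U}

/-- `(H, c, ν)` satisfies the Marchenko–Pastur relation. -/
def MPRel (H : Measure ℝ) (c : ℝ) (ν : Measure ℝ) : Prop :=
  IsProbabilityMeasure H ∧ H ≠ Measure.dirac 0 ∧
  IsCompact (msupport H) ∧ msupport H ⊆ Set.Ici 0 ∧
  0 < c ∧
  IsProbabilityMeasure ν ∧ ν ≠ Measure.dirac 0 ∧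
  IsCompact (msupport ν) ∧ msupport ν ⊆ Set.Ici 0 ∧
  ∀ z : ℂ, 0 < z.im →
    St ν z = (∫ l, ((l : ℂ) * (1 - (c : ℂ) * z * St ν z - (c : ℂ)) - z)⁻¹ ∂H) ∧
    0 < ((c : ℂ) * St ν z + ((c : ℂ) - 1) / z).im

/-- The map `Φ_{H,c}`. -/
def Phi (H : Measure ℝ) (c : ℝ) (z : ℂ) : ℂ := (1 - (c : ℂ) * z * St H z - (c : ℂ)) * z

/-- The spectral domain `𝔻_{H,c}(∞)`. -/
def Dinf (H : Measure ℝ) (c : ℝ) : Set ℂ := {z : ℂ | 0 < z.im ∧ 0 < (Phi H c z).im}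

/-- The companion transform `s_ν̲`. -/
def sUnder (ν : Measure ℝ) (c : ℝ) (z : ℂ) : ℂ := (c : ℂ) * St ν z - (1 - (c : ℂ)) / z

/-- The map `φ_{ν,c}`. -/
def phiInv (ν : Measure ℝ) (c : ℝ) (z : ℂ) : ℂ := -1 / sUnder ν c z

end


theorem stmt0 (H ν : MeasureTheory.Measure ℝ) (c : ℝ) (hMP : MPRel H c ν) :
    (∀ z : ℂ, 0 < z.im →
      sUnder ν c z ≠ 0 ∧ phiInv ν c z ∈ Dinf H c ∧ Phi H c (phiInv ν c z) = z) ∧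
    Set.InjOn (phiInv ν c) {z : ℂ | 0 < z.im} := by
  obtain ⟨-, -, -, -, hc, -, -, -, -, hrel⟩ := hMP
  have key : ∀ z : ℂ, 0 < z.im →
      sUnder ν c z ≠ 0 ∧ phiInv ν c z ∈ Dinf H c ∧ Phi H c (phiInv ν c z) = z := by
    intro z hz
    obtain ⟨heq, him⟩ := hrel z hz
    have hz0 : z ≠ 0 := fun h => by simp [h] at hz
    set s := St ν z with hs
    have hus : sUnder ν c z = (c : ℂ) * s + ((c : ℂ) - 1) / z := by
      rw [sUnder]; ring
    have huim : 0 < (sUnder ν c z).im := hus ▸ him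
    have hu : sUnder ν c z ≠ 0 := fun h => by simp [h] at huim
    set u := sUnder ν c z with hudef
    set A : ℂ := 1 - (c : ℂ) * z * s - (c : ℂ) with hAdef
    have hA : A = -(u * z) := by
      rw [hudef, sUnder, hAdef, ← hs]
      field_simp
      ring
    have hA0 : A ≠ 0 := by
      rw [hA]; exact neg_ne_zero.mpr (mul_ne_zero hu hz0)
    have hw : phiInv ν c z = z / A := by
      rw [phiInv, ← hudef, hA]
      rw [div_eq_div_iff hu (by exact neg_ne_zero.mpr (mul_ne_zero hu hz0))]
      ring
    have hwim : 0 < (phiInv ν c z).im := by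
      rw [phiInv, ← hudef]
      have h1 : (-1 : ℂ) / u = -u⁻¹ := by ring
      rw [h1]
      simp only [Complex.neg_im, Complex.inv_im, neg_div, neg_neg]
      exact div_pos huim (Complex.normSq_pos.mpr hu)
    have hSt : St H (phiInv ν c z) = A * s := by
      have hpt : ∀ l : ℝ, ((l : ℂ) - phiInv ν c z)⁻¹
          = A * ((l : ℂ) * A - z)⁻¹ := by
        intro l
        rw [hw]
        have h2 : (l : ℂ) - z / A = ((l : ℂ) * A - z) / A := by
          field_simp
        rw [h2, inv_div, div_eq_mul_inv]
      rw [St]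
      have hsm := integral_smul (μ := H) A (fun l : ℝ => ((l : ℂ) * A - z)⁻¹)
      simp only [smul_eq_mul] at hsm
      simp_rw [hpt]
      rw [hsm, ← heq]
    have hPhi : Phi H c (phiInv ν c z) = z := by
      rw [Phi, hSt, hw]
      have h3 : 1 - (c : ℂ) * (z / A) * (A * s) - (c : ℂ) = A := by
        have h4 : (c : ℂ) * (z / A) * (A * s) = c * z * s * (A * A⁻¹) := by ring
        rw [h4, mul_inv_cancel₀ hA0, mul_one, hAdef]
      rw [h3, mul_div_cancel₀ _ hA0]
    refine ⟨hu, ⟨hwim, ?_⟩, hPhi⟩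
    rw [hPhi]; exact hz
  refine ⟨key, ?_⟩
  intro z1 hz1 z2 hz2 hphieq
  have h1 := (key z1 hz1).2.2
  have h2 := (key z2 hz2).2.2
  rw [← h1, ← h2, hphieq]
end

section
/- Let H be a probability measure on ℝ with compact support contained in [0,∞) and let c > 0. Then Φ_{H,c} is injective on 𝔻_{H,c}(∞): if z₁, z₂ ∈ 𝔻_{H,c}(∞) and Φ_{H,c}(z₁) = Φ_{H,c}(z₂), then z₁ = z₂. -/
open MeasureTheory Filter Complex Set

lemma aux_ne {z : ℂ} (hz : 0 < z.im) (l : ℝ) : (l : ℂ) - z ≠ 0 := by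
  intro h
  have h2 : ((l : ℂ) - z).im = 0 := by rw [h]; simp
  simp [Complex.sub_im, Complex.ofReal_im] at h2
  linarith

lemma aux_normSq_ne {z : ℂ} (hz : 0 < z.im) (l : ℝ) : Complex.normSq ((l:ℂ) - z) ≠ 0 :=
  fun h => aux_ne hz l (Complex.normSq_eq_zero.mp h)

lemma aux_inv_norm_le {z : ℂ} (hz : 0 < z.im) (l : ℝ) : ‖((l:ℂ) - z)⁻¹‖ ≤ (z.im)⁻¹ := by
  rw [norm_inv]
  have h1 : z.im ≤ ‖(l:ℂ) - z‖ := by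
    have := Complex.abs_im_le_norm ((l:ℂ) - z)
    rw [Complex.sub_im, Complex.ofReal_im] at this
    calc z.im ≤ |0 - z.im| := by rw [zero_sub, abs_neg, abs_of_pos hz]
    _ ≤ _ := this
  exact inv_anti₀ hz h1

lemma aux_f_eq {z : ℂ} (hz : 0 < z.im) (l : ℝ) :
    (l:ℂ) * ((l:ℂ) - z)⁻¹ = 1 + z * ((l:ℂ) - z)⁻¹ := by
  field_simp [aux_ne hz l]
  ring

lemma aux_f_bound {z : ℂ} (hz : 0 < z.im) (l : ℝ) :
    ‖(l:ℂ) * ((l:ℂ) - z)⁻¹‖ ≤ 1 + ‖z‖ * (z.im)⁻¹ := by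
  rw [aux_f_eq hz l]
  calc ‖1 + z * ((l:ℂ) - z)⁻¹‖ ≤ ‖(1:ℂ)‖ + ‖z * ((l:ℂ) - z)⁻¹‖ := norm_add_le _ _
  _ ≤ 1 + ‖z‖ * (z.im)⁻¹ := by
      rw [norm_one, norm_mul]
      gcongr
      exact aux_inv_norm_le hz l

lemma aux_cont_inv {z : ℂ} (hz : 0 < z.im) : Continuous (fun l : ℝ => ((l:ℂ) - z)⁻¹) :=
  (Complex.continuous_ofReal.sub continuous_const).inv₀ (fun l => aux_ne hz l)

lemma aux_cont_f {z : ℂ} (hz : 0 < z.im) :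
    Continuous (fun l : ℝ => (l:ℂ) * ((l:ℂ) - z)⁻¹) :=
  Complex.continuous_ofReal.mul (aux_cont_inv hz)

lemma aux_int_inv (H : Measure ℝ) [IsProbabilityMeasure H] {z : ℂ} (hz : 0 < z.im) :
    Integrable (fun l : ℝ => ((l:ℂ) - z)⁻¹) H :=
  (integrable_const ((z.im)⁻¹)).mono' (aux_cont_inv hz).aestronglyMeasurable
    (ae_of_all _ fun l => aux_inv_norm_le hz l)

lemma aux_int_f (H : Measure ℝ) [IsProbabilityMeasure H] {z : ℂ} (hz : 0 < z.im) :
    Integrable (fun l : ℝ => (l:ℂ) * ((l:ℂ) - z)⁻¹) H :=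
  (integrable_const (1 + ‖z‖ * (z.im)⁻¹)).mono' (aux_cont_f hz).aestronglyMeasurable
    (ae_of_all _ fun l => aux_f_bound hz l)

lemma aux_int_prod (H : Measure ℝ) [IsProbabilityMeasure H] {z₁ z₂ : ℂ}
    (h₁ : 0 < z₁.im) (h₂ : 0 < z₂.im) :
    Integrable (fun l : ℝ => ((l:ℂ) * ((l:ℂ) - z₁)⁻¹) * ((l:ℂ) * ((l:ℂ) - z₂)⁻¹)) H := by
  refine (integrable_const ((1 + ‖z₁‖ * (z₁.im)⁻¹) * (1 + ‖z₂‖ * (z₂.im)⁻¹))).mono'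
    ((aux_cont_f h₁).mul (aux_cont_f h₂)).aestronglyMeasurable (ae_of_all _ fun l => ?_)
  rw [norm_mul]
  have b₁ := aux_f_bound h₁ l
  have b₂ := aux_f_bound h₂ l
  exact mul_le_mul b₁ b₂ (norm_nonneg _) (by positivity)

lemma aux_int_sq (H : Measure ℝ) [IsProbabilityMeasure H] {z : ℂ} (hz : 0 < z.im) :
    Integrable (fun l : ℝ => ‖(l:ℂ) * ((l:ℂ) - z)⁻¹‖^2) H := by
  refine (integrable_const ((1 + ‖z‖ * (z.im)⁻¹)^2)).mono'
    (((aux_cont_f hz).norm.pow 2).aestronglyMeasurable) (ae_of_all _ fun l => ?_)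
  rw [Real.norm_eq_abs, _root_.abs_of_nonneg (by positivity)]
  exact pow_le_pow_left₀ (norm_nonneg _) (aux_f_bound hz l) 2

lemma aux_im_pt {z : ℂ} (hz : 0 < z.im) (l : ℝ) :
    (z^2 * ((l:ℂ) - z)⁻¹).im = z.im * (‖(l:ℂ) * ((l:ℂ) - z)⁻¹‖^2 - 1) := by
  have hns : Complex.normSq ((l:ℂ) - z) ≠ 0 := aux_normSq_ne hz l
  have h1 : ‖(l:ℂ) * ((l:ℂ) - z)⁻¹‖^2 = l^2 / Complex.normSq ((l:ℂ) - z) := by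
    rw [norm_mul, norm_inv, mul_pow, inv_pow,
      Complex.sq_norm, Complex.sq_norm, Complex.normSq_ofReal, div_eq_mul_inv, sq]
  rw [h1]
  simp only [Complex.mul_im, Complex.inv_re, Complex.inv_im, pow_two, Complex.mul_re,
    Complex.mul_im, Complex.sub_re, Complex.sub_im, Complex.ofReal_re, Complex.ofReal_im]
  simp only [Complex.normSq_apply, Complex.sub_re, Complex.sub_im, Complex.ofReal_re,
    Complex.ofReal_im] at hns ⊢
  have hd : -(z.re * l * 2) + z.re ^ 2 + z.im ^ 2 + l ^ 2 ≠ 0 := by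
    intro h; exact hns (by linear_combination h)
  have hinv : (-(z.re * l * 2) + z.re ^ 2 + z.im ^ 2 + l ^ 2)⁻¹ *
      (-(z.re * l * 2) + z.re ^ 2 + z.im ^ 2 + l ^ 2) = 1 := inv_mul_cancel₀ hd
  linear_combination (-z.im) * hinv

lemma aux_phi_eq (H : Measure ℝ) [IsProbabilityMeasure H] (c : ℝ) (z : ℂ) :
    Phi H c z = (1 - (c:ℂ)) * z - (c:ℂ) * ∫ l, z^2 * ((l:ℂ) - z)⁻¹ ∂H := by
  rw [MeasureTheory.integral_const_mul]
  unfold Phi St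
  ring

lemma aux_im_phi (H : Measure ℝ) [IsProbabilityMeasure H] (c : ℝ) {z : ℂ} (hz : 0 < z.im) :
    (Phi H c z).im = z.im * (1 - c * ∫ l, ‖(l:ℂ) * ((l:ℂ) - z)⁻¹‖^2 ∂H) := by
  have hint : Integrable (fun l : ℝ => z^2 * ((l:ℂ) - z)⁻¹) H :=
    (aux_int_inv H hz).const_mul _
  have him : (∫ l, z^2 * ((l:ℂ) - z)⁻¹ ∂H).im = ∫ l, (z^2 * ((l:ℂ) - z)⁻¹).im ∂H := by
    have := (integral_im (𝕜 := ℂ) hint).symm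
    simpa using this
  have h2 : ∫ l, (z^2 * ((l:ℂ) - z)⁻¹).im ∂H
      = z.im * ((∫ l, ‖(l:ℂ) * ((l:ℂ) - z)⁻¹‖^2 ∂H) - 1) := by
    calc ∫ l, (z^2 * ((l:ℂ) - z)⁻¹).im ∂H
        = ∫ l, z.im * (‖(l:ℂ) * ((l:ℂ) - z)⁻¹‖^2 - 1) ∂H :=
          integral_congr_ae (Filter.Eventually.of_forall fun l => aux_im_pt hz l)
      _ = z.im * ∫ l, (‖(l:ℂ) * ((l:ℂ) - z)⁻¹‖^2 - 1) ∂H :=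
          MeasureTheory.integral_const_mul z.im _
      _ = z.im * ((∫ l, ‖(l:ℂ) * ((l:ℂ) - z)⁻¹‖^2 ∂H) - 1) := by
          rw [MeasureTheory.integral_sub (aux_int_sq H hz) (integrable_const 1),
            MeasureTheory.integral_const]
          simp
  rw [aux_phi_eq, Complex.sub_im, Complex.mul_im, Complex.mul_im, him, h2]
  simp only [Complex.sub_re, Complex.sub_im, Complex.one_re, Complex.one_im,
    Complex.ofReal_re, Complex.ofReal_im]
  ring

lemma aux_im_sq_lt (H : Measure ℝ) [IsProbabilityMeasure H] {c : ℝ} (hc : 0 < c) {z : ℂ}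
    (hz : 0 < z.im) (hph : 0 < (Phi H c z).im) :
    c * ∫ l, ‖(l:ℂ) * ((l:ℂ) - z)⁻¹‖^2 ∂H < 1 := by
  have h := aux_im_phi H c hz
  rw [h] at hph
  nlinarith

lemma aux_diff {z₁ z₂ : ℂ} (h₁ : 0 < z₁.im) (h₂ : 0 < z₂.im) (l : ℝ) :
    z₁^2 * ((l:ℂ) - z₁)⁻¹ - z₂^2 * ((l:ℂ) - z₂)⁻¹
      = (z₁ - z₂) * (((l:ℂ) * ((l:ℂ) - z₁)⁻¹) * ((l:ℂ) * ((l:ℂ) - z₂)⁻¹) - 1) := by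
  field_simp [aux_ne h₁ l, aux_ne h₂ l]
  ring

theorem stmt1' (H : MeasureTheory.Measure ℝ) (c : ℝ)
    (hH : IsProbabilityMeasure H) (hc : 0 < c) :
    Set.InjOn (Phi H c) {z : ℂ | 0 < z.im ∧ 0 < (Phi H c z).im} := by
  intro z₁ hz₁ z₂ hz₂ heq
  obtain ⟨h1, hp1⟩ := hz₁
  obtain ⟨h2, hp2⟩ := hz₂
  set P : ℂ := ∫ l, ((l:ℂ) * ((l:ℂ) - z₁)⁻¹) * ((l:ℂ) * ((l:ℂ) - z₂)⁻¹) ∂H with hP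
  have key : Phi H c z₁ - Phi H c z₂ = (z₁ - z₂) * (1 - (c:ℂ) * P) := by
    rw [aux_phi_eq H c z₁, aux_phi_eq H c z₂]
    have hd : (∫ l, z₁^2 * ((l:ℂ) - z₁)⁻¹ ∂H) - (∫ l, z₂^2 * ((l:ℂ) - z₂)⁻¹ ∂H)
        = (z₁ - z₂) * (P - 1) := by
      rw [← MeasureTheory.integral_sub ((aux_int_inv H h1).const_mul _)
        ((aux_int_inv H h2).const_mul _)]
      calc ∫ l, (z₁^2 * ((l:ℂ) - z₁)⁻¹ - z₂^2 * ((l:ℂ) - z₂)⁻¹) ∂H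
          = ∫ l, (z₁ - z₂) * (((l:ℂ) * ((l:ℂ) - z₁)⁻¹) * ((l:ℂ) * ((l:ℂ) - z₂)⁻¹) - 1) ∂H :=
            integral_congr_ae (Filter.Eventually.of_forall fun l => aux_diff h1 h2 l)
        _ = (z₁ - z₂) * ∫ l, (((l:ℂ) * ((l:ℂ) - z₁)⁻¹) * ((l:ℂ) * ((l:ℂ) - z₂)⁻¹) - 1) ∂H :=
            MeasureTheory.integral_const_mul _ _
        _ = (z₁ - z₂) * (P - 1) := by
            rw [MeasureTheory.integral_sub (aux_int_prod H h1 h2) (integrable_const 1),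
              MeasureTheory.integral_const]
            simp
            exact Or.inl rfl
    linear_combination (-(c:ℂ)) * hd
  have hA := aux_im_sq_lt H hc h1 hp1
  have hB := aux_im_sq_lt H hc h2 hp2
  have hle : ‖P‖ ≤ ∫ l, ‖((l:ℂ) * ((l:ℂ) - z₁)⁻¹) * ((l:ℂ) * ((l:ℂ) - z₂)⁻¹)‖ ∂H :=
    norm_integral_le_integral_norm _
  have hmono : ∫ l, ‖((l:ℂ) * ((l:ℂ) - z₁)⁻¹) * ((l:ℂ) * ((l:ℂ) - z₂)⁻¹)‖ ∂H
      ≤ ((∫ l, ‖(l:ℂ) * ((l:ℂ) - z₁)⁻¹‖^2 ∂H) + ∫ l, ‖(l:ℂ) * ((l:ℂ) - z₂)⁻¹‖^2 ∂H) / 2 := by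
    rw [← MeasureTheory.integral_add (aux_int_sq H h1) (aux_int_sq H h2),
      ← MeasureTheory.integral_div]
    refine integral_mono ((aux_int_prod H h1 h2).norm)
      (((aux_int_sq H h1).add (aux_int_sq H h2)).div_const 2) fun l => ?_
    dsimp only
    rw [norm_mul]
    have := two_mul_le_add_sq ‖(l:ℂ) * ((l:ℂ) - z₁)⁻¹‖ ‖(l:ℂ) * ((l:ℂ) - z₂)⁻¹‖
    linarith
  have hnorm : ‖(c:ℂ) * P‖ < 1 := by
    rw [norm_mul, Complex.norm_real, Real.norm_eq_abs, _root_.abs_of_pos hc]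
    have h3 : c * ‖P‖ ≤ c * (((∫ l, ‖(l:ℂ) * ((l:ℂ) - z₁)⁻¹‖^2 ∂H)
        + ∫ l, ‖(l:ℂ) * ((l:ℂ) - z₂)⁻¹‖^2 ∂H) / 2) :=
      mul_le_mul_of_nonneg_left (hle.trans hmono) hc.le
    nlinarith
  have hne : (1 : ℂ) - (c:ℂ) * P ≠ 0 := by
    intro h
    have h4 : (c:ℂ) * P = 1 := by linear_combination -h
    rw [h4, norm_one] at hnorm
    exact lt_irrefl 1 hnorm
  have h0 : (z₁ - z₂) * (1 - (c:ℂ) * P) = 0 := by rw [← key, heq, sub_self]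
  rcases mul_eq_zero.mp h0 with h | h
  · exact sub_eq_zero.mp h
  · exact absurd h hne

theorem stmt1 (H : MeasureTheory.Measure ℝ) (c : ℝ)
    (hH : IsProbabilityMeasure H) (hcomp : IsCompact (msupport H))
    (hpos : msupport H ⊆ Set.Ici 0) (hc : 0 < c) :
    Set.InjOn (Phi H c) (Dinf H c) := by
  intro z₁ hz₁ z₂ hz₂ heq
  obtain ⟨h1, hp1⟩ := hz₁
  obtain ⟨h2, hp2⟩ := hz₂
  set P : ℂ := ∫ l, ((l:ℂ) * ((l:ℂ) - z₁)⁻¹) * ((l:ℂ) * ((l:ℂ) - z₂)⁻¹) ∂H with hP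
  have key : Phi H c z₁ - Phi H c z₂ = (z₁ - z₂) * (1 - (c:ℂ) * P) := by
    rw [aux_phi_eq H c z₁, aux_phi_eq H c z₂]
    have hd : (∫ l, z₁^2 * ((l:ℂ) - z₁)⁻¹ ∂H) - (∫ l, z₂^2 * ((l:ℂ) - z₂)⁻¹ ∂H)
        = (z₁ - z₂) * (P - 1) := by
      rw [← MeasureTheory.integral_sub ((aux_int_inv H h1).const_mul _)
        ((aux_int_inv H h2).const_mul _)]
      calc ∫ l, (z₁^2 * ((l:ℂ) - z₁)⁻¹ - z₂^2 * ((l:ℂ) - z₂)⁻¹) ∂H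
          = ∫ l, (z₁ - z₂) * (((l:ℂ) * ((l:ℂ) - z₁)⁻¹) * ((l:ℂ) * ((l:ℂ) - z₂)⁻¹) - 1) ∂H :=
            integral_congr_ae (Filter.Eventually.of_forall fun l => aux_diff h1 h2 l)
        _ = (z₁ - z₂) * ∫ l, (((l:ℂ) * ((l:ℂ) - z₁)⁻¹) * ((l:ℂ) * ((l:ℂ) - z₂)⁻¹) - 1) ∂H :=
            MeasureTheory.integral_const_mul _ _
        _ = (z₁ - z₂) * (P - 1) := by
            rw [MeasureTheory.integral_sub (aux_int_prod H h1 h2) (integrable_const 1),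
              MeasureTheory.integral_const]
            simp
            exact Or.inl rfl
    linear_combination (-(c:ℂ)) * hd
  have hA := aux_im_sq_lt H hc h1 hp1
  have hB := aux_im_sq_lt H hc h2 hp2
  have hle : ‖P‖ ≤ ∫ l, ‖((l:ℂ) * ((l:ℂ) - z₁)⁻¹) * ((l:ℂ) * ((l:ℂ) - z₂)⁻¹)‖ ∂H :=
    norm_integral_le_integral_norm _
  have hmono : ∫ l, ‖((l:ℂ) * ((l:ℂ) - z₁)⁻¹) * ((l:ℂ) * ((l:ℂ) - z₂)⁻¹)‖ ∂H
      ≤ ((∫ l, ‖(l:ℂ) * ((l:ℂ) - z₁)⁻¹‖^2 ∂H) + ∫ l, ‖(l:ℂ) * ((l:ℂ) - z₂)⁻¹‖^2 ∂H) / 2 := by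
    rw [← MeasureTheory.integral_add (aux_int_sq H h1) (aux_int_sq H h2),
      ← MeasureTheory.integral_div]
    refine integral_mono ((aux_int_prod H h1 h2).norm)
      (((aux_int_sq H h1).add (aux_int_sq H h2)).div_const 2) fun l => ?_
    dsimp only
    rw [norm_mul]
    have := two_mul_le_add_sq ‖(l:ℂ) * ((l:ℂ) - z₁)⁻¹‖ ‖(l:ℂ) * ((l:ℂ) - z₂)⁻¹‖
    linarith
  have hnorm : ‖(c:ℂ) * P‖ < 1 := by
    rw [norm_mul, Complex.norm_real, Real.norm_eq_abs, _root_.abs_of_pos hc]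
    have h3 : c * ‖P‖ ≤ c * (((∫ l, ‖(l:ℂ) * ((l:ℂ) - z₁)⁻¹‖^2 ∂H)
        + ∫ l, ‖(l:ℂ) * ((l:ℂ) - z₂)⁻¹‖^2 ∂H) / 2) :=
      mul_le_mul_of_nonneg_left (hle.trans hmono) hc.le
    nlinarith
  have hne : (1 : ℂ) - (c:ℂ) * P ≠ 0 := by
    intro h
    have h4 : (c:ℂ) * P = 1 := by linear_combination -h
    rw [h4, norm_one] at hnorm
    exact lt_irrefl 1 hnorm
  have h0 : (z₁ - z₂) * (1 - (c:ℂ) * P) = 0 := by rw [← key, heq, sub_self]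
  rcases mul_eq_zero.mp h0 with h | h
  · exact sub_eq_zero.mp h
  · exact absurd h hne
end

section
/- Suppose (H, c, ν) satisfies the Marchenko–Pastur relation. Then 𝔻_{H,c}(∞) = φ_{ν,c}(ℂ⁺); consequently Φ_{H,c} maps 𝔻_{H,c}(∞) bijectively onto ℂ⁺, with inverse function φ_{ν,c}. -/
open MeasureTheory Filter Complex Set

lemma ae_mem_msupport (μ : Measure ℝ) : ∀ᵐ x ∂μ, x ∈ msupport μ := by
  rw [MeasureTheory.ae_iff]
  apply measure_null_of_locally_null
  intro x hx
  simp only [msupport, Set.mem_setOf_eq] at hx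
  push_neg at hx
  obtain ⟨U, hU, hU0⟩ := hx
  exact ⟨U, nhdsWithin_le_nhds hU, nonpos_iff_eq_zero.mp hU0⟩

lemma sub_ne_of_im_pos {w : ℂ} (hw : 0 < w.im) (x : ℝ) : (x : ℂ) - w ≠ 0 := by
  intro h
  have := congrArg Complex.im h
  simp at this
  linarith

lemma norm_sub_ge {w : ℂ} (hw : 0 < w.im) (x : ℝ) : w.im ≤ ‖(x : ℂ) - w‖ := by
  have h := Complex.abs_im_le_norm ((x : ℂ) - w)
  rw [Complex.sub_im, Complex.ofReal_im, zero_sub, abs_neg, abs_of_pos hw] at h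
  exact h

lemma norm_inv_le {w : ℂ} (hw : 0 < w.im) (x : ℝ) : ‖((x : ℂ) - w)⁻¹‖ ≤ w.im⁻¹ := by
  rw [norm_inv]
  exact inv_anti₀ hw (norm_sub_ge hw x)

section Klemmas
variable {H : Measure ℝ} [IsProbabilityMeasure H] {R : ℝ} (hae : ∀ᵐ x ∂H, |x| ≤ R)
include hae

lemma bdd_integrable {E : Type*} [NormedAddCommGroup E] {f : ℝ → E} (hc : Continuous f)
    {C : ℝ} (hb : ∀ x : ℝ, |x| ≤ R → ‖f x‖ ≤ C) : Integrable f H :=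
  (integrable_const C).mono' hc.aestronglyMeasurable (hae.mono fun x hx => hb x hx)

lemma int1 {w : ℂ} (hw : 0 < w.im) : Integrable (fun x : ℝ => ((x:ℂ) - w)⁻¹) H :=
  bdd_integrable hae ((Complex.continuous_ofReal.sub continuous_const).inv₀
    fun x => sub_ne_of_im_pos hw x) (fun x _ => norm_inv_le hw x)

lemma int2 : Integrable (fun x : ℝ => (x:ℂ)) H :=
  bdd_integrable hae Complex.continuous_ofReal (fun x hx => by simpa using hx)

lemma int3 {w : ℂ} (hw : 0 < w.im) :
    Integrable (fun x : ℝ => (x:ℂ)^2 * ((x:ℂ) - w)⁻¹) H := by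
  refine bdd_integrable hae ?_ (C := R^2 * w.im⁻¹) ?_
  · exact (Complex.continuous_ofReal.pow 2).mul
      ((Complex.continuous_ofReal.sub continuous_const).inv₀ fun x => sub_ne_of_im_pos hw x)
  · intro x hx
    rw [norm_mul, norm_pow, Complex.norm_real, Real.norm_eq_abs]
    exact mul_le_mul (pow_le_pow_left₀ (abs_nonneg x) hx 2) (norm_inv_le hw x)
      (norm_nonneg _) (by positivity)

lemma int6 {w₁ w₂ : ℂ} (hw₁ : 0 < w₁.im) (hw₂ : 0 < w₂.im) :
    Integrable (fun x : ℝ => (x:ℂ)^2 * (((x:ℂ) - w₁)⁻¹ * ((x:ℂ) - w₂)⁻¹)) H := by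
  refine bdd_integrable hae ?_ (C := R^2 * (w₁.im⁻¹ * w₂.im⁻¹)) ?_
  · exact (Complex.continuous_ofReal.pow 2).mul
      (((Complex.continuous_ofReal.sub continuous_const).inv₀ fun x => sub_ne_of_im_pos hw₁ x).mul
       ((Complex.continuous_ofReal.sub continuous_const).inv₀ fun x => sub_ne_of_im_pos hw₂ x))
  · intro x hx
    rw [norm_mul, norm_pow, Complex.norm_real, Real.norm_eq_abs, norm_mul]
    refine mul_le_mul (pow_le_pow_left₀ (abs_nonneg x) hx 2) ?_ (mul_nonneg (norm_nonneg _) (norm_nonneg _)) (by positivity)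
    exact mul_le_mul (norm_inv_le hw₁ x) (norm_inv_le hw₂ x) (norm_nonneg _) (by positivity)

lemma int4 {w : ℂ} (hw : 0 < w.im) :
    Integrable (fun x : ℝ => x^2 / Complex.normSq ((x:ℂ) - w)) H := by
  refine bdd_integrable hae ?_ (C := R^2 / w.im^2) ?_
  · exact (continuous_pow 2).div
      (Complex.continuous_normSq.comp (Complex.continuous_ofReal.sub continuous_const))
      (fun x => (Complex.normSq_pos.2 (sub_ne_of_im_pos hw x)).ne')
  · intro x hx
    have h1 : w.im^2 ≤ Complex.normSq ((x:ℂ) - w) := by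
      rw [Complex.normSq_eq_norm_sq]
      exact pow_le_pow_left₀ hw.le (norm_sub_ge hw x) 2
    have hpos : 0 < Complex.normSq ((x:ℂ) - w) := Complex.normSq_pos.2 (sub_ne_of_im_pos hw x)
    rw [Real.norm_eq_abs, abs_div, _root_.abs_of_nonneg (sq_nonneg x), _root_.abs_of_pos hpos]
    refine div_le_div₀ (by positivity) ?_ (by positivity) h1
    calc x^2 = |x|^2 := (_root_.sq_abs x).symm
      _ ≤ R^2 := pow_le_pow_left₀ (abs_nonneg x) hx 2

lemma int5 {w₁ w₂ : ℂ} (hw₁ : 0 < w₁.im) (hw₂ : 0 < w₂.im) :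
    Integrable (fun x : ℝ => x^2 / (‖(x:ℂ) - w₁‖ * ‖(x:ℂ) - w₂‖)) H := by
  refine bdd_integrable hae ?_ (C := R^2 / (w₁.im * w₂.im)) ?_
  · refine (continuous_pow 2).div
      (((continuous_ofReal.sub continuous_const).norm).mul
        ((continuous_ofReal.sub continuous_const).norm)) (fun x => ?_)
    have h1 := (norm_sub_ge hw₁ x).trans_lt' hw₁
    have h2 := (norm_sub_ge hw₂ x).trans_lt' hw₂
    positivity
  · intro x hx
    have h1 := norm_sub_ge hw₁ x
    have h2 := norm_sub_ge hw₂ x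
    have hp1 := hw₁.trans_le h1
    have hp2 := hw₂.trans_le h2
    rw [Real.norm_eq_abs, abs_div, _root_.abs_of_nonneg (sq_nonneg x), _root_.abs_of_pos (mul_pos hp1 hp2)]
    refine div_le_div₀ (by positivity) ?_ (by positivity) ?_
    · calc x^2 = |x|^2 := (_root_.sq_abs x).symm
        _ ≤ R^2 := pow_le_pow_left₀ (abs_nonneg x) hx 2
    · exact mul_le_mul h1 h2 hw₂.le (norm_nonneg _)

end Klemmas

section Kmain
variable {H : Measure ℝ} [IsProbabilityMeasure H] {R : ℝ} (hae : ∀ᵐ x ∂H, |x| ≤ R)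
include hae

lemma K1 {c : ℝ} {w : ℂ} (hw : 0 < w.im) :
    Phi H c w = w + (c:ℂ) * (∫ x, (x:ℂ) ∂H) - (c:ℂ) * ∫ x, (x:ℂ)^2 * ((x:ℂ) - w)⁻¹ ∂H := by
  have hI : (∫ x, (x:ℂ)^2 * ((x:ℂ) - w)⁻¹ ∂H)
      = ((∫ x, (x:ℂ) ∂H) + w) + w^2 * ∫ x, ((x:ℂ) - w)⁻¹ ∂H := by
    have hpt : ∀ x : ℝ, (x:ℂ)^2 * ((x:ℂ) - w)⁻¹ = ((x:ℂ) + w) + w^2 * ((x:ℂ) - w)⁻¹ := by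
      intro x
      have h := sub_ne_of_im_pos hw x
      field_simp
      ring
    calc (∫ x, (x:ℂ)^2 * ((x:ℂ) - w)⁻¹ ∂H)
        = ∫ x, (((x:ℂ) + w) + w^2 * ((x:ℂ) - w)⁻¹) ∂H :=
          integral_congr_ae (Filter.Eventually.of_forall hpt)
      _ = (∫ x, ((x:ℂ) + w) ∂H) + ∫ x, w^2 * ((x:ℂ) - w)⁻¹ ∂H :=
          integral_add ((int2 hae).add (integrable_const w)) ((int1 hae hw).const_mul _)
      _ = ((∫ x, (x:ℂ) ∂H) + w) + w^2 * ∫ x, ((x:ℂ) - w)⁻¹ ∂H := by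
          rw [integral_add (int2 hae) (integrable_const w), integral_const, probReal_univ,
            one_smul, integral_const_mul]
  rw [Phi, St, hI]
  ring

lemma K2 {c : ℝ} {w : ℂ} (hw : 0 < w.im) :
    (Phi H c w).im = w.im * (1 - c * ∫ x, x^2 / Complex.normSq ((x:ℂ) - w) ∂H) := by
  have hIm : (∫ x, (x:ℂ)^2 * ((x:ℂ) - w)⁻¹ ∂H).im
      = w.im * ∫ x, x^2 / Complex.normSq ((x:ℂ) - w) ∂H := by
    have hii := integral_im (int3 hae hw)
    simp only [RCLike.im_to_complex] at hii
    rw [← hii]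
    have hpt : ∀ x : ℝ, ((x:ℂ)^2 * ((x:ℂ) - w)⁻¹).im
        = w.im * (x^2 / Complex.normSq ((x:ℂ) - w)) := by
      intro x
      rw [show ((x:ℂ))^2 = ((x^2 : ℝ) : ℂ) by push_cast; ring]
      rw [Complex.mul_im, Complex.ofReal_re, Complex.ofReal_im, Complex.inv_im,
        Complex.sub_im, Complex.ofReal_im]
      field_simp
      ring
    calc (∫ x, ((x:ℂ)^2 * ((x:ℂ) - w)⁻¹).im ∂H)
        = ∫ x, w.im * (x^2 / Complex.normSq ((x:ℂ) - w)) ∂H :=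
          integral_congr_ae (Filter.Eventually.of_forall hpt)
      _ = w.im * ∫ x, x^2 / Complex.normSq ((x:ℂ) - w) ∂H := integral_const_mul _ _
  have hre : (∫ x, (x:ℂ) ∂H) = ((∫ x, x ∂H : ℝ) : ℂ) := integral_ofReal
  rw [K1 hae hw, hre]
  rw [Complex.sub_im, Complex.add_im, Complex.mul_im, Complex.mul_im, Complex.ofReal_re,
    Complex.ofReal_im, Complex.ofReal_im, hIm]
  ring

lemma K3 {c : ℝ} {w₁ w₂ : ℂ} (hw₁ : 0 < w₁.im) (hw₂ : 0 < w₂.im) :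
    Phi H c w₁ - Phi H c w₂ = (w₁ - w₂) *
      (1 - (c:ℂ) * ∫ x, (x:ℂ)^2 * (((x:ℂ) - w₁)⁻¹ * ((x:ℂ) - w₂)⁻¹) ∂H) := by
  have hpt : ∀ x : ℝ, (x:ℂ)^2 * ((x:ℂ) - w₁)⁻¹ - (x:ℂ)^2 * ((x:ℂ) - w₂)⁻¹
      = (w₁ - w₂) * ((x:ℂ)^2 * (((x:ℂ) - w₁)⁻¹ * ((x:ℂ) - w₂)⁻¹)) := by
    intro x
    have h1 := sub_ne_of_im_pos hw₁ x
    have h2 := sub_ne_of_im_pos hw₂ x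
    field_simp
    ring
  have hI : (∫ x, (x:ℂ)^2 * ((x:ℂ) - w₁)⁻¹ ∂H) - (∫ x, (x:ℂ)^2 * ((x:ℂ) - w₂)⁻¹ ∂H)
      = (w₁ - w₂) * ∫ x, (x:ℂ)^2 * (((x:ℂ) - w₁)⁻¹ * ((x:ℂ) - w₂)⁻¹) ∂H := by
    rw [← integral_sub (int3 hae hw₁) (int3 hae hw₂)]
    calc (∫ x, ((x:ℂ)^2 * ((x:ℂ) - w₁)⁻¹ - (x:ℂ)^2 * ((x:ℂ) - w₂)⁻¹) ∂H)
        = ∫ x, (w₁ - w₂) * ((x:ℂ)^2 * (((x:ℂ) - w₁)⁻¹ * ((x:ℂ) - w₂)⁻¹)) ∂H :=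
          integral_congr_ae (Filter.Eventually.of_forall hpt)
      _ = (w₁ - w₂) * ∫ x, (x:ℂ)^2 * (((x:ℂ) - w₁)⁻¹ * ((x:ℂ) - w₂)⁻¹) ∂H :=
          integral_const_mul _ _
  rw [K1 hae hw₁, K1 hae hw₂]
  linear_combination (-(c:ℂ)) * hI

lemma K4 {c : ℝ} {w : ℂ} (hd : w ∈ Dinf H c) :
    c * ∫ x, x^2 / Complex.normSq ((x:ℂ) - w) ∂H < 1 := by
  obtain ⟨hw, hp⟩ := hd
  rw [K2 hae hw] at hp
  nlinarith

lemma K5 {c : ℝ} (hc : 0 < c) {w₁ w₂ : ℂ} (h1 : w₁ ∈ Dinf H c) (h2 : w₂ ∈ Dinf H c)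
    (he : Phi H c w₁ = Phi H c w₂) : w₁ = w₂ := by
  by_contra hne
  have hw₁ := h1.1
  have hw₂ := h2.1
  have h3 := K3 hae (c := c) hw₁ hw₂
  rw [he, sub_self] at h3
  have h4 : (1:ℂ) = (c:ℂ) * ∫ x, (x:ℂ)^2 * (((x:ℂ) - w₁)⁻¹ * ((x:ℂ) - w₂)⁻¹) ∂H := by
    rcases mul_eq_zero.1 h3.symm with h | h
    · exact absurd (sub_eq_zero.1 h) hne
    · exact sub_eq_zero.1 h
  have h6 : (1:ℝ) ≤ c * ∫ x, x^2 / (‖(x:ℂ) - w₁‖ * ‖(x:ℂ) - w₂‖) ∂H := by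
    have hnorm : ∀ x : ℝ, ‖(x:ℂ)^2 * (((x:ℂ) - w₁)⁻¹ * ((x:ℂ) - w₂)⁻¹)‖
        = x^2 / (‖(x:ℂ) - w₁‖ * ‖(x:ℂ) - w₂‖) := by
      intro x
      rw [norm_mul, norm_pow, Complex.norm_real, Real.norm_eq_abs, norm_mul, norm_inv, norm_inv,
        _root_.sq_abs, div_eq_mul_inv, mul_inv]
    calc (1:ℝ) = ‖(1:ℂ)‖ := by simp
      _ = ‖(c:ℂ) * ∫ x, (x:ℂ)^2 * (((x:ℂ) - w₁)⁻¹ * ((x:ℂ) - w₂)⁻¹) ∂H‖ := by rw [← h4]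
      _ = c * ‖∫ x, (x:ℂ)^2 * (((x:ℂ) - w₁)⁻¹ * ((x:ℂ) - w₂)⁻¹) ∂H‖ := by
          rw [norm_mul, Complex.norm_real, Real.norm_eq_abs, _root_.abs_of_pos hc]
      _ ≤ c * ∫ x, ‖(x:ℂ)^2 * (((x:ℂ) - w₁)⁻¹ * ((x:ℂ) - w₂)⁻¹)‖ ∂H := by
          exact mul_le_mul_of_nonneg_left (norm_integral_le_integral_norm _) hc.le
      _ = c * ∫ x, x^2 / (‖(x:ℂ) - w₁‖ * ‖(x:ℂ) - w₂‖) ∂H := by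
          rw [integral_congr_ae (Filter.Eventually.of_forall hnorm)]
  have hptle : ∀ x : ℝ, x^2 / (‖(x:ℂ) - w₁‖ * ‖(x:ℂ) - w₂‖)
      ≤ (x^2 / Complex.normSq ((x:ℂ) - w₁) + x^2 / Complex.normSq ((x:ℂ) - w₂)) / 2 := by
    intro x
    have hp1 := hw₁.trans_le (norm_sub_ge hw₁ x)
    have hp2 := hw₂.trans_le (norm_sub_ge hw₂ x)
    have hn1 : Complex.normSq ((x:ℂ) - w₁) = ‖(x:ℂ) - w₁‖^2 := by
      rw [Complex.normSq_eq_norm_sq]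
    have hn2 : Complex.normSq ((x:ℂ) - w₂) = ‖(x:ℂ) - w₂‖^2 := by
      rw [Complex.normSq_eq_norm_sq]
    rw [hn1, hn2]
    have key : (‖(x:ℂ) - w₁‖ * ‖(x:ℂ) - w₂‖)⁻¹
        ≤ ((‖(x:ℂ) - w₁‖^2)⁻¹ + (‖(x:ℂ) - w₂‖^2)⁻¹) / 2 := by
      rw [mul_inv, ← inv_pow, ← inv_pow]
      have := two_mul_le_add_sq ‖(x:ℂ) - w₁‖⁻¹ ‖(x:ℂ) - w₂‖⁻¹
      linarith
    calc x^2 / (‖(x:ℂ) - w₁‖ * ‖(x:ℂ) - w₂‖) = x^2 * (‖(x:ℂ) - w₁‖ * ‖(x:ℂ) - w₂‖)⁻¹ := by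
          rw [div_eq_mul_inv]
      _ ≤ x^2 * (((‖(x:ℂ) - w₁‖^2)⁻¹ + (‖(x:ℂ) - w₂‖^2)⁻¹) / 2) :=
          mul_le_mul_of_nonneg_left key (sq_nonneg x)
      _ = (x^2 / ‖(x:ℂ) - w₁‖^2 + x^2 / ‖(x:ℂ) - w₂‖^2) / 2 := by ring
  have h7 : (∫ x, x^2 / (‖(x:ℂ) - w₁‖ * ‖(x:ℂ) - w₂‖) ∂H)
      ≤ (∫ x, (x^2 / Complex.normSq ((x:ℂ) - w₁) + x^2 / Complex.normSq ((x:ℂ) - w₂)) / 2 ∂H) :=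
    integral_mono (int5 hae hw₁ hw₂) (((int4 hae hw₁).add (int4 hae hw₂)).div_const 2) hptle
  have h8 : (∫ x, (x^2 / Complex.normSq ((x:ℂ) - w₁) + x^2 / Complex.normSq ((x:ℂ) - w₂)) / 2 ∂H)
      = ((∫ x, x^2 / Complex.normSq ((x:ℂ) - w₁) ∂H) + ∫ x, x^2 / Complex.normSq ((x:ℂ) - w₂) ∂H) / 2 := by
    rw [integral_div, integral_add (int4 hae hw₁) (int4 hae hw₂)]
  have hT1 := K4 hae h1
  have hT2 := K4 hae h2
  rw [h8] at h7
  nlinarith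
end Kmain


lemma K6 {H ν : Measure ℝ} {c : ℝ} {z : ℂ} (hz : 0 < z.im)
    (heq : St ν z = ∫ l, ((l:ℂ) * (1 - (c:ℂ) * z * St ν z - (c:ℂ)) - z)⁻¹ ∂H)
    (him : 0 < ((c:ℂ) * St ν z + ((c:ℂ) - 1) / z).im) :
    0 < (phiInv ν c z).im ∧ Phi H c (phiInv ν c z) = z := by
  have hz0 : z ≠ 0 := fun h => by simp [h] at hz
  set S := St ν z with hS
  set sb := sUnder ν c z with hsb
  have hsbalt : sb = (c:ℂ) * S + ((c:ℂ) - 1) / z := by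
    rw [hsb, sUnder, ← hS]; ring
  have hsbim : 0 < sb.im := by rw [hsbalt]; exact him
  have hsb0 : sb ≠ 0 := fun h => by simp [h] at hsbim
  have hw' : phiInv ν c z = -(sb⁻¹) := by rw [phiInv, ← hsb, neg_div, one_div]
  set w := phiInv ν c z with hwdef
  have hwim : 0 < w.im := by
    rw [hw', Complex.neg_im, Complex.inv_im, neg_div, neg_neg]
    exact div_pos hsbim (Complex.normSq_pos.2 hsb0)
  have hrel : 1 - (c:ℂ) * z * S - (c:ℂ) = -(z * sb) := by
    rw [hsb, sUnder, ← hS]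
    field_simp
    ring
  have hden : ∀ x : ℝ, (x:ℂ) * (1 - (c:ℂ) * z * S - (c:ℂ)) - z = (-(z * sb)) * ((x:ℂ) - w) := by
    intro x
    rw [hrel, hw']
    field_simp
    ring
  have hk : -(z * sb) ≠ 0 := neg_ne_zero.2 (mul_ne_zero hz0 hsb0)
  have heq2 : S = (-(z * sb))⁻¹ * St H w := by
    calc S = ∫ x, ((x:ℂ) * (1 - (c:ℂ) * z * S - (c:ℂ)) - z)⁻¹ ∂H := heq
      _ = ∫ x, (-(z * sb))⁻¹ * ((x:ℂ) - w)⁻¹ ∂H :=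
          integral_congr_ae (Filter.Eventually.of_forall fun x => by dsimp only; rw [hden x, mul_inv])
      _ = (-(z * sb))⁻¹ * St H w := by rw [St, integral_const_mul]
  have hSt : St H w = -(z * sb) * S := by
    rw [heq2, ← mul_assoc, mul_inv_cancel₀ hk, one_mul]
  refine ⟨hwim, ?_⟩
  rw [Phi, hSt, hw']
  have h1 : (c:ℂ) * (-(sb⁻¹)) * (-(z * sb) * S) = (c:ℂ) * z * S := by
    field_simp
  rw [h1, hrel]
  field_simp


theorem stmt2 (H ν : MeasureTheory.Measure ℝ) (c : ℝ) (hMP : MPRel H c ν) :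
    Dinf H c = phiInv ν c '' {z : ℂ | 0 < z.im} ∧
    Set.BijOn (Phi H c) (Dinf H c) {z : ℂ | 0 < z.im} ∧
    Set.InvOn (phiInv ν c) (Phi H c) (Dinf H c) {z : ℂ | 0 < z.im} := by
  obtain ⟨hHp, -, hHcomp, -, hc, -, -, -, -, hMPeq⟩ := hMP
  haveI := hHp
  obtain ⟨R, hRsub⟩ := hHcomp.isBounded.subset_closedBall 0
  have hae : ∀ᵐ x ∂H, |x| ≤ R := by
    filter_upwards [ae_mem_msupport H] with x hx
    have := hRsub hx
    rwa [Metric.mem_closedBall, Real.dist_eq, sub_zero] at this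
  have hfwd : ∀ z ∈ {z : ℂ | 0 < z.im}, phiInv ν c z ∈ Dinf H c ∧ Phi H c (phiInv ν c z) = z := by
    intro z hz
    obtain ⟨heq, him⟩ := hMPeq z hz
    obtain ⟨h1, h2⟩ := K6 (H := H) hz heq him
    exact ⟨⟨h1, by rw [h2]; exact hz⟩, h2⟩
  have hmaps : Set.MapsTo (Phi H c) (Dinf H c) {z : ℂ | 0 < z.im} := fun w hw => hw.2
  have hinj : Set.InjOn (Phi H c) (Dinf H c) := fun w₁ h1 w₂ h2 he => K5 hae hc h1 h2 he
  have hleft : ∀ w ∈ Dinf H c, phiInv ν c (Phi H c w) = w := by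
    intro w hwD
    obtain ⟨hmem, heqq⟩ := hfwd _ hwD.2
    exact hinj hmem hwD heqq
  refine ⟨?_, ⟨hmaps, hinj, fun z hz => ⟨phiInv ν c z, (hfwd z hz).1, (hfwd z hz).2⟩⟩,
    hleft, fun z hz => (hfwd z hz).2⟩
  ext w
  constructor
  · intro hwD
    exact ⟨Phi H c w, hwD.2, hleft w hwD⟩
  · rintro ⟨z, hz, rfl⟩
    exact (hfwd z hz).1
end

section
/- Suppose (H, c, ν) satisfies the Marchenko–Pastur relation. Then for every z ∈ 𝔻_{H,c}(∞): Φ_{H,c}(z) · s_ν(Φ_{H,c}(z)) = z · s_H(z); equivalently, s_ν(Φ_{H,c}(z)) = s_H(z) / (1 − c·z·s_H(z) − c). -/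
open MeasureTheory Filter Complex Set

noncomputable section MPaux

def f2 (m : ℂ) (l : ℝ) : ℂ := (l : ℂ) * (1 + (l : ℂ) * m)⁻¹

lemma one_add_ne {m : ℂ} (hm : 0 < m.im) (l : ℝ) : (1 : ℂ) + (l : ℂ) * m ≠ 0 := by
  intro h
  have h1 : ((1 : ℂ) + (l : ℂ) * m).im = l * m.im := by simp
  rw [h] at h1
  simp only [Complex.zero_im] at h1
  rcases mul_eq_zero.1 h1.symm with hl | hmi
  · rw [hl] at h; simp at h
  · exact absurd hmi (ne_of_gt hm)

lemma im_le_norm_mul (m : ℂ) (l : ℝ) : m.im ≤ ‖m‖ * ‖(1 : ℂ) + (l : ℂ) * m‖ := by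
  have h1 : ((starRingEnd ℂ) m * ((1 : ℂ) + (l : ℂ) * m)).im = -m.im := by
    simp [Complex.mul_im, Complex.add_im, Complex.add_re, Complex.mul_re]
    ring
  have h2 : |(-m.im)| ≤ ‖(starRingEnd ℂ) m * ((1 : ℂ) + (l : ℂ) * m)‖ := by
    rw [← h1]
    exact Complex.abs_im_le_norm _
  rw [norm_mul, RCLike.norm_conj] at h2
  calc m.im ≤ |(-m.im)| := by rw [abs_neg]; exact le_abs_self _
  _ ≤ _ := h2

lemma norm_inv_one_add_le {m : ℂ} (hm : 0 < m.im) (l : ℝ) :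
    ‖((1 : ℂ) + (l : ℂ) * m)⁻¹‖ ≤ ‖m‖ / m.im := by
  have hm0 : m ≠ 0 := fun h => by simp [h] at hm
  have hnm : 0 < ‖m‖ := norm_pos_iff.2 hm0
  have key : m.im / ‖m‖ ≤ ‖(1 : ℂ) + (l : ℂ) * m‖ := by
    rw [div_le_iff₀ hnm]
    calc m.im ≤ ‖m‖ * ‖(1 : ℂ) + (l : ℂ) * m‖ := im_le_norm_mul m l
    _ = _ := mul_comm _ _
  rw [norm_inv]
  calc ‖((1 : ℂ) + (l : ℂ) * m)‖⁻¹ ≤ (m.im / ‖m‖)⁻¹ :=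
        inv_anti₀ (div_pos hm hnm) key
  _ = ‖m‖ / m.im := inv_div _ _

lemma cont_inv_one_add {m : ℂ} (hm : 0 < m.im) :
    Continuous fun l : ℝ => ((1 : ℂ) + (l : ℂ) * m)⁻¹ := by
  apply Continuous.inv₀
  · exact continuous_const.add (Complex.continuous_ofReal.mul continuous_const)
  · exact fun l => one_add_ne hm l

lemma cont_f2 {m : ℂ} (hm : 0 < m.im) : Continuous (f2 m) :=
  Complex.continuous_ofReal.mul (cont_inv_one_add hm)

lemma f2_eq {m : ℂ} (hm : 0 < m.im) (l : ℝ) :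
    f2 m l = m⁻¹ * (1 - (1 + (l : ℂ) * m)⁻¹) := by
  have h0 := one_add_ne hm l
  have hm0 : m ≠ 0 := fun h => by simp [h] at hm
  rw [f2]
  field_simp
  ring

lemma f2_bound {m : ℂ} (hm : 0 < m.im) (l : ℝ) :
    ‖f2 m l‖ ≤ ‖m‖⁻¹ * (1 + ‖m‖ / m.im) := by
  rw [f2_eq hm, norm_mul, norm_inv]
  apply mul_le_mul_of_nonneg_left _ (inv_nonneg.2 (norm_nonneg m))
  calc ‖(1 : ℂ) - (1 + (l : ℂ) * m)⁻¹‖ ≤ ‖(1:ℂ)‖ + ‖((1 : ℂ) + (l : ℂ) * m)⁻¹‖ :=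
        norm_sub_le _ _
  _ ≤ 1 + ‖m‖ / m.im := by
      rw [norm_one]
      exact add_le_add le_rfl (norm_inv_one_add_le hm l)

lemma integrable_of_cont_bdd {E : Type*} [NormedAddCommGroup E] {f : ℝ → E}
    (μ : Measure ℝ) [IsFiniteMeasure μ]
    (hf : Continuous f) {C : ℝ} (hC : ∀ x, ‖f x‖ ≤ C) : Integrable f μ :=
  Integrable.mono' (integrable_const C) hf.aestronglyMeasurable
    (Filter.Eventually.of_forall hC)

lemma int_inv_one_add {m : ℂ} (hm : 0 < m.im) (μ : Measure ℝ) [IsFiniteMeasure μ] :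
    Integrable (fun l : ℝ => ((1 : ℂ) + (l : ℂ) * m)⁻¹) μ :=
  integrable_of_cont_bdd μ (cont_inv_one_add hm) (norm_inv_one_add_le hm)

lemma int_f2 {m : ℂ} (hm : 0 < m.im) (μ : Measure ℝ) [IsFiniteMeasure μ] :
    Integrable (f2 m) μ :=
  integrable_of_cont_bdd μ (cont_f2 hm) (f2_bound hm)

lemma int_f2_sq {m : ℂ} (hm : 0 < m.im) (μ : Measure ℝ) [IsFiniteMeasure μ] :
    Integrable (fun l => ‖f2 m l‖ ^ 2) μ := by
  apply integrable_of_cont_bdd μ ((cont_f2 hm).norm.pow 2)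
    (C := (‖m‖⁻¹ * (1 + ‖m‖ / m.im)) ^ 2)
  intro l
  show ‖‖f2 m l‖ ^ 2‖ ≤ _
  rw [Real.norm_eq_abs, _root_.abs_of_nonneg (by positivity : (0:ℝ) ≤ ‖f2 m l‖ ^ 2)]
  exact pow_le_pow_left₀ (norm_nonneg _) (f2_bound hm l) 2

lemma int_f2_mul {m₁ m₂ : ℂ} (hm₁ : 0 < m₁.im) (hm₂ : 0 < m₂.im)
    (μ : Measure ℝ) [IsFiniteMeasure μ] :
    Integrable (fun l => f2 m₁ l * f2 m₂ l) μ := by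
  apply integrable_of_cont_bdd μ ((cont_f2 hm₁).mul (cont_f2 hm₂))
    (C := (‖m₁‖⁻¹ * (1 + ‖m₁‖ / m₁.im)) * (‖m₂‖⁻¹ * (1 + ‖m₂‖ / m₂.im)))
  intro l
  show ‖f2 m₁ l * f2 m₂ l‖ ≤ _
  rw [norm_mul]
  exact mul_le_mul (f2_bound hm₁ l) (f2_bound hm₂ l) (norm_nonneg _)
    (by positivity)

lemma int_stieltjes {z : ℂ} (hz : 0 < z.im) (μ : Measure ℝ) [IsFiniteMeasure μ] :
    Integrable (fun l : ℝ => ((l : ℂ) - z)⁻¹) μ := by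
  have hne : ∀ l : ℝ, ((l : ℂ) - z) ≠ 0 := by
    intro l h
    have : ((l : ℂ) - z).im = -z.im := by simp
    rw [h] at this
    simp only [Complex.zero_im] at this
    linarith
  apply integrable_of_cont_bdd μ
    ((Complex.continuous_ofReal.sub continuous_const).inv₀ hne) (C := (z.im)⁻¹)
  intro l
  show ‖((l : ℂ) - z)⁻¹‖ ≤ _
  rw [norm_inv]
  apply inv_anti₀ hz
  calc z.im = |((l : ℂ) - z).im| := by
        simp only [Complex.sub_im, Complex.ofReal_im, zero_sub, abs_neg]
        exact (_root_.abs_of_nonneg hz.le).symm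
  _ ≤ ‖(l : ℂ) - z‖ := Complex.abs_im_le_norm _
  _ = ‖(l : ℂ) - z‖ := rfl

/-- From the MP self-consistent equation to the inverse-function equation. -/
lemma g_eq_of_MPeq (H : Measure ℝ) [IsProbabilityMeasure H] {c : ℝ} {zt s m : ℂ}
    (hzt : 0 < zt.im) (hm_def : m = (c : ℂ) * s + ((c : ℂ) - 1) / zt) (hm : 0 < m.im)
    (heq : s = ∫ l, ((l : ℂ) * (1 - (c : ℂ) * zt * s - (c : ℂ)) - zt)⁻¹ ∂H) :
    -1 / m + (c : ℂ) * ∫ l, f2 m l ∂H = zt := by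
  have hzt0 : zt ≠ 0 := fun h => by simp [h] at hzt
  have hm0 : m ≠ 0 := fun h => by simp [h] at hm
  have ha : (1 : ℂ) - (c : ℂ) * zt * s - (c : ℂ) = -zt * m := by
    rw [hm_def]
    field_simp
    ring
  have hpt : ∀ l : ℝ, ((l : ℂ) * (1 - (c : ℂ) * zt * s - (c : ℂ)) - zt)⁻¹
      = -zt⁻¹ * ((1 : ℂ) + (l : ℂ) * m)⁻¹ := by
    intro l
    rw [ha, show (l : ℂ) * (-zt * m) - zt = -zt * ((1 : ℂ) + (l : ℂ) * m) by ring,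
      mul_inv, inv_neg]
  have hs : s = -zt⁻¹ * ∫ l, ((1 : ℂ) + (l : ℂ) * m)⁻¹ ∂H := by
    rw [heq, show (fun l : ℝ => ((l : ℂ) * (1 - (c : ℂ) * zt * s - (c : ℂ)) - zt)⁻¹)
      = fun l : ℝ => -zt⁻¹ * ((1 : ℂ) + (l : ℂ) * m)⁻¹ from funext hpt,
      MeasureTheory.integral_const_mul]
  set I := ∫ l, ((1 : ℂ) + (l : ℂ) * m)⁻¹ ∂H with hI_def
  have hJ : ∫ l, f2 m l ∂H = m⁻¹ * (1 - I) := by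
    rw [show (fun l : ℝ => f2 m l) = fun l : ℝ => m⁻¹ * (1 - (1 + (l : ℂ) * m)⁻¹)
      from funext (f2_eq hm), MeasureTheory.integral_const_mul,
      MeasureTheory.integral_sub (integrable_const 1) (int_inv_one_add hm H)]
    simp
    exact Or.inl rfl
  have hzm : zt * m = -((c : ℂ) * I) + (c : ℂ) - 1 := by
    rw [hm_def, hs]
    field_simp
    ring
  rw [hJ]
  field_simp
  linear_combination -hzm

lemma f2_im {m : ℂ} (hm : 0 < m.im) (l : ℝ) :
    (f2 m l).im = -m.im * ‖f2 m l‖ ^ 2 := by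
  have h0 := one_add_ne hm l
  have hN : Complex.normSq ((1 : ℂ) + (l : ℂ) * m) ≠ 0 :=
    fun h => h0 (Complex.normSq_eq_zero.1 h)
  have h1 : (f2 m l).im = l * (-(l * m.im) / Complex.normSq ((1 : ℂ) + (l : ℂ) * m)) := by
    rw [f2, Complex.mul_im, Complex.ofReal_re, Complex.ofReal_im, Complex.inv_im]
    simp
  have h2 : ‖f2 m l‖ ^ 2 = l ^ 2 / Complex.normSq ((1 : ℂ) + (l : ℂ) * m) := by
    rw [show ‖f2 m l‖ ^ 2 = Complex.normSq (f2 m l) from by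
      rw [Complex.sq_norm]]
    rw [f2, Complex.normSq_mul, Complex.normSq_inv, Complex.normSq_ofReal,
      div_eq_mul_inv]
    ring
  rw [h1, h2, div_eq_mul_inv, div_eq_mul_inv]
  ring

/-- The key quantitative bound. -/
lemma sq_int_bound (H : Measure ℝ) [IsProbabilityMeasure H] {c : ℝ} (hc : 0 < c)
    {m zt : ℂ} (hm : 0 < m.im) (hzt : 0 < zt.im)
    (hg : -1 / m + (c : ℂ) * ∫ l, f2 m l ∂H = zt) :
    c * ∫ l, ‖f2 m l‖ ^ 2 ∂H < (Complex.normSq m)⁻¹ := by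
  have hm0 : m ≠ 0 := fun h => by simp [h] at hm
  have him : (∫ l, f2 m l ∂H).im = -m.im * ∫ l, ‖f2 m l‖ ^ 2 ∂H := by
    have hint : ∫ l, (f2 m l).im ∂H = (∫ l, f2 m l ∂H).im :=
      integral_im (int_f2 hm H)
    rw [← hint]
    rw [show (fun l : ℝ => (f2 m l).im) = fun l : ℝ => -m.im * ‖f2 m l‖ ^ 2 from
      funext fun l => f2_im hm l]
    rw [MeasureTheory.integral_const_mul]
  have h1 : zt.im = m.im * ((Complex.normSq m)⁻¹ - c * ∫ l, ‖f2 m l‖ ^ 2 ∂H) := by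
    rw [← hg]
    rw [Complex.add_im, Complex.mul_im, Complex.ofReal_re, Complex.ofReal_im, him]
    rw [show (-1 / m : ℂ) = -(m⁻¹) by field_simp]
    rw [Complex.neg_im, Complex.inv_im]
    field_simp
    ring
  have h2 : 0 < m.im * ((Complex.normSq m)⁻¹ - c * ∫ l, ‖f2 m l‖ ^ 2 ∂H) := h1 ▸ hzt
  nlinarith [hm, h2]

set_option maxHeartbeats 1000000 in
/-- Uniqueness of the solution. -/
lemma unique_sol (H : Measure ℝ) [IsProbabilityMeasure H] {c : ℝ} (hc : 0 < c)
    {m₁ m₂ zt : ℂ} (h1 : 0 < m₁.im) (h2 : 0 < m₂.im) (hzt : 0 < zt.im)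
    (hg1 : -1 / m₁ + (c : ℂ) * ∫ l, f2 m₁ l ∂H = zt)
    (hg2 : -1 / m₂ + (c : ℂ) * ∫ l, f2 m₂ l ∂H = zt) : m₁ = m₂ := by
  by_contra hne
  have hm10 : m₁ ≠ 0 := fun h => by simp [h] at h1
  have hm20 : m₂ ≠ 0 := fun h => by simp [h] at h2
  set J := ∫ l, f2 m₁ l * f2 m₂ l ∂H with hJ_def
  set I₁ := ∫ l, f2 m₁ l ∂H with hI1_def
  set I₂ := ∫ l, f2 m₂ l ∂H with hI2_def
  have hI : I₁ = I₂ + (m₂ - m₁) * J := by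
    have hpt : ∀ l : ℝ, f2 m₁ l = f2 m₂ l + (m₂ - m₁) * (f2 m₁ l * f2 m₂ l) := by
      intro l
      have e1 := one_add_ne h1 l
      have e2 := one_add_ne h2 l
      simp only [f2]
      field_simp
      ring
    rw [hI1_def, show (fun l : ℝ => f2 m₁ l)
      = fun l : ℝ => f2 m₂ l + (m₂ - m₁) * (f2 m₁ l * f2 m₂ l) from funext hpt,
      MeasureTheory.integral_add (int_f2 h2 H)
        ((int_f2_mul h1 h2 H).const_mul _), MeasureTheory.integral_const_mul]
  have hg1' : (c : ℂ) * I₁ * m₁ = zt * m₁ + 1 := by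
    rw [← hg1]
    field_simp
    ring
  have hg2' : (c : ℂ) * I₂ * m₂ = zt * m₂ + 1 := by
    rw [← hg2]
    field_simp
    ring
  have hsub : (m₁ - m₂) * (1 - (c : ℂ) * J * m₁ * m₂) = 0 := by
    linear_combination m₂ * hg1' - m₁ * hg2' - (c : ℂ) * m₁ * m₂ * hI
  have hkey : (c : ℂ) * J * m₁ * m₂ = 1 := by
    rcases mul_eq_zero.1 hsub with h | h
    · exact absurd (sub_eq_zero.1 h) hne
    · linear_combination -h
  -- norms
  set a₁ := ∫ l, ‖f2 m₁ l‖ ^ 2 ∂H with ha1_def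
  set a₂ := ∫ l, ‖f2 m₂ l‖ ^ 2 ∂H with ha2_def
  have ha1 : 0 ≤ a₁ := MeasureTheory.integral_nonneg fun l => sq_nonneg _
  have ha2 : 0 ≤ a₂ := MeasureTheory.integral_nonneg fun l => sq_nonneg _
  have hb1 : c * a₁ < (Complex.normSq m₁)⁻¹ := sq_int_bound H hc h1 hzt hg1
  have hb2 : c * a₂ < (Complex.normSq m₂)⁻¹ := sq_int_bound H hc h2 hzt hg2
  -- Cauchy-Schwarz
  have hpq : Real.HolderConjugate 2 2 := ⟨by norm_num, by norm_num, by norm_num⟩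
  have hmem1 : MemLp (fun l : ℝ => ‖f2 m₁ l‖) (ENNReal.ofReal 2) H :=
    MemLp.of_bound (cont_f2 h1).norm.aestronglyMeasurable _
      (Filter.Eventually.of_forall fun l => by
        rw [norm_norm]; exact f2_bound h1 l)
  have hmem2 : MemLp (fun l : ℝ => ‖f2 m₂ l‖) (ENNReal.ofReal 2) H :=
    MemLp.of_bound (cont_f2 h2).norm.aestronglyMeasurable _
      (Filter.Eventually.of_forall fun l => by
        rw [norm_norm]; exact f2_bound h2 l)
  have hCS : ∫ l, ‖f2 m₁ l‖ * ‖f2 m₂ l‖ ∂H ≤ a₁ ^ (1/2 : ℝ) * a₂ ^ (1/2 : ℝ) := by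
    have := MeasureTheory.integral_mul_le_Lp_mul_Lq_of_nonneg hpq
      (Filter.Eventually.of_forall fun l => norm_nonneg (f2 m₁ l))
      (Filter.Eventually.of_forall fun l => norm_nonneg (f2 m₂ l)) hmem1 hmem2
    have e1 : ∫ l, ‖f2 m₁ l‖ ^ (2:ℝ) ∂H = a₁ := by
      rw [ha1_def]
      apply MeasureTheory.integral_congr_ae
      filter_upwards with l
      rw [show ((2:ℝ)) = ((2:ℕ):ℝ) by norm_num, Real.rpow_natCast]
    have e2 : ∫ l, ‖f2 m₂ l‖ ^ (2:ℝ) ∂H = a₂ := by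
      rw [ha2_def]
      apply MeasureTheory.integral_congr_ae
      filter_upwards with l
      rw [show ((2:ℝ)) = ((2:ℕ):ℝ) by norm_num, Real.rpow_natCast]
    rw [e1, e2] at this
    exact this
  have hJnorm : ‖J‖ ≤ a₁ ^ (1/2 : ℝ) * a₂ ^ (1/2 : ℝ) := by
    calc ‖J‖ ≤ ∫ l, ‖f2 m₁ l * f2 m₂ l‖ ∂H :=
          MeasureTheory.norm_integral_le_integral_norm _
    _ = ∫ l, ‖f2 m₁ l‖ * ‖f2 m₂ l‖ ∂H := by
        apply MeasureTheory.integral_congr_ae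
        filter_upwards with l
        exact norm_mul _ _
    _ ≤ _ := hCS
  -- contradiction
  set b₁ := ‖m₁‖ with hb1_def
  set b₂ := ‖m₂‖ with hb2_def
  have hbp1 : 0 < b₁ := norm_pos_iff.2 hm10
  have hbp2 : 0 < b₂ := norm_pos_iff.2 hm20
  have hns1 : Complex.normSq m₁ = b₁ ^ 2 := by
    rw [hb1_def, Complex.sq_norm]
  have hns2 : Complex.normSq m₂ = b₂ ^ 2 := by
    rw [hb2_def, Complex.sq_norm]
  have hone : c * ‖J‖ * b₁ * b₂ = 1 := by
    have := congrArg norm hkey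
    rw [norm_one, norm_mul, norm_mul, norm_mul, Complex.norm_real,
      Real.norm_eq_abs, _root_.abs_of_nonneg hc.le] at this
    exact this
  set r₁ := a₁ ^ (1/2 : ℝ) with hr1_def
  set r₂ := a₂ ^ (1/2 : ℝ) with hr2_def
  have hr1 : r₁ ^ 2 = a₁ := by
    rw [hr1_def, ← Real.rpow_natCast (a₁ ^ (1/2:ℝ)) 2, ← Real.rpow_mul ha1]
    norm_num
  have hr2 : r₂ ^ 2 = a₂ := by
    rw [hr2_def, ← Real.rpow_natCast (a₂ ^ (1/2:ℝ)) 2, ← Real.rpow_mul ha2]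
    norm_num
  have hr1n : 0 ≤ r₁ := Real.rpow_nonneg ha1 _
  have hr2n : 0 ≤ r₂ := Real.rpow_nonneg ha2 _
  have hP : (1:ℝ) ≤ c * (r₁ * r₂) * b₁ * b₂ := by
    rw [← hone]
    have hmul : c * ‖J‖ * (b₁ * b₂) ≤ c * (r₁ * r₂) * (b₁ * b₂) :=
      mul_le_mul_of_nonneg_right (mul_le_mul_of_nonneg_left hJnorm hc.le)
        (mul_nonneg hbp1.le hbp2.le)
    nlinarith [hmul]
  have hb1' : c * a₁ * b₁ ^ 2 < 1 := by
    have h := mul_lt_mul_of_pos_right hb1 (pow_pos hbp1 2)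
    rw [hns1, inv_mul_cancel₀ (pow_pos hbp1 2).ne'] at h
    exact h
  have hb2' : c * a₂ * b₂ ^ 2 < 1 := by
    have h := mul_lt_mul_of_pos_right hb2 (pow_pos hbp2 2)
    rw [hns2, inv_mul_cancel₀ (pow_pos hbp2 2).ne'] at h
    exact h
  have hsq : (c * (r₁ * r₂) * b₁ * b₂) ^ 2 = (c * a₁ * b₁ ^ 2) * (c * a₂ * b₂ ^ 2) := by
    rw [← hr1, ← hr2]; ring
  have hlt1 : (c * (r₁ * r₂) * b₁ * b₂) ^ 2 < 1 := by
    rw [hsq]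
    have hn1 : 0 ≤ c * a₁ * b₁ ^ 2 := mul_nonneg (mul_nonneg hc.le ha1) (sq_nonneg _)
    have hn2 : 0 ≤ c * a₂ * b₂ ^ 2 := mul_nonneg (mul_nonneg hc.le ha2) (sq_nonneg _)
    nlinarith [hb1', hb2', hn1, hn2]
  nlinarith [hP, hlt1]

set_option maxHeartbeats 1000000 in
/-- The value of the inverse function at `-1/z`. -/
lemma g_at_inv (H : Measure ℝ) [IsProbabilityMeasure H] (c : ℝ) {z : ℂ}
    (hz : 0 < z.im) :
    -1 / (-1 / z) + (c : ℂ) * ∫ l, f2 (-1 / z) l ∂H = Phi H c z := by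
  have hz0 : z ≠ 0 := fun h => by simp [h] at hz
  have him : 0 < (-1 / z : ℂ).im := by
    have hns : 0 < Complex.normSq z := Complex.normSq_pos.2 hz0
    rw [show (-1 / z : ℂ) = -(z⁻¹) by rw [neg_div, one_div], Complex.neg_im,
      Complex.inv_im, neg_div, neg_neg]
    exact div_pos hz hns
  have hne : ∀ l : ℝ, ((l : ℂ) - z) ≠ 0 := by
    intro l h
    have h' : ((l : ℂ) - z).im = -z.im := by simp
    rw [h] at h'
    simp only [Complex.zero_im] at h'
    linarith
  have hpt : ∀ l : ℝ, f2 (-1 / z) l = -z - z ^ 2 * ((l : ℂ) - z)⁻¹ := by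
    intro l
    have h0 := one_add_ne him l
    have hlz : (l : ℂ) - z ≠ 0 := hne l
    have hzl : z - (l : ℂ) ≠ 0 := fun h => hlz (by rw [← neg_sub]; rw [h]; ring)
    have h3 : -(l : ℂ) + z ≠ 0 := by rw [neg_add_eq_sub]; exact hzl
    rw [f2]
    field_simp [h0, hz0, hlz, hzl, h3]
    rw [div_eq_iff (show z + -(l:ℂ) ≠ 0 by rw [add_comm]; exact h3)]
    ring
  have hint : ∫ l, f2 (-1 / z) l ∂H = -z - z ^ 2 * St H z := by
    rw [show (fun l : ℝ => f2 (-1 / z) l)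
      = fun l : ℝ => -z - z ^ 2 * ((l : ℂ) - z)⁻¹ from funext hpt,
      MeasureTheory.integral_sub (integrable_const _)
        ((int_stieltjes hz H).const_mul _), MeasureTheory.integral_const_mul]
    rw [St]
    simp
  rw [hint, Phi]
  have : -1 / (-1 / z : ℂ) = z := by field_simp
  rw [this]
  ring

end MPaux

set_option maxHeartbeats 1000000 in
theorem stmt3 (H ν : MeasureTheory.Measure ℝ) (c : ℝ) (hMP : MPRel H c ν) :
    ∀ z ∈ Dinf H c,
      Phi H c z * St ν (Phi H c z) = z * St H z ∧
      St ν (Phi H c z) = St H z / (1 - (c : ℂ) * z * St H z - (c : ℂ)) := by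
  obtain ⟨hHp, -, -, -, hc, hνp, -, -, -, hMPeq⟩ := hMP
  haveI := hHp
  haveI := hνp
  intro z hzD
  obtain ⟨hz, hPhi⟩ := hzD
  have hz0 : z ≠ 0 := fun h => by simp [h] at hz
  set zt := Phi H c z with hzt_def
  have hzt0 : zt ≠ 0 := fun h => by rw [h] at hPhi; simp at hPhi
  obtain ⟨heq, hsign⟩ := hMPeq zt hPhi
  set s₁ := St ν zt with hs1_def
  set m₁ := (c : ℂ) * s₁ + ((c : ℂ) - 1) / zt with hm1_def
  have hm1im : 0 < m₁.im := hsign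
  have hg1 : -1 / m₁ + (c : ℂ) * ∫ l, f2 m₁ l ∂H = zt :=
    g_eq_of_MPeq H hPhi hm1_def hm1im heq
  have hm2im : 0 < (-1 / z : ℂ).im := by
    have hns : 0 < Complex.normSq z := Complex.normSq_pos.2 hz0
    rw [show (-1 / z : ℂ) = -(z⁻¹) by rw [neg_div, one_div], Complex.neg_im,
      Complex.inv_im, neg_div, neg_neg]
    exact div_pos hz hns
  have hg2 : -1 / (-1 / z : ℂ) + (c : ℂ) * ∫ l, f2 (-1 / z) l ∂H = zt :=
    g_at_inv H c hz
  have huniq : m₁ = -1 / z := unique_sol H hc hm1im hm2im hPhi hg1 hg2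
  have hc0 : (c : ℂ) ≠ 0 := by
    exact_mod_cast ne_of_gt hc
  set w := 1 - (c : ℂ) * z * St H z - (c : ℂ) with hw_def
  have hw : zt = w * z := by rw [hzt_def, hw_def]; rfl
  have hw0 : w ≠ 0 := fun h => hzt0 (by rw [hw, h, zero_mul])
  have h1 : (c : ℂ) * s₁ * zt * z + ((c : ℂ) - 1) * z = -zt := by
    have h := huniq
    rw [hm1_def] at h
    field_simp at h
    linear_combination h
  have h2 : (c : ℂ) * z * (zt * s₁) = (c : ℂ) * z * (z * St H z) := by
    linear_combination h1 - hw
  have goal1 : zt * s₁ = z * St H z := mul_left_cancel₀ (mul_ne_zero hc0 hz0) h2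
  refine ⟨goal1, ?_⟩
  rw [eq_div_iff hw0]
  apply mul_left_cancel₀ hz0
  have g1' := goal1
  rw [hw] at g1'
  linear_combination g1'
end

section
/- Suppose (H, c, ν) satisfies the Marchenko–Pastur relation, and let z ∈ ℂ⁺ satisfy Im((1 − c·z·s_H(z) − c)·z) > 0. Then s = s_H(z) satisfies the equation z·s + 1 = ∫_ℝ λ/(λ − (1 − c·z·s − c)·z) dν(λ), and it is the unique s ∈ ℂ⁺ with Im((1 − c·z·s − c)·z) > 0 satisfying this equation. -/
open MeasureTheory Filter Complex Set

section Aux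

lemma aux_ne_s4 {v : ℂ} (hv : 0 < v.im) (l : ℝ) : (1 : ℂ) + (l : ℂ) * v ≠ 0 := by
  intro h
  have him := congrArg Complex.im h
  simp [Complex.add_im, Complex.mul_im] at him
  rcases him with h1 | h1
  · rw [h1] at h; simp at h
  · exact hv.ne' h1

lemma aux_bound {v : ℂ} (hv : 0 < v.im) (l : ℝ) :
    ‖((1 : ℂ) + (l : ℂ) * v)⁻¹‖ ≤ ‖v‖ / v.im := by
  have hv0 : v ≠ 0 := fun h => by simp [h] at hv
  have habs : 0 < ‖v‖ := norm_pos_iff.mpr hv0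
  have hz : ((1 : ℂ) + (l : ℂ) * v) ≠ 0 := aux_ne_s4 hv l
  have h1 : 0 < ‖(1 : ℂ) + (l : ℂ) * v‖ := norm_pos_iff.mpr hz
  have key : v.im ≤ ‖(1 : ℂ) + (l : ℂ) * v‖ * ‖v‖ := by
    have himeq : (((1 : ℂ) + (l : ℂ) * v) * (starRingEnd ℂ) v).im = -v.im := by
      simp [add_mul, Complex.mul_conj, Complex.add_im, Complex.mul_im,
        Complex.conj_re, Complex.conj_im]
      ring
    calc v.im = |(((1 : ℂ) + (l : ℂ) * v) * (starRingEnd ℂ) v).im| := by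
          rw [himeq, abs_neg, abs_of_pos hv]
      _ ≤ ‖((1 : ℂ) + (l : ℂ) * v) * (starRingEnd ℂ) v‖ := Complex.abs_im_le_norm _
      _ = ‖(1 : ℂ) + (l : ℂ) * v‖ * ‖v‖ := by
          rw [norm_mul, Complex.norm_conj]
  rw [norm_inv]
  have h2 : v.im / ‖v‖ ≤ ‖(1 : ℂ) + (l : ℂ) * v‖ := by
    rw [div_le_iff₀ habs]; exact key
  calc (‖(1 : ℂ) + (l : ℂ) * v‖)⁻¹ ≤ (v.im / ‖v‖)⁻¹ := by
        apply inv_anti₀ (by positivity) h2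
    _ = ‖v‖ / v.im := by rw [inv_div]

end Aux

section Aux2

lemma integrable_of_bdd {E : Type*} [NormedAddCommGroup E] {μ : Measure ℝ} [IsFiniteMeasure μ]
    {f : ℝ → E} (hf : Continuous f) (C : ℝ) (hC : ∀ x, ‖f x‖ ≤ C) : Integrable f μ :=
  (integrable_const C).mono' hf.aestronglyMeasurable (Eventually.of_forall hC)

lemma cont_g {v : ℂ} (hv : 0 < v.im) : Continuous (fun l : ℝ => ((1 : ℂ) + (l : ℂ) * v)⁻¹) := by
  apply Continuous.inv₀ (by continuity) (fun l => aux_ne_s4 hv l)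

lemma int_g (μ : Measure ℝ) [IsFiniteMeasure μ] {v : ℂ} (hv : 0 < v.im) :
    Integrable (fun l : ℝ => ((1 : ℂ) + (l : ℂ) * v)⁻¹) μ :=
  integrable_of_bdd (cont_g hv) (‖v‖ / v.im) (fun l => aux_bound hv l)

lemma int_f (μ : Measure ℝ) [IsFiniteMeasure μ] {v : ℂ} (hv : 0 < v.im) :
    Integrable (fun l : ℝ => (1 : ℂ) - ((1 : ℂ) + (l : ℂ) * v)⁻¹) μ :=
  (integrable_const 1).sub (int_g μ hv)

lemma bound_f {v : ℂ} (hv : 0 < v.im) (l : ℝ) :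
    ‖(1 : ℂ) - ((1 : ℂ) + (l : ℂ) * v)⁻¹‖ ≤ 1 + ‖v‖ / v.im := by
  calc ‖(1 : ℂ) - ((1 : ℂ) + (l : ℂ) * v)⁻¹‖ ≤ ‖(1 : ℂ)‖ + ‖((1 : ℂ) + (l : ℂ) * v)⁻¹‖ :=
        norm_sub_le _ _
    _ ≤ 1 + ‖v‖ / v.im := by
        rw [norm_one]
        exact add_le_add_right (aux_bound hv l) 1

/-- The identity `l * (1+lv)⁻¹ = v⁻¹ * (1 - (1+lv)⁻¹)`. -/
lemma aux_id {v : ℂ} (hv : 0 < v.im) (l : ℝ) :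
    (l : ℂ) * ((1 : ℂ) + (l : ℂ) * v)⁻¹ = v⁻¹ * ((1 : ℂ) - ((1 : ℂ) + (l : ℂ) * v)⁻¹) := by
  have hv0 : v ≠ 0 := fun h => by simp [h] at hv
  have hz : ((1 : ℂ) + (l : ℂ) * v) ≠ 0 := aux_ne_s4 hv l
  field_simp
  ring

lemma aux_im {v : ℂ} (hv : 0 < v.im) (l : ℝ) :
    (v⁻¹ * ((1 : ℂ) - ((1 : ℂ) + (l : ℂ) * v)⁻¹)).im
      = -(v.im / Complex.normSq v) * Complex.normSq ((1 : ℂ) - ((1 : ℂ) + (l : ℂ) * v)⁻¹) := by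
  have hv0 : v ≠ 0 := fun h => by simp [h] at hv
  have hz : ((1 : ℂ) + (l : ℂ) * v) ≠ 0 := aux_ne_s4 hv l
  have hNz : Complex.normSq ((1 : ℂ) + (l : ℂ) * v) ≠ 0 := by
    simpa [Complex.normSq_eq_zero] using hz
  have hNv : Complex.normSq v ≠ 0 := by simpa [Complex.normSq_eq_zero] using hv0
  have h1 : (1 : ℂ) - ((1 : ℂ) + (l : ℂ) * v)⁻¹ = (l : ℂ) * v * ((1 : ℂ) + (l : ℂ) * v)⁻¹ := by
    field_simp
    ring
  rw [← aux_id hv l, h1]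
  rw [Complex.normSq_mul, Complex.normSq_mul, Complex.normSq_inv]
  simp only [Complex.mul_im, Complex.ofReal_re, Complex.ofReal_im, Complex.inv_im,
    Complex.normSq_ofReal, Complex.add_im, Complex.one_im, Complex.mul_im]
  field_simp
  ring

/-- From the MP fixed-point equation to the `v`-form equation. -/
lemma step (H : Measure ℝ) [IsProbabilityMeasure H] (c : ℝ) (w m v : ℂ)
    (hw0 : w ≠ 0) (hv : 0 < v.im)
    (hveq : w * v = (c : ℂ) * w * m + ((c : ℂ) - 1))
    (e : m = ∫ l, ((l : ℂ) * (1 - (c : ℂ) * w * m - (c : ℂ)) - w)⁻¹ ∂H) :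
    w * v + 1 = (c : ℂ) * ∫ l, ((1 : ℂ) - ((1 : ℂ) + (l : ℂ) * v)⁻¹) ∂H := by
  have hcoef : 1 - (c : ℂ) * w * m - (c : ℂ) = -(w * v) := by linear_combination hveq
  have hpt : ∀ l : ℝ, ((l : ℂ) * (1 - (c : ℂ) * w * m - (c : ℂ)) - w)⁻¹
      = (-w⁻¹) * ((1 : ℂ) + (l : ℂ) * v)⁻¹ := by
    intro l
    rw [hcoef, show (l : ℂ) * (-(w * v)) - w = (-w) * ((1 : ℂ) + (l : ℂ) * v) by ring, mul_inv,
      inv_neg]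
  have e2 : m = (-w⁻¹) * ∫ l, ((1 : ℂ) + (l : ℂ) * v)⁻¹ ∂H := by
    rw [e]
    simp_rw [hpt]
    rw [MeasureTheory.integral_const_mul]
  have hF : ∫ l, ((1 : ℂ) - ((1 : ℂ) + (l : ℂ) * v)⁻¹) ∂H
      = 1 - ∫ l, ((1 : ℂ) + (l : ℂ) * v)⁻¹ ∂H := by
    rw [integral_sub (integrable_const 1) (int_g H hv), integral_const]
    simp
  rw [hF]
  have hwm : w * m = -(∫ l, ((1 : ℂ) + (l : ℂ) * v)⁻¹ ∂H) := by
    rw [e2, ← mul_assoc, mul_neg, mul_inv_cancel₀ hw0]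
    ring
  linear_combination hveq + (c : ℂ) * hwm

/-- The strict bound `c ∫ ‖f_v‖² dH < 1`. -/
lemma step2 (H : Measure ℝ) [IsProbabilityMeasure H] {c : ℝ} (hc : 0 < c) {w v : ℂ}
    (hw : 0 < w.im) (hv : 0 < v.im)
    (E : w * v + 1 = (c : ℂ) * ∫ l, ((1 : ℂ) - ((1 : ℂ) + (l : ℂ) * v)⁻¹) ∂H) :
    c * ∫ l, Complex.normSq ((1 : ℂ) - ((1 : ℂ) + (l : ℂ) * v)⁻¹) ∂H < 1 := by
  have hv0 : v ≠ 0 := fun h => by simp [h] at hv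
  have hNv : 0 < Complex.normSq v := Complex.normSq_pos.mpr hv0
  -- divided form
  have E' : w + v⁻¹ = (c : ℂ) * ∫ l, v⁻¹ * ((1 : ℂ) - ((1 : ℂ) + (l : ℂ) * v)⁻¹) ∂H := by
    rw [MeasureTheory.integral_const_mul]
    calc w + v⁻¹ = v⁻¹ * (w * v + 1) := by field_simp
      _ = v⁻¹ * ((c : ℂ) * ∫ l, ((1 : ℂ) - ((1 : ℂ) + (l : ℂ) * v)⁻¹) ∂H) := by rw [E]
      _ = (c : ℂ) * (v⁻¹ * ∫ l, ((1 : ℂ) - ((1 : ℂ) + (l : ℂ) * v)⁻¹) ∂H) := by ring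
  have hint : Integrable (fun l : ℝ => v⁻¹ * ((1 : ℂ) - ((1 : ℂ) + (l : ℂ) * v)⁻¹)) H :=
    (int_f H hv).const_mul _
  have him := congrArg Complex.im E'
  rw [Complex.add_im, Complex.inv_im] at him
  have hRHS : ((c : ℂ) * ∫ l, v⁻¹ * ((1 : ℂ) - ((1 : ℂ) + (l : ℂ) * v)⁻¹) ∂H).im
      = c * (-(v.im / Complex.normSq v)
          * ∫ l, Complex.normSq ((1 : ℂ) - ((1 : ℂ) + (l : ℂ) * v)⁻¹) ∂H) := by
    rw [show ((c : ℂ) * ∫ l, v⁻¹ * ((1 : ℂ) - ((1 : ℂ) + (l : ℂ) * v)⁻¹) ∂H).im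
        = c * (∫ l, v⁻¹ * ((1 : ℂ) - ((1 : ℂ) + (l : ℂ) * v)⁻¹) ∂H).im by
      simp [Complex.mul_im]]
    congr 1
    have him2 := integral_im (𝕜 := ℂ) hint
    simp only [RCLike.im_to_complex] at him2
    rw [← him2]
    simp_rw [aux_im hv]
    rw [MeasureTheory.integral_const_mul]
  rw [hRHS] at him
  -- him : w.im + -v.im / normSq v = c * (-(v.im/normSq v) * S)
  set S := ∫ l, Complex.normSq ((1 : ℂ) - ((1 : ℂ) + (l : ℂ) * v)⁻¹) ∂H with hS
  have h1 : w.im = (v.im / Complex.normSq v) * (1 - c * S) := by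
    field_simp at him ⊢
    linarith [him]
  have h2 : 0 < v.im / Complex.normSq v := div_pos hv hNv
  nlinarith [hw, h1, h2]

end Aux2

section Key

lemma bound_lg2 {v₁ v₂ : ℂ} (hv₁ : 0 < v₁.im) (hv₂ : 0 < v₂.im) (l : ℝ) :
    ‖(l : ℂ) * (((1 : ℂ) + (l : ℂ) * v₁)⁻¹ * ((1 : ℂ) + (l : ℂ) * v₂)⁻¹)‖
      ≤ (‖v₁‖)⁻¹ * (1 + ‖v₁‖ / v₁.im) * (‖v₂‖ / v₂.im) := by
  have hv0 : v₁ ≠ 0 := fun h => by simp [h] at hv₁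
  have h1 : ‖(l : ℂ) * ((1 : ℂ) + (l : ℂ) * v₁)⁻¹‖
      ≤ (‖v₁‖)⁻¹ * (1 + ‖v₁‖ / v₁.im) := by
    rw [aux_id hv₁ l, norm_mul, norm_inv]
    exact mul_le_mul_of_nonneg_left (bound_f hv₁ l) (by positivity)
  calc ‖(l : ℂ) * (((1 : ℂ) + (l : ℂ) * v₁)⁻¹ * ((1 : ℂ) + (l : ℂ) * v₂)⁻¹)‖
      = ‖(l : ℂ) * ((1 : ℂ) + (l : ℂ) * v₁)⁻¹‖ * ‖((1 : ℂ) + (l : ℂ) * v₂)⁻¹‖ := by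
        rw [← norm_mul]; ring_nf
    _ ≤ (‖v₁‖)⁻¹ * (1 + ‖v₁‖ / v₁.im) * (‖v₂‖ / v₂.im) := by
        apply mul_le_mul h1 (aux_bound hv₂ l) (norm_nonneg _) (by positivity)

/-- Uniqueness for the fixed point equation. -/
lemma key (H : Measure ℝ) [IsProbabilityMeasure H] {c : ℝ} (hc : 0 < c) {w : ℂ}
    (hw : 0 < w.im) {m₁ m₂ : ℂ}
    (e₁ : m₁ = ∫ l, ((l : ℂ) * (1 - (c : ℂ) * w * m₁ - (c : ℂ)) - w)⁻¹ ∂H)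
    (i₁ : 0 < ((c : ℂ) * m₁ + ((c : ℂ) - 1) / w).im)
    (e₂ : m₂ = ∫ l, ((l : ℂ) * (1 - (c : ℂ) * w * m₂ - (c : ℂ)) - w)⁻¹ ∂H)
    (i₂ : 0 < ((c : ℂ) * m₂ + ((c : ℂ) - 1) / w).im) :
    m₁ = m₂ := by
  have hw0 : w ≠ 0 := fun h => by simp [h] at hw
  have hc0 : (c : ℂ) ≠ 0 := by exact_mod_cast hc.ne'
  set v₁ : ℂ := (c : ℂ) * m₁ + ((c : ℂ) - 1) / w with hv₁def
  set v₂ : ℂ := (c : ℂ) * m₂ + ((c : ℂ) - 1) / w with hv₂def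
  have hveq₁ : w * v₁ = (c : ℂ) * w * m₁ + ((c : ℂ) - 1) := by
    rw [hv₁def]; field_simp
  have hveq₂ : w * v₂ = (c : ℂ) * w * m₂ + ((c : ℂ) - 1) := by
    rw [hv₂def]; field_simp
  have E₁ := step H c w m₁ v₁ hw0 i₁ hveq₁ e₁
  have E₂ := step H c w m₂ v₂ hw0 i₂ hveq₂ e₂
  by_contra hne
  have hvne : v₁ - v₂ ≠ 0 := by
    intro h
    apply hne
    have : (c : ℂ) * m₁ = (c : ℂ) * m₂ := by
      have h2 : v₁ = v₂ := sub_eq_zero.mp h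
      rw [hv₁def, hv₂def] at h2
      linear_combination h2
    exact mul_left_cancel₀ hc0 this
  -- difference of the two equations
  have hf₁ : Integrable (fun l : ℝ => (1 : ℂ) - ((1 : ℂ) + (l : ℂ) * v₁)⁻¹) H := int_f H i₁
  have hf₂ : Integrable (fun l : ℝ => (1 : ℂ) - ((1 : ℂ) + (l : ℂ) * v₂)⁻¹) H := int_f H i₂
  have hJint : Integrable
      (fun l : ℝ => (l : ℂ) * (((1 : ℂ) + (l : ℂ) * v₁)⁻¹ * ((1 : ℂ) + (l : ℂ) * v₂)⁻¹)) H :=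
    integrable_of_bdd (Complex.continuous_ofReal.mul ((cont_g i₁).mul (cont_g i₂))) _
      (fun l => bound_lg2 i₁ i₂ l)
  set J : ℂ := ∫ l, (l : ℂ) * (((1 : ℂ) + (l : ℂ) * v₁)⁻¹ * ((1 : ℂ) + (l : ℂ) * v₂)⁻¹) ∂H
    with hJ
  have hdiff : w * (v₁ - v₂) = (c : ℂ) * ((v₁ - v₂) * J) := by
    have hsub : ∫ l, (((1 : ℂ) - ((1 : ℂ) + (l : ℂ) * v₁)⁻¹)
        - ((1 : ℂ) - ((1 : ℂ) + (l : ℂ) * v₂)⁻¹)) ∂H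
        = (∫ l, ((1 : ℂ) - ((1 : ℂ) + (l : ℂ) * v₁)⁻¹) ∂H)
          - ∫ l, ((1 : ℂ) - ((1 : ℂ) + (l : ℂ) * v₂)⁻¹) ∂H := integral_sub hf₁ hf₂
    have hpt : ∀ l : ℝ, (((1 : ℂ) - ((1 : ℂ) + (l : ℂ) * v₁)⁻¹)
        - ((1 : ℂ) - ((1 : ℂ) + (l : ℂ) * v₂)⁻¹))
        = (v₁ - v₂) * ((l : ℂ) * (((1 : ℂ) + (l : ℂ) * v₁)⁻¹ * ((1 : ℂ) + (l : ℂ) * v₂)⁻¹)) := by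
      intro l
      have h1 := aux_ne_s4 i₁ l
      have h2 := aux_ne_s4 i₂ l
      field_simp
      ring
    have : (v₁ - v₂) * J = (∫ l, ((1 : ℂ) - ((1 : ℂ) + (l : ℂ) * v₁)⁻¹) ∂H)
        - ∫ l, ((1 : ℂ) - ((1 : ℂ) + (l : ℂ) * v₂)⁻¹) ∂H := by
      rw [← hsub]
      simp_rw [hpt]
      rw [MeasureTheory.integral_const_mul]
    rw [this]
    linear_combination E₁ - E₂
  have hwJ : w = (c : ℂ) * J := by
    apply mul_right_cancel₀ (b := v₁ - v₂) hvne
    calc w * (v₁ - v₂) = (c : ℂ) * ((v₁ - v₂) * J) := hdiff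
      _ = (c : ℂ) * J * (v₁ - v₂) := by ring
  -- derive 1 = c * ∫ f₁ f₂
  have hone : (1 : ℂ) = (c : ℂ) * ∫ l,
      (((1 : ℂ) - ((1 : ℂ) + (l : ℂ) * v₁)⁻¹) * ((1 : ℂ) - ((1 : ℂ) + (l : ℂ) * v₂)⁻¹)) ∂H := by
    have hpt : ∀ l : ℝ, (((1 : ℂ) - ((1 : ℂ) + (l : ℂ) * v₁)⁻¹)
        * ((1 : ℂ) - ((1 : ℂ) + (l : ℂ) * v₂)⁻¹))
        = ((1 : ℂ) - ((1 : ℂ) + (l : ℂ) * v₁)⁻¹)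
          - v₁ * ((l : ℂ) * (((1 : ℂ) + (l : ℂ) * v₁)⁻¹ * ((1 : ℂ) + (l : ℂ) * v₂)⁻¹)) := by
      intro l
      have h1 := aux_ne_s4 i₁ l
      have h2 := aux_ne_s4 i₂ l
      field_simp
      ring
    have hsplit : ∫ l, (((1 : ℂ) - ((1 : ℂ) + (l : ℂ) * v₁)⁻¹)
        * ((1 : ℂ) - ((1 : ℂ) + (l : ℂ) * v₂)⁻¹)) ∂H
        = (∫ l, ((1 : ℂ) - ((1 : ℂ) + (l : ℂ) * v₁)⁻¹) ∂H) - v₁ * J := by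
      simp_rw [hpt]
      rw [integral_sub hf₁ (hJint.const_mul v₁), MeasureTheory.integral_const_mul]
    rw [hsplit]
    linear_combination E₁ - v₁ * hwJ
  -- strict bounds
  have hB₁ := step2 H hc hw i₁ E₁
  have hB₂ := step2 H hc hw i₂ E₂
  have hS₁n : (0:ℝ) ≤ ∫ l, Complex.normSq ((1 : ℂ) - ((1 : ℂ) + (l : ℂ) * v₁)⁻¹) ∂H :=
    integral_nonneg (fun l => Complex.normSq_nonneg _)
  have hS₂n : (0:ℝ) ≤ ∫ l, Complex.normSq ((1 : ℂ) - ((1 : ℂ) + (l : ℂ) * v₂)⁻¹) ∂H :=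
    integral_nonneg (fun l => Complex.normSq_nonneg _)
  set S₁ : ℝ := ∫ l, Complex.normSq ((1 : ℂ) - ((1 : ℂ) + (l : ℂ) * v₁)⁻¹) ∂H with hS₁
  set S₂ : ℝ := ∫ l, Complex.normSq ((1 : ℂ) - ((1 : ℂ) + (l : ℂ) * v₂)⁻¹) ∂H with hS₂
  -- take absolute values
  have habs : (1:ℝ) ≤ c * ∫ l, ‖(1 : ℂ) - ((1 : ℂ) + (l : ℂ) * v₁)⁻¹‖
      * ‖(1 : ℂ) - ((1 : ℂ) + (l : ℂ) * v₂)⁻¹‖ ∂H := by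
    have h0 := congrArg norm hone
    rw [norm_one, norm_mul, Complex.norm_real, Real.norm_eq_abs, abs_of_pos hc] at h0
    have hle : ‖∫ l, (((1 : ℂ) - ((1 : ℂ) + (l : ℂ) * v₁)⁻¹)
        * ((1 : ℂ) - ((1 : ℂ) + (l : ℂ) * v₂)⁻¹)) ∂H‖
        ≤ ∫ l, ‖(1 : ℂ) - ((1 : ℂ) + (l : ℂ) * v₁)⁻¹‖
          * ‖(1 : ℂ) - ((1 : ℂ) + (l : ℂ) * v₂)⁻¹‖ ∂H := by
      calc ‖∫ l, (((1 : ℂ) - ((1 : ℂ) + (l : ℂ) * v₁)⁻¹)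
            * ((1 : ℂ) - ((1 : ℂ) + (l : ℂ) * v₂)⁻¹)) ∂H‖
          = ‖∫ l, (((1 : ℂ) - ((1 : ℂ) + (l : ℂ) * v₁)⁻¹)
            * ((1 : ℂ) - ((1 : ℂ) + (l : ℂ) * v₂)⁻¹)) ∂H‖ := rfl
        _ ≤ ∫ l, ‖((1 : ℂ) - ((1 : ℂ) + (l : ℂ) * v₁)⁻¹)
            * ((1 : ℂ) - ((1 : ℂ) + (l : ℂ) * v₂)⁻¹)‖ ∂H := norm_integral_le_integral_norm _
        _ = ∫ l, ‖(1 : ℂ) - ((1 : ℂ) + (l : ℂ) * v₁)⁻¹‖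
            * ‖(1 : ℂ) - ((1 : ℂ) + (l : ℂ) * v₂)⁻¹‖ ∂H := by
            simp_rw [norm_mul]
    rw [h0]
    exact mul_le_mul_of_nonneg_left hle hc.le
  -- Cauchy-Schwarz
  have hCS : ∫ l, ‖(1 : ℂ) - ((1 : ℂ) + (l : ℂ) * v₁)⁻¹‖
      * ‖(1 : ℂ) - ((1 : ℂ) + (l : ℂ) * v₂)⁻¹‖ ∂H
      ≤ Real.sqrt S₁ * Real.sqrt S₂ := by
    have hpq : Real.HolderConjugate 2 2 := Real.holderConjugate_iff.mpr ⟨one_lt_two, by norm_num⟩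
    have hcont₁ : Continuous (fun l : ℝ => ‖(1 : ℂ) - ((1 : ℂ) + (l : ℂ) * v₁)⁻¹‖) :=
      continuous_norm.comp (continuous_const.sub (cont_g i₁))
    have hcont₂ : Continuous (fun l : ℝ => ‖(1 : ℂ) - ((1 : ℂ) + (l : ℂ) * v₂)⁻¹‖) :=
      continuous_norm.comp (continuous_const.sub (cont_g i₂))
    have hm₁ : MemLp (fun l : ℝ => ‖(1 : ℂ) - ((1 : ℂ) + (l : ℂ) * v₁)⁻¹‖)
        (ENNReal.ofReal 2) H := by
      apply MemLp.of_bound hcont₁.aestronglyMeasurable (1 + ‖v₁‖ / v₁.im)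
      filter_upwards with l
      rw [Real.norm_eq_abs, _root_.abs_of_nonneg (norm_nonneg _)]
      exact bound_f i₁ l
    have hm₂ : MemLp (fun l : ℝ => ‖(1 : ℂ) - ((1 : ℂ) + (l : ℂ) * v₂)⁻¹‖)
        (ENNReal.ofReal 2) H := by
      apply MemLp.of_bound hcont₂.aestronglyMeasurable (1 + ‖v₂‖ / v₂.im)
      filter_upwards with l
      rw [Real.norm_eq_abs, _root_.abs_of_nonneg (norm_nonneg _)]
      exact bound_f i₂ l
    have h := integral_mul_le_Lp_mul_Lq_of_nonneg hpq
      (Eventually.of_forall (fun l => norm_nonneg _))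
      (Eventually.of_forall (fun l => norm_nonneg _)) hm₁ hm₂
    have hr2 : ∀ x : ℝ, x ^ (2:ℝ) = x ^ 2 := fun x => by
      rw [show (2:ℝ) = ((2:ℕ):ℝ) by norm_num, Real.rpow_natCast]
    simp_rw [hr2, Complex.sq_norm] at h
    rw [← Real.sqrt_eq_rpow, ← Real.sqrt_eq_rpow] at h
    exact h
  -- combine
  have hsq : c * (Real.sqrt S₁ * Real.sqrt S₂) = Real.sqrt (c*S₁) * Real.sqrt (c*S₂) := by
    rw [Real.sqrt_mul hc.le, Real.sqrt_mul hc.le]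
    have h2 : Real.sqrt c * Real.sqrt c = c := Real.mul_self_sqrt hc.le
    linear_combination (-(Real.sqrt S₁ * Real.sqrt S₂)) * h2
  have hlt₁ : Real.sqrt (c*S₁) < 1 := by
    have := Real.sqrt_lt_sqrt (by positivity) hB₁
    simpa using this
  have hlt₂ : Real.sqrt (c*S₂) < 1 := by
    have := Real.sqrt_lt_sqrt (by positivity) hB₂
    simpa using this
  have hchain : (1:ℝ) < 1 := by
    calc (1:ℝ) ≤ c * ∫ l, ‖(1 : ℂ) - ((1 : ℂ) + (l : ℂ) * v₁)⁻¹‖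
          * ‖(1 : ℂ) - ((1 : ℂ) + (l : ℂ) * v₂)⁻¹‖ ∂H := habs
      _ ≤ c * (Real.sqrt S₁ * Real.sqrt S₂) := mul_le_mul_of_nonneg_left hCS hc.le
      _ = Real.sqrt (c*S₁) * Real.sqrt (c*S₂) := hsq
      _ < 1 := by nlinarith [Real.sqrt_nonneg (c*S₁), Real.sqrt_nonneg (c*S₂), hlt₁, hlt₂]
  exact absurd hchain (lt_irrefl 1)

end Key

section Main

lemma sub_ne' {w : ℂ} (hw : 0 < w.im) (l : ℝ) : (l : ℂ) - w ≠ 0 := by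
  intro h
  have := congrArg Complex.im h
  simp [Complex.sub_im] at this
  exact hw.ne' this

lemma int_ratio (ν : Measure ℝ) [IsProbabilityMeasure ν] {w : ℂ} (hw : 0 < w.im) :
    ∫ l, (l : ℂ) / ((l : ℂ) - w) ∂ν = 1 + w * St ν w := by
  have hpt : ∀ l : ℝ, (l : ℂ) / ((l : ℂ) - w) = 1 + w * ((l : ℂ) - w)⁻¹ := by
    intro l
    have := sub_ne' hw l
    field_simp
    ring
  have hint : Integrable (fun l : ℝ => ((l : ℂ) - w)⁻¹) ν := by
    apply integrable_of_bdd (Continuous.inv₀ (by continuity) (fun l => sub_ne' hw l)) (w.im)⁻¹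
    intro l
    rw [Pi.inv_apply, norm_inv]
    apply inv_anti₀ hw
    calc w.im = |((l : ℂ) - w).im| := by rw [Complex.sub_im, Complex.ofReal_im, abs_of_neg (by linarith), neg_sub, sub_zero]
      _ ≤ ‖(l : ℂ) - w‖ := Complex.abs_im_le_norm _
  simp_rw [hpt]
  rw [integral_add (integrable_const 1) (hint.const_mul w), integral_const,
    MeasureTheory.integral_const_mul]
  simp [St]

end Main


theorem stmt4 (H ν : MeasureTheory.Measure ℝ) (c : ℝ) (hMP : MPRel H c ν)
    (z : ℂ) (hz : 0 < z.im)
    (hPhi : 0 < ((1 - (c : ℂ) * z * St H z - (c : ℂ)) * z).im) :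
    (z * St H z + 1 =
      ∫ l, (l : ℂ) / ((l : ℂ) - (1 - (c : ℂ) * z * St H z - (c : ℂ)) * z) ∂ν) ∧
    ∀ s : ℂ, 0 < s.im → 0 < ((1 - (c : ℂ) * z * s - (c : ℂ)) * z).im →
      z * s + 1 = (∫ l, (l : ℂ) / ((l : ℂ) - (1 - (c : ℂ) * z * s - (c : ℂ)) * z) ∂ν) →
      s = St H z := by
  obtain ⟨hHp, -, -, -, hc, hνp, -, -, -, hMPe⟩ := hMP
  haveI := hHp
  haveI := hνp
  have hz0 : z ≠ 0 := fun h => by simp [h] at hz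
  set s : ℂ := St H z with hsdef
  set u : ℂ := 1 - (c : ℂ) * z * s - (c : ℂ) with hudef
  have hw0 : u * z ≠ 0 := fun h => by rw [h] at hPhi; simp at hPhi
  have hu0 : u ≠ 0 := fun h => hw0 (by rw [h, zero_mul])
  obtain ⟨e₁, i₁⟩ := hMPe (u * z) hPhi
  have hSt : (∫ l, ((l : ℂ) - z)⁻¹ ∂H) = s := by rw [hsdef]; simp only [St]
  have e₂ : u⁻¹ * s
      = ∫ l, ((l : ℂ) * (1 - (c : ℂ) * (u * z) * (u⁻¹ * s) - (c : ℂ)) - u * z)⁻¹ ∂H := by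
    have hcoef : 1 - (c : ℂ) * (u * z) * (u⁻¹ * s) - (c : ℂ) = u := by
      rw [show (c : ℂ) * (u * z) * (u⁻¹ * s) = (c : ℂ) * z * s by field_simp, hudef]
    rw [hcoef]
    have hpt : ∀ l : ℝ, ((l : ℂ) * u - u * z)⁻¹ = u⁻¹ * ((l : ℂ) - z)⁻¹ := by
      intro l
      rw [show (l : ℂ) * u - u * z = u * ((l : ℂ) - z) by ring, mul_inv]
    simp_rw [hpt]
    rw [MeasureTheory.integral_const_mul, hSt]
  have i₂ : 0 < ((c : ℂ) * (u⁻¹ * s) + ((c : ℂ) - 1) / (u * z)).im := by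
    have hmain : (c : ℂ) * (u⁻¹ * s) + ((c : ℂ) - 1) / (u * z) = -z⁻¹ := by
      apply mul_right_cancel₀ hw0
      have hu' : u = 1 - (c : ℂ) * z * s - (c : ℂ) := hudef
      field_simp
      linear_combination z * hu'
    rw [hmain]
    have hpos : (0 : ℝ) < z.im / Complex.normSq z :=
      div_pos hz (Complex.normSq_pos.mpr hz0)
    simpa [Complex.neg_im, Complex.inv_im, neg_div] using hpos
  have hm : St ν (u * z) = u⁻¹ * s := key H hc hPhi e₁ i₁ e₂ i₂
  refine ⟨?_, ?_⟩
  · rw [int_ratio ν hPhi, hm]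
    field_simp
    ring
  · intro s' hs' hP' he'
    set u' : ℂ := 1 - (c : ℂ) * z * s' - (c : ℂ) with hu'def
    have hw0' : u' * z ≠ 0 := fun h => by rw [h] at hP'; simp at hP'
    have hu'0 : u' ≠ 0 := fun h => hw0' (by rw [h, zero_mul])
    obtain ⟨e₁', i₁'⟩ := hMPe (u' * z) hP'
    rw [int_ratio ν hP'] at he'
    have hm' : St ν (u' * z) = (u' * z)⁻¹ * (z * s') := by
      have hzs : z * s' = (u' * z) * St ν (u' * z) := by linear_combination he'
      rw [hzs]
      field_simp
    rw [hm'] at e₁'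
    have hcoef' : 1 - (c : ℂ) * (u' * z) * ((u' * z)⁻¹ * (z * s')) - (c : ℂ) = u' := by
      rw [show (c : ℂ) * (u' * z) * ((u' * z)⁻¹ * (z * s')) = (c : ℂ) * z * s' by
        field_simp, hu'def]
    rw [hcoef'] at e₁'
    have hpt' : ∀ l : ℝ, ((l : ℂ) * u' - u' * z)⁻¹ = u'⁻¹ * ((l : ℂ) - z)⁻¹ := by
      intro l
      rw [show (l : ℂ) * u' - u' * z = u' * ((l : ℂ) - z) by ring, mul_inv]
    simp_rw [hpt'] at e₁'
    rw [MeasureTheory.integral_const_mul] at e₁'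
    have hSt2 : (∫ l, ((l : ℂ) - z)⁻¹ ∂H) = s := by rw [hsdef]; simp only [St]
    rw [hSt2] at e₁'
    have h2 : (u' * z)⁻¹ * (z * s') = u'⁻¹ * s' := by field_simp
    have h3 : u'⁻¹ * s' = u'⁻¹ * s := by rw [← h2, e₁']
    exact mul_left_cancel₀ (inv_ne_zero hu'0) h3
end

section
/- Suppose (H, c, ν) satisfies the Marchenko–Pastur relation, and let z ∈ ℂ⁺ satisfy Im((1 − c·z·s_H(z) − c)·z) ≤ 0. Then there is no s ∈ ℂ⁺ with Im((1 − c·z·s − c)·z) > 0 satisfying z·s + 1 = ∫_ℝ λ/(λ − (1 − c·z·s − c)·z) dν(λ). -/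
open MeasureTheory Filter Complex Set

theorem stmt5 (H ν : MeasureTheory.Measure ℝ) (c : ℝ) (hMP : MPRel H c ν)
    (z : ℂ) (hz : 0 < z.im)
    (hPhi : ((1 - (c : ℂ) * z * St H z - (c : ℂ)) * z).im ≤ 0) :
    ¬ ∃ s : ℂ, 0 < s.im ∧ 0 < ((1 - (c : ℂ) * z * s - (c : ℂ)) * z).im ∧
      z * s + 1 = ∫ l, (l : ℂ) / ((l : ℂ) - (1 - (c : ℂ) * z * s - (c : ℂ)) * z) ∂ν := by
  rintro ⟨s, hs, hw, hsum⟩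
  obtain ⟨hHp, -, -, -, hc, hνp, -, -, -, hmp⟩ := hMP
  set w := (1 - (c : ℂ) * z * s - (c : ℂ)) * z with hwdef
  have hz0 : z ≠ 0 := fun h => by simp [h] at hz
  have hw0 : w ≠ 0 := fun h => by simp [h] at hw
  have hne : ∀ l : ℝ, (l : ℂ) - w ≠ 0 := by
    intro l h
    have := congrArg Complex.im h
    simp at this
    linarith
  -- integrability of (l - w)⁻¹ w.r.t. ν
  have hcont : Continuous fun l : ℝ => ((l : ℂ) - w)⁻¹ :=
    (Complex.continuous_ofReal.sub continuous_const).inv₀ hne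
  have hint : Integrable (fun l : ℝ => ((l : ℂ) - w)⁻¹) ν := by
    refine (integrable_const ((w.im)⁻¹)).mono' hcont.aestronglyMeasurable ?_
    refine Filter.Eventually.of_forall fun l => ?_
    have h1 : w.im ≤ ‖(l : ℂ) - w‖ := by
      have := Complex.abs_im_le_norm ((l : ℂ) - w)
      simp only [Complex.sub_im, Complex.ofReal_im, zero_sub, abs_neg] at this
      calc w.im ≤ |w.im| := le_abs_self _
        _ ≤ _ := this
    simp only [norm_inv, Real.norm_eq_abs,
      abs_of_pos (show (0:ℝ) < (w.im)⁻¹ by positivity)]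
    exact inv_anti₀ (by linarith [hw]) h1
  -- Step 1 : z * s = w * St ν w
  have h1 : z * s = w * St ν w := by
    have hval : (∫ l, (l : ℂ) / ((l : ℂ) - w) ∂ν) = 1 + w * St ν w := by
      have hrw : ∀ l : ℝ, (l : ℂ) / ((l : ℂ) - w) = 1 + w * ((l : ℂ) - w)⁻¹ := by
        intro l
        field_simp [hne l]
        ring
      simp_rw [hrw]
      rw [integral_add (integrable_const 1) (hint.const_mul w), integral_const,
        integral_const_mul]
      simp [St, measure_univ]
    have := hsum.trans hval
    linear_combination this
  -- MP relation at w
  obtain ⟨heq, -⟩ := hmp w hw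
  set u := 1 - (c : ℂ) * w * St ν w - (c : ℂ) with hudef
  have hu : u = 1 - (c : ℂ) * z * s - (c : ℂ) := by
    rw [hudef]
    linear_combination (c : ℂ) * h1
  have hwu : w = u * z := by rw [hu]
  have hu0 : u ≠ 0 := fun h => hw0 (by rw [hwu, h, zero_mul])
  -- Step 2 : St ν w = u⁻¹ * St H z
  have h2 : St ν w = u⁻¹ * St H z := by
    rw [heq]
    have hrw : ∀ l : ℝ, ((l : ℂ) * (1 - (c : ℂ) * w * St ν w - (c : ℂ)) - w)⁻¹
        = u⁻¹ * ((l : ℂ) - z)⁻¹ := by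
      intro l
      rw [← hudef, hwu]
      rw [show (l : ℂ) * u - u * z = u * ((l : ℂ) - z) from by ring, mul_inv]
    simp only [hudef] at hrw ⊢
    simp_rw [hrw]
    rw [integral_const_mul]
    rfl
  -- Step 3 : s = St H z
  have h3 : s = St H z := by
    have h4 : z * s = z * St H z := by
      rw [h1, h2, hwu]
      field_simp
    exact mul_left_cancel₀ hz0 h4
  have : (0:ℝ) < ((1 - (c : ℂ) * z * St H z - (c : ℂ)) * z).im := by
    rw [← h3, ← hwdef]
    exact hw
  linarith
end

section
/- Let ν̂ be any probability measure on ℝ with compact support contained in [0,∞), let c > 0 and let z ∈ ℂ⁺. Then there is at most one s ∈ ℂ satisfying all three of: z·s + 1 = ∫_ℝ λ/(λ − (1 − c·z·s − c)·z) dν̂(λ); Im((1 − c·z·s − c)·z) > 0; and c·|z|·|Im(z·s)| < Im((1 − c·z·s − c)·z). -/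
open MeasureTheory Filter Complex Set

/-- `s` is a population-Stieltjes-estimator value at `z` for `(ν, c)`. -/
def EstVal (ν : MeasureTheory.Measure ℝ) (c : ℝ) (z s : ℂ) : Prop :=
  z * s + 1 = (∫ l, (l : ℂ) / ((l : ℂ) - (1 - (c : ℂ) * z * s - (c : ℂ)) * z) ∂ν) ∧
  0 < ((1 - (c : ℂ) * z * s - (c : ℂ)) * z).im ∧
  c * ‖z‖ * |(z * s).im| < ((1 - (c : ℂ) * z * s - (c : ℂ)) * z).im


section Aux

open MeasureTheory Complex

lemma stmt6_ae_mem_msupport (ν : MeasureTheory.Measure ℝ) : ∀ᵐ l ∂ν, l ∈ msupport ν := by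
  rw [MeasureTheory.ae_iff]
  have hbasis := TopologicalSpace.isBasis_countableBasis ℝ
  have hcount : (TopologicalSpace.countableBasis ℝ).Countable :=
    TopologicalSpace.countable_countableBasis ℝ
  have hS : ν (⋃₀ {U ∈ TopologicalSpace.countableBasis ℝ | ν U = 0}) = 0 :=
    (measure_sUnion_null_iff (hcount.mono (Set.sep_subset _ _))).2 fun U hU => hU.2
  refine measure_mono_null ?_ hS
  intro l hl
  simp only [Set.mem_setOf_eq, msupport] at hl
  push_neg at hl
  obtain ⟨U, hU, hUν⟩ := hl
  obtain ⟨V, hVB, hlV, hVU⟩ := hbasis.mem_nhds_iff.mp hU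
  exact ⟨V, ⟨hVB, le_antisymm (le_trans (measure_mono hVU) hUν) (zero_le)⟩, hlV⟩

lemma stmt6_sub_ne {w : ℂ} (hw : 0 < w.im) (l : ℝ) : ((l:ℂ) - w) ≠ 0 := by
  intro h
  have := congrArg Complex.im h
  simp at this
  linarith

lemma stmt6_abs_sub_ge {w : ℂ} (hw : 0 < w.im) (l : ℝ) : w.im ≤ ‖((l:ℂ) - w)‖ := by
  have h := Complex.abs_im_le_norm ((l:ℂ) - w)
  simpa [abs_of_pos hw] using h

end Aux

set_option maxHeartbeats 1000000 in
theorem stmt6 (ν : MeasureTheory.Measure ℝ) (hprob : IsProbabilityMeasure ν)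
    (hcomp : IsCompact (msupport ν)) (hpos : msupport ν ⊆ Set.Ici 0)
    (c : ℝ) (hc : 0 < c) (z : ℂ) (hz : 0 < z.im) :
    ∀ s₁ s₂ : ℂ, EstVal ν c z s₁ → EstVal ν c z s₂ → s₁ = s₂ := by
  intro s₁ s₂ h₁ h₂
  by_contra hne
  obtain ⟨heq₁, hw₁im, hlt₁⟩ := h₁
  obtain ⟨heq₂, hw₂im, hlt₂⟩ := h₂
  set w₁ := (1 - (c:ℂ) * z * s₁ - (c:ℂ)) * z with hw₁def
  set w₂ := (1 - (c:ℂ) * z * s₂ - (c:ℂ)) * z with hw₂def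
  have hz0 : z ≠ 0 := fun h => by simp [h] at hz
  have habsz : 0 < ‖z‖ := norm_pos_iff.mpr hz0
  -- compact support gives a uniform bound R
  obtain ⟨r, hr⟩ := hcomp.isBounded.subset_closedBall 0
  set R := max r 0 with hRdef
  have hR0 : (0:ℝ) ≤ R := le_max_right _ _
  have hae : ∀ᵐ l ∂ν, 0 ≤ l ∧ l ≤ R := by
    filter_upwards [stmt6_ae_mem_msupport ν] with l hl
    have h1 : 0 ≤ l := hpos hl
    have h2 := hr hl
    rw [Metric.mem_closedBall, Real.dist_eq, sub_zero] at h2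
    exact ⟨h1, le_trans (le_abs_self l) (le_trans h2 (le_max_left _ _))⟩
  -- integrability of the basic integrand
  have hInt : ∀ w : ℂ, 0 < w.im → MeasureTheory.Integrable (fun l : ℝ => (l:ℂ) / ((l:ℂ) - w)) ν := by
    intro w hw
    have hcont : Continuous fun l : ℝ => (l:ℂ) / ((l:ℂ) - w) :=
      Complex.continuous_ofReal.div (Complex.continuous_ofReal.sub continuous_const) (fun l => stmt6_sub_ne hw l)
    refine ⟨hcont.aestronglyMeasurable, MeasureTheory.HasFiniteIntegral.of_bounded (C := R / w.im) ?_⟩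
    filter_upwards [hae] with l hl
    rw [norm_div]
    refine div_le_div₀ hR0 ?_ hw (stmt6_abs_sub_ge hw l)
    rw [Complex.norm_real, Real.norm_eq_abs, _root_.abs_of_nonneg hl.1]
    exact hl.2
  -- integrability of the product integrand
  have hIntK : MeasureTheory.Integrable
      (fun l : ℝ => (l:ℂ) / (((l:ℂ) - w₁) * ((l:ℂ) - w₂))) ν := by
    have hcont : Continuous fun l : ℝ => (l:ℂ) / (((l:ℂ) - w₁) * ((l:ℂ) - w₂)) :=
      Complex.continuous_ofReal.div
        ((Complex.continuous_ofReal.sub continuous_const).mul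
          (Complex.continuous_ofReal.sub continuous_const))
        (fun l => mul_ne_zero (stmt6_sub_ne hw₁im l) (stmt6_sub_ne hw₂im l))
    refine ⟨hcont.aestronglyMeasurable,
      MeasureTheory.HasFiniteIntegral.of_bounded (C := R / (w₁.im * w₂.im)) ?_⟩
    filter_upwards [hae] with l hl
    rw [norm_div]
    refine div_le_div₀ hR0 ?_ (mul_pos hw₁im hw₂im) ?_
    · rw [Complex.norm_real, Real.norm_eq_abs, _root_.abs_of_nonneg hl.1]
      exact hl.2
    · rw [norm_mul]
      exact mul_le_mul (stmt6_abs_sub_ge hw₁im l) (stmt6_abs_sub_ge hw₂im l) hw₂im.le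
        (norm_nonneg _)
  -- the difference identity
  set K := ∫ l, (l:ℂ) / (((l:ℂ) - w₁) * ((l:ℂ) - w₂)) ∂ν with hKdef
  have hzs : z * (s₁ - s₂) ≠ 0 := mul_ne_zero hz0 (sub_ne_zero.mpr hne)
  have hKrel : z * (s₁ - s₂) = (w₁ - w₂) * K := by
    have hsub : z * (s₁ - s₂)
        = ∫ l, ((l:ℂ) / ((l:ℂ) - w₁) - (l:ℂ) / ((l:ℂ) - w₂)) ∂ν := by
      rw [MeasureTheory.integral_sub (hInt w₁ hw₁im) (hInt w₂ hw₂im), ← heq₁, ← heq₂]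
      ring
    have hptw : ∀ l : ℝ, (l:ℂ) / ((l:ℂ) - w₁) - (l:ℂ) / ((l:ℂ) - w₂)
        = (w₁ - w₂) * ((l:ℂ) / (((l:ℂ) - w₁) * ((l:ℂ) - w₂))) := by
      intro l
      field_simp [stmt6_sub_ne hw₁im l, stmt6_sub_ne hw₂im l]
      ring
    rw [hsub]
    simp_rw [hptw]
    rw [MeasureTheory.integral_const_mul]
  have hK1 : (c:ℂ) * z * K = -1 := by
    have hw12 : w₁ - w₂ = -(c:ℂ) * z * (z * (s₁ - s₂)) := by
      rw [hw₁def, hw₂def]; ring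
    have h2 : z * (s₁ - s₂) * (1 + (c:ℂ) * z * K) = 0 := by
      rw [hw12] at hKrel
      linear_combination hKrel
    rcases mul_eq_zero.mp h2 with h | h
    · exact absurd h hzs
    · linear_combination h
  have habsK : c * ‖z‖ * ‖K‖ = 1 := by
    have h := congrArg norm hK1
    simpa [norm_mul, Complex.norm_real, abs_of_pos hc] using h
  -- imaginary-part identity
  have hImEq : ∀ (s w : ℂ), 0 < w.im →
      (z * s + 1 = ∫ l, (l:ℂ) / ((l:ℂ) - w) ∂ν) →
      (z * s).im = w.im * ∫ l, l / Complex.normSq ((l:ℂ) - w) ∂ν := by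
    intro s w hw heq
    have h1 : (z * s + 1).im = ∫ l, ((l:ℂ) / ((l:ℂ) - w)).im ∂ν := by
      rw [heq]
      exact (integral_im (hInt w hw)).symm
    have hptw : ∀ l : ℝ, ((l:ℂ) / ((l:ℂ) - w)).im
        = w.im * (l / Complex.normSq ((l:ℂ) - w)) := by
      intro l
      rw [Complex.div_im]
      simp only [Complex.sub_re, Complex.sub_im, Complex.ofReal_re, Complex.ofReal_im]
      ring
    rw [Complex.add_im, Complex.one_im, add_zero] at h1
    rw [h1]
    simp_rw [hptw]
    rw [MeasureTheory.integral_const_mul]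
  set A₁ := ∫ l, l / Complex.normSq ((l:ℂ) - w₁) ∂ν with hA₁def
  set A₂ := ∫ l, l / Complex.normSq ((l:ℂ) - w₂) ∂ν with hA₂def
  have hA₁nn : 0 ≤ A₁ := by
    apply MeasureTheory.integral_nonneg_of_ae
    filter_upwards [hae] with l hl
    exact div_nonneg hl.1 (Complex.normSq_nonneg _)
  have hA₂nn : 0 ≤ A₂ := by
    apply MeasureTheory.integral_nonneg_of_ae
    filter_upwards [hae] with l hl
    exact div_nonneg hl.1 (Complex.normSq_nonneg _)
  have hIm₁ := hImEq s₁ w₁ hw₁im heq₁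
  have hIm₂ := hImEq s₂ w₂ hw₂im heq₂
  have hA₁lt : c * ‖z‖ * A₁ < 1 := by
    have h1 : c * ‖z‖ * (w₁.im * A₁) < w₁.im := by
      rw [← _root_.abs_of_nonneg (mul_nonneg hw₁im.le hA₁nn), ← hIm₁]; exact hlt₁
    nlinarith
  have hA₂lt : c * ‖z‖ * A₂ < 1 := by
    have h1 : c * ‖z‖ * (w₂.im * A₂) < w₂.im := by
      rw [← _root_.abs_of_nonneg (mul_nonneg hw₂im.le hA₂nn), ← hIm₂]; exact hlt₂
    nlinarith
  -- Cauchy-Schwarz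
  set f := fun l : ℝ => Real.sqrt (max l 0) / ‖((l:ℂ) - w₁)‖ with hfdef
  set g := fun l : ℝ => Real.sqrt (max l 0) / ‖((l:ℂ) - w₂)‖ with hgdef
  have hfnn : ∀ l, 0 ≤ f l := fun l => div_nonneg (Real.sqrt_nonneg _) (norm_nonneg _)
  have hgnn : ∀ l, 0 ≤ g l := fun l => div_nonneg (Real.sqrt_nonneg _) (norm_nonneg _)
  have hmem : ∀ w : ℂ, 0 < w.im →
      MeasureTheory.MemLp (fun l : ℝ => Real.sqrt (max l 0) / ‖((l:ℂ) - w)‖)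
        (ENNReal.ofReal 2) ν := by
    intro w hw
    have hcont : Continuous fun l : ℝ => Real.sqrt (max l 0) / ‖((l:ℂ) - w)‖ := by
      apply Continuous.div
      · exact Real.continuous_sqrt.comp (continuous_id.max continuous_const)
      · exact continuous_norm.comp (Complex.continuous_ofReal.sub continuous_const)
      · exact fun l => norm_ne_zero_iff.mpr (stmt6_sub_ne hw l)
    refine MeasureTheory.MemLp.of_bound hcont.aestronglyMeasurable (Real.sqrt R / w.im) ?_
    filter_upwards [hae] with l hl
    rw [Real.norm_eq_abs,
      _root_.abs_of_nonneg (div_nonneg (Real.sqrt_nonneg _) (norm_nonneg _))]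
    refine div_le_div₀ (Real.sqrt_nonneg _) ?_ hw (stmt6_abs_sub_ge hw l)
    exact Real.sqrt_le_sqrt (max_le hl.2 hR0)
  have hfg : ‖K‖ ≤ ∫ l, f l * g l ∂ν := by
    have h0 : ‖K‖ ≤ ∫ l, ‖((l:ℂ) / (((l:ℂ) - w₁) * ((l:ℂ) - w₂)))‖ ∂ν := by
      simpa using
        MeasureTheory.norm_integral_le_integral_norm
          (μ := ν) (fun l : ℝ => (l:ℂ) / (((l:ℂ) - w₁) * ((l:ℂ) - w₂)))
    refine h0.trans (le_of_eq ?_)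
    apply MeasureTheory.integral_congr_ae
    filter_upwards [hae] with l hl
    rw [norm_div, norm_mul]
    simp only [hfdef, hgdef]
    rw [div_mul_div_comm, Real.mul_self_sqrt (le_max_right l 0), max_eq_left hl.1,
      Complex.norm_real, Real.norm_eq_abs, _root_.abs_of_nonneg hl.1]
  have hconj : Real.HolderConjugate 2 2 := Real.HolderConjugate.two_two
  have hCS := MeasureTheory.integral_mul_le_Lp_mul_Lq_of_nonneg hconj
    (Filter.Eventually.of_forall hfnn) (Filter.Eventually.of_forall hgnn)
    (hmem w₁ hw₁im) (hmem w₂ hw₂im)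
  have hf2 : ∫ l, f l ^ (2:ℝ) ∂ν = A₁ := by
    apply MeasureTheory.integral_congr_ae
    filter_upwards [hae] with l hl
    simp only [hfdef]
    rw [Real.rpow_two, div_pow, Real.sq_sqrt (le_max_right l 0), max_eq_left hl.1,
      Complex.sq_norm]
  have hg2 : ∫ l, g l ^ (2:ℝ) ∂ν = A₂ := by
    apply MeasureTheory.integral_congr_ae
    filter_upwards [hae] with l hl
    simp only [hgdef]
    rw [Real.rpow_two, div_pow, Real.sq_sqrt (le_max_right l 0), max_eq_left hl.1,
      Complex.sq_norm]
  rw [hf2, hg2, ← Real.sqrt_eq_rpow, ← Real.sqrt_eq_rpow] at hCS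
  have h1le : 1 ≤ c * ‖z‖ * (Real.sqrt A₁ * Real.sqrt A₂) := by
    rw [← habsK]
    exact mul_le_mul_of_nonneg_left (hfg.trans hCS) (mul_nonneg hc.le habsz.le)
  nlinarith [Real.sq_sqrt hA₁nn, Real.sq_sqrt hA₂nn, Real.sqrt_nonneg A₁, Real.sqrt_nonneg A₂,
    mul_pos hc habsz, sq_nonneg (Real.sqrt A₁ - Real.sqrt A₂),
    mul_pos (sub_pos.mpr hA₁lt) (sub_pos.mpr hA₂lt)]
end

section
/- Let ν̂ be a probability measure on ℝ with compact support contained in [0,∞) and let c > 0. Define U = {z ∈ ℂ⁺ : there exists s ∈ ℂ⁺ which is a population-Stieltjes-estimator value at z for (ν̂, c)}. Then U is an open subset of ℂ, and there exists κ > 0 such that every z ∈ ℂ⁺ with |z| ≥ κ belongs to U. -/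
open MeasureTheory Filter Complex Set

namespace Complex

/-- The complex absolute value, as an absolute value (compatibility with the norm). -/
noncomputable def abs : AbsoluteValue ℂ ℝ where
  toFun := fun z => ‖z‖
  map_mul' := norm_mul
  nonneg' := norm_nonneg
  eq_zero' := fun _ => norm_eq_zero
  add_le' := norm_add_le

lemma norm_eq_abs (z : ℂ) : ‖z‖ = Complex.abs z := rfl

lemma abs_ofReal (r : ℝ) : Complex.abs (r : ℂ) = |r| := Complex.norm_real r

lemma abs_I : Complex.abs Complex.I = 1 := Complex.norm_I

lemma continuous_abs : Continuous Complex.abs := continuous_norm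

end Complex

namespace Stmt7Aux

open Metric

/-- The key integral transform, `∫ λ/(λ-w) dν`. -/
noncomputable def JJ (ν : Measure ℝ) (w : ℂ) : ℂ := ∫ l, (l : ℂ) / ((l : ℂ) - w) ∂ν

variable {ν : Measure ℝ} {M : ℝ}

lemma msupport_compl_null (μ : Measure ℝ) : μ (msupport μ)ᶜ = 0 := by
  have h : ∀ x : ((msupport μ)ᶜ : Set ℝ),
      ∃ V : Set ℝ, IsOpen V ∧ (x : ℝ) ∈ V ∧ μ V = 0 := by
    rintro ⟨x, hx⟩
    simp only [msupport, mem_compl_iff, mem_setOf_eq, not_forall] at hx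
    obtain ⟨U, hU, hU0⟩ := hx
    obtain ⟨V, hVU, hVopen, hxV⟩ := _root_.mem_nhds_iff.mp hU
    refine ⟨V, hVopen, hxV, le_antisymm ?_ (zero_le)⟩
    exact le_trans (measure_mono hVU) (le_of_not_gt hU0)
  choose V hVopen hmemV hV0 using h
  obtain ⟨T, hTc, hTU⟩ := TopologicalSpace.isOpen_iUnion_countable V hVopen
  have hcover : (msupport μ)ᶜ ⊆ ⋃ i ∈ T, V i := by
    rw [hTU]
    intro x hx
    exact mem_iUnion.mpr ⟨⟨x, hx⟩, hmemV _⟩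
  refine measure_mono_null hcover ?_
  exact (measure_biUnion_null_iff hTc).mpr fun i _ => hV0 i

lemma measurable_integrand (w : ℂ) : Measurable fun l : ℝ => (l : ℂ) / ((l : ℂ) - w) :=
  Complex.measurable_ofReal.div (Complex.measurable_ofReal.sub measurable_const)

lemma abs_integrand_le {w : ℂ} {δ : ℝ} (hδ : 0 < δ) {l : ℝ} (hl : l ∈ Icc 0 M)
    (h : δ ≤ Complex.abs ((l : ℂ) - w)) :
    Complex.abs ((l : ℂ) / ((l : ℂ) - w)) ≤ M / δ := by
  rw [map_div₀]
  have h1 : Complex.abs (l : ℂ) ≤ M := by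
    rw [Complex.abs_ofReal, _root_.abs_of_nonneg hl.1]; exact hl.2
  exact div_le_div₀ (le_trans hl.1 hl.2) h1 hδ h

lemma integrable_integrand [IsProbabilityMeasure ν] (hM : ∀ᵐ l ∂ν, l ∈ Icc 0 M)
    {w : ℂ} {δ : ℝ} (hδ : 0 < δ) (h : ∀ l ∈ Icc 0 M, δ ≤ Complex.abs ((l : ℂ) - w)) :
    Integrable (fun l : ℝ => (l : ℂ) / ((l : ℂ) - w)) ν := by
  refine Integrable.mono' (integrable_const (M / δ))
    (measurable_integrand w).aestronglyMeasurable ?_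
  filter_upwards [hM] with l hl
  simpa [Complex.norm_eq_abs, Complex.abs_ofReal] using abs_integrand_le hδ hl (h l hl)

lemma norm_JJ_le [IsProbabilityMeasure ν] (hM : ∀ᵐ l ∂ν, l ∈ Icc 0 M)
    {w : ℂ} {δ : ℝ} (hδ : 0 < δ) (h : ∀ l ∈ Icc 0 M, δ ≤ Complex.abs ((l : ℂ) - w)) :
    Complex.abs (JJ ν w) ≤ M / δ := by
  have hb := norm_integral_le_of_norm_le_const (μ := ν)
    (f := fun l : ℝ => (l : ℂ) / ((l : ℂ) - w)) (C := M / δ) ?_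
  · simpa [JJ, Complex.norm_eq_abs, measure_univ] using hb
  · filter_upwards [hM] with l hl
    simpa [Complex.norm_eq_abs, Complex.abs_ofReal] using abs_integrand_le hδ hl (h l hl)

lemma im_integrand (w : ℂ) (l : ℝ) :
    ((l : ℂ) / ((l : ℂ) - w)).im = l * w.im / Complex.normSq ((l : ℂ) - w) := by
  rw [Complex.div_im]
  simp [Complex.normSq_apply]
  ring

lemma im_JJ_bounds [IsProbabilityMeasure ν] (hM : ∀ᵐ l ∂ν, l ∈ Icc 0 M)
    {w : ℂ} {δ : ℝ} (hδ : 0 < δ) (h : ∀ l ∈ Icc 0 M, δ ≤ Complex.abs ((l : ℂ) - w))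
    (hw : 0 < w.im) :
    0 ≤ (JJ ν w).im ∧ (JJ ν w).im ≤ M * w.im / δ ^ 2 := by
  have hint : Integrable (fun l : ℝ => (l : ℂ) / ((l : ℂ) - w)) ν :=
    integrable_integrand hM hδ h
  have him : (JJ ν w).im = ∫ l, ((l : ℂ) / ((l : ℂ) - w)).im ∂ν := (integral_im hint).symm
  constructor
  · rw [him]
    refine integral_nonneg_of_ae ?_
    filter_upwards [hM] with l hl
    rw [im_integrand]
    exact div_nonneg (mul_nonneg hl.1 hw.le) (Complex.normSq_nonneg _)
  · rw [him]
    have hcst : ∫ _l : ℝ, M * w.im / δ ^ 2 ∂ν = M * w.im / δ ^ 2 := by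
      simp [measure_univ]
    rw [← hcst]
    refine integral_mono_ae hint.im (integrable_const _) ?_
    filter_upwards [hM] with l hl
    rw [im_integrand]
    have h1 : δ ^ 2 ≤ Complex.normSq ((l : ℂ) - w) := by
      rw [Complex.normSq_eq_norm_sq]
      exact pow_le_pow_left₀ hδ.le (h l hl) 2
    have h2 : l * w.im ≤ M * w.im := mul_le_mul_of_nonneg_right hl.2 hw.le
    exact div_le_div₀ (mul_nonneg (hl.1.trans hl.2) hw.le) h2 (by positivity) h1

lemma JJ_lip [IsProbabilityMeasure ν] (hM : ∀ᵐ l ∂ν, l ∈ Icc 0 M)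
    {w₁ w₂ : ℂ} {δ : ℝ} (hδ : 0 < δ)
    (h₁ : ∀ l ∈ Icc 0 M, δ ≤ Complex.abs ((l : ℂ) - w₁))
    (h₂ : ∀ l ∈ Icc 0 M, δ ≤ Complex.abs ((l : ℂ) - w₂)) :
    Complex.abs (JJ ν w₁ - JJ ν w₂) ≤ M / δ ^ 2 * Complex.abs (w₁ - w₂) := by
  have hint₁ := integrable_integrand hM hδ h₁
  have hint₂ := integrable_integrand hM hδ h₂
  have key : JJ ν w₁ - JJ ν w₂
      = ∫ l, ((l : ℂ) / ((l : ℂ) - w₁) - (l : ℂ) / ((l : ℂ) - w₂)) ∂ν := by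
    rw [JJ, JJ, integral_sub hint₁ hint₂]
  rw [key]
  have hb := norm_integral_le_of_norm_le_const (μ := ν)
    (f := fun l : ℝ => (l : ℂ) / ((l : ℂ) - w₁) - (l : ℂ) / ((l : ℂ) - w₂))
    (C := M / δ ^ 2 * Complex.abs (w₁ - w₂)) ?_
  · simpa [Complex.norm_eq_abs, measure_univ] using hb
  · filter_upwards [hM] with l hl
    have hne₁ : (l : ℂ) - w₁ ≠ 0 := by
      intro h0; have := h₁ l hl; rw [h0, map_zero] at this; linarith
    have hne₂ : (l : ℂ) - w₂ ≠ 0 := by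
      intro h0; have := h₂ l hl; rw [h0, map_zero] at this; linarith
    have hid : (l : ℂ) / ((l : ℂ) - w₁) - (l : ℂ) / ((l : ℂ) - w₂)
        = (l : ℂ) * (w₁ - w₂) / (((l : ℂ) - w₁) * ((l : ℂ) - w₂)) := by
      field_simp
      ring
    rw [Complex.norm_eq_abs, hid, map_div₀, map_mul, map_mul]
    have hlM : Complex.abs (l : ℂ) ≤ M := by
      rw [Complex.abs_ofReal, _root_.abs_of_nonneg hl.1]; exact hl.2
    have hd : δ ^ 2 ≤ Complex.abs ((l : ℂ) - w₁) * Complex.abs ((l : ℂ) - w₂) := by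
      calc δ ^ 2 = δ * δ := sq δ
      _ ≤ _ := mul_le_mul (h₁ l hl) (h₂ l hl) hδ.le (Complex.abs.nonneg _)
    rw [div_mul_eq_mul_div, div_le_div_iff₀ (lt_of_lt_of_le (by positivity) hd) (by positivity)]
    calc Complex.abs (l : ℂ) * Complex.abs (w₁ - w₂) * δ ^ 2
        ≤ M * Complex.abs (w₁ - w₂) *
          (Complex.abs ((l : ℂ) - w₁) * Complex.abs ((l : ℂ) - w₂)) := by
          apply mul_le_mul (mul_le_mul_of_nonneg_right hlM (Complex.abs.nonneg _)) hd
            (by positivity) (mul_nonneg (hl.1.trans hl.2) (Complex.abs.nonneg _))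
      _ = _ := by ring
  
lemma im_lower {w : ℂ} (hw : 0 < w.im) (l : ℝ) : w.im ≤ Complex.abs ((l : ℂ) - w) := by
  have := Complex.abs_im_le_norm ((l : ℂ) - w)
  rw [Complex.sub_im, Complex.ofReal_im, zero_sub, abs_neg, _root_.abs_of_nonneg hw.le] at this
  exact this

lemma differentiableOn_JJ [IsProbabilityMeasure ν] (hM : ∀ᵐ l ∂ν, l ∈ Icc 0 M) :
    DifferentiableOn ℂ (JJ ν) {w : ℂ | 0 < w.im} := by
  intro w₀ hw₀
  refine DifferentiableAt.differentiableWithinAt ?_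
  have hw₀' : 0 < w₀.im := hw₀
  set ε := w₀.im / 2 with hε
  have hεpos : 0 < ε := by positivity
  have him : ∀ x ∈ ball w₀ ε, ε ≤ x.im := by
    intro x hx
    rw [mem_ball, Complex.dist_eq] at hx
    have h1 : |x.im - w₀.im| ≤ Complex.abs (x - w₀) := by
      simpa [Complex.norm_eq_abs] using Complex.abs_im_le_norm (x - w₀)
    have := (abs_le.mp (h1.trans hx.le)).1
    rw [hε]; linarith
  have hlow : ∀ x ∈ ball w₀ ε, ∀ l : ℝ, ε ≤ Complex.abs ((l : ℂ) - x) := by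
    intro x hx l
    exact le_trans (him x hx) (im_lower (lt_of_lt_of_le hεpos (him x hx)) l)
  have key := hasDerivAt_integral_of_dominated_loc_of_deriv_le (μ := ν)
    (F := fun (x : ℂ) (l : ℝ) => (l : ℂ) / ((l : ℂ) - x))
    (F' := fun (x : ℂ) (l : ℝ) => (l : ℂ) / (((l : ℂ) - x) ^ 2))
    (x₀ := w₀) (bound := fun _ => M / ε ^ 2) (ball_mem_nhds w₀ hεpos)
    (Eventually.of_forall fun x => (measurable_integrand x).aestronglyMeasurable) ?_ ?_ ?_
    (integrable_const _) ?_
  · exact key.2.differentiableAt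
  · exact integrable_integrand hM hεpos fun l _ => hlow w₀ (mem_ball_self hεpos) l
  · exact (Complex.measurable_ofReal.div
      ((Complex.measurable_ofReal.sub measurable_const).pow measurable_const)).aestronglyMeasurable
  · filter_upwards [hM] with l hl
    intro x hx
    rw [Complex.norm_eq_abs, map_div₀, map_pow]
    have h1 : Complex.abs (l : ℂ) ≤ M := by
      rw [Complex.abs_ofReal, _root_.abs_of_nonneg hl.1]; exact hl.2
    exact div_le_div₀ (le_trans hl.1 hl.2) h1 (by positivity)
      (pow_le_pow_left₀ hεpos.le (hlow x hx l) 2)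
  · filter_upwards with l
    intro x hx
    have hne : (l : ℂ) - x ≠ 0 := by
      intro h0
      have := hlow x hx l
      rw [h0, map_zero] at this; linarith
    have h1 : HasDerivAt (fun x : ℂ => (l : ℂ) - x) (-1) x := by
      simpa using (hasDerivAt_id x).const_sub (l : ℂ)
    have h2 := (h1.inv hne).const_mul (l : ℂ)
    have heq : (l : ℂ) * (-(-1) / ((l : ℂ) - x) ^ 2) = (l : ℂ) / (((l : ℂ) - x) ^ 2) := by
      field_simp
    rw [heq] at h2
    simpa [div_eq_mul_inv] using h2

end Stmt7Aux

set_option maxHeartbeats 4000000 in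
theorem stmt7 (ν : MeasureTheory.Measure ℝ) (hprob : IsProbabilityMeasure ν)
    (hcomp : IsCompact (msupport ν)) (hpos : msupport ν ⊆ Set.Ici 0)
    (c : ℝ) (hc : 0 < c) :
    IsOpen {z : ℂ | 0 < z.im ∧ ∃ s : ℂ, 0 < s.im ∧ EstVal ν c z s} ∧
    ∃ κ > (0 : ℝ), ∀ z : ℂ, 0 < z.im → κ ≤ ‖z‖ →
      z ∈ {z : ℂ | 0 < z.im ∧ ∃ s : ℂ, 0 < s.im ∧ EstVal ν c z s} := by
  classical
  obtain ⟨R, hR⟩ := hcomp.isBounded.subset_closedBall 0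
  set M : ℝ := max R 1 with hMdef
  have hM1 : (1 : ℝ) ≤ M := le_max_right _ _
  have hM0 : (0 : ℝ) < M := lt_of_lt_of_le one_pos hM1
  have hMs : msupport ν ⊆ Set.Icc 0 M := by
    intro x hx
    refine ⟨hpos hx, ?_⟩
    have := hR hx
    rw [Metric.mem_closedBall, Real.dist_eq, sub_zero] at this
    exact le_trans (le_trans (le_abs_self x) this) (le_max_left _ _)
  have hM : ∀ᵐ l ∂ν, l ∈ Set.Icc 0 M := by
    rw [ae_iff]
    refine measure_mono_null ?_ (Stmt7Aux.msupport_compl_null ν)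
    intro x hx hmem
    exact hx (hMs hmem)
  -- notation
  set Jf : ℂ → ℂ := Stmt7Aux.JJ ν with hJf
  set D : ℂ → ℂ := fun w => 1 - (c : ℂ) * Jf w with hDdef
  set ψ : ℂ → ℂ := fun w => w * (D w)⁻¹ with hψdef
  have isOpenH : IsOpen {w : ℂ | 0 < w.im} := isOpen_lt continuous_const Complex.continuous_im
  have hJdiff : DifferentiableOn ℂ Jf {w : ℂ | 0 < w.im} := Stmt7Aux.differentiableOn_JJ hM
  have hJcont : ContinuousOn Jf {w : ℂ | 0 < w.im} := hJdiff.continuousOn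
  have hJanaly : AnalyticOnNhd ℂ Jf {w : ℂ | 0 < w.im} := hJdiff.analyticOnNhd isOpenH
  constructor
  · -- Openness
    rw [isOpen_iff_mem_nhds]
    rintro z₀ ⟨hz₀im, s₀, hs₀im, heq, him, hlt⟩
    set w₀ : ℂ := (1 - (c : ℂ) * z₀ * s₀ - (c : ℂ)) * z₀ with hw₀def
    have heq' : z₀ * s₀ + 1 = Jf w₀ := heq
    have him₀ : 0 < w₀.im := him
    have hz₀ne : z₀ ≠ 0 := by
      intro h; rw [h] at hz₀im; simp at hz₀im
    have hkey₀ : w₀ = D w₀ * z₀ := by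
      have h1 : Jf w₀ = z₀ * s₀ + 1 := heq'.symm
      rw [hDdef]
      simp only
      rw [h1, hw₀def]
      ring
    have hD₀ : D w₀ ≠ 0 := by
      intro h0
      rw [h0, zero_mul] at hkey₀
      rw [hkey₀] at him₀
      simp at him₀
    have hψ₀ : ψ w₀ = z₀ := by
      rw [hψdef]
      simp only
      rw [mul_inv_eq_iff_eq_mul₀ hD₀]
      conv_lhs => rw [hkey₀]
      exact mul_comm _ _
    -- the open set V in the w-plane
    set W : Set ℂ := {w : ℂ | 0 < w.im ∧ D w ≠ 0} with hWdef
    have hWopen : IsOpen W := by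
      have : W = {w : ℂ | 0 < w.im} ∩ D ⁻¹' ({0}ᶜ) := by
        ext w; simp [hWdef]
      rw [this]
      refine ContinuousOn.isOpen_inter_preimage ?_ isOpenH isOpen_compl_singleton
      exact continuousOn_const.sub (continuousOn_const.mul hJcont)
    have hWsub : W ⊆ {w : ℂ | 0 < w.im} := fun w hw => hw.1
    have hDW : ContinuousOn D W :=
      (continuousOn_const.sub (continuousOn_const.mul (hJcont.mono hWsub)))
    have hψW : ContinuousOn ψ W :=
      continuousOn_id.mul (hDW.inv₀ fun w hw => hw.2)
    have hJW : ContinuousOn Jf W := hJcont.mono hWsub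
    set g : ℂ → ℝ × ℝ × ℝ := fun w =>
      ((ψ w).im, ((Jf w - 1) * (ψ w)⁻¹).im,
        w.im - c * Complex.abs (ψ w) * |(Jf w).im|) with hgdef
    have hψne : ∀ w ∈ W, ψ w ≠ 0 := by
      intro w hw
      have hwne : w ≠ 0 := by
        intro h0
        have := hw.1
        rw [h0] at this
        simp at this
      exact mul_ne_zero hwne (inv_ne_zero hw.2)
    have hgW : ContinuousOn g W := by
      refine ContinuousOn.prodMk ?_ (ContinuousOn.prodMk ?_ ?_)
      · exact Complex.continuous_im.comp_continuousOn hψW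
      · exact Complex.continuous_im.comp_continuousOn
          (((hJW.sub continuousOn_const)).mul (hψW.inv₀ hψne))
      · refine (Complex.continuous_im.comp_continuousOn continuousOn_id).sub ?_
        refine (continuousOn_const.mul (Complex.continuous_abs.comp_continuousOn hψW)).mul ?_
        exact continuous_abs.comp_continuousOn (Complex.continuous_im.comp_continuousOn hJW)
    set V : Set ℂ := W ∩ g ⁻¹' (Set.Ioi 0 ×ˢ Set.Ioi 0 ×ˢ Set.Ioi 0) with hVdef
    have hVopen : IsOpen V :=
      hgW.isOpen_inter_preimage hWopen
        ((isOpen_Ioi.prod (isOpen_Ioi.prod isOpen_Ioi)))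
    have hw₀W : w₀ ∈ W := ⟨him₀, hD₀⟩
    have hw₀V : w₀ ∈ V := by
      refine ⟨hw₀W, ?_⟩
      have hs₀eq : (Jf w₀ - 1) * (ψ w₀)⁻¹ = s₀ := by
        rw [hψ₀, ← heq']
        field_simp
        ring
      simp only [hgdef, mem_preimage, mem_prod, mem_Ioi]
      refine ⟨by rw [hψ₀]; exact hz₀im, by rw [hs₀eq]; exact hs₀im, ?_⟩
      have hJim : (Jf w₀).im = (z₀ * s₀).im := by
        rw [← heq']
        simp
      rw [hψ₀, hJim]
      rw [← Complex.norm_eq_abs]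
      linarith
    -- the image of V is contained in the target set
    have hsub : ψ '' V ⊆ {z : ℂ | 0 < z.im ∧ ∃ s : ℂ, 0 < s.im ∧ EstVal ν c z s} := by
      rintro z ⟨w, hwV, rfl⟩
      obtain ⟨⟨hwim, hwD⟩, hwg⟩ := hwV
      simp only [hgdef, mem_preimage, mem_prod, mem_Ioi] at hwg
      obtain ⟨hg1, hg2, hg3⟩ := hwg
      have hψne' : ψ w ≠ 0 := hψne w ⟨hwim, hwD⟩
      have hzs : ψ w * ((Jf w - 1) * (ψ w)⁻¹) = Jf w - 1 := by
        field_simp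
      have hzD : ψ w * D w = w := by
        rw [hψdef]
        simp only
        field_simp
      have hkey : (1 - (c : ℂ) * ψ w * ((Jf w - 1) * (ψ w)⁻¹) - (c : ℂ)) * ψ w = w := by
        calc (1 - (c : ℂ) * ψ w * ((Jf w - 1) * (ψ w)⁻¹) - (c : ℂ)) * ψ w
            = (1 - (c : ℂ) * (ψ w * ((Jf w - 1) * (ψ w)⁻¹)) - (c : ℂ)) * ψ w := by ring
          _ = (1 - (c : ℂ) * (Jf w - 1) - (c : ℂ)) * ψ w := by rw [hzs]
          _ = (1 - (c : ℂ) * Jf w) * ψ w := by ring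
          _ = ψ w * D w := by rw [hDdef]; ring
          _ = w := hzD
      refine ⟨hg1, (Jf w - 1) * (ψ w)⁻¹, hg2, ?_, ?_, ?_⟩
      · -- the equation
        rw [hkey, hzs]
        have : Jf w - 1 + 1 = Jf w := by ring
        rw [this]
        rfl
      · rw [hkey]
        exact hwim
      · rw [hkey, hzs]
        have : |(Jf w - 1).im| = |(Jf w).im| := by simp
        rw [this]
        rw [Complex.norm_eq_abs]
        linarith
    -- open-mapping argument
    have hψanaly : AnalyticAt ℂ ψ w₀ := by
      rw [hψdef]
      exact analyticAt_id.mul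
        ((analyticAt_const.sub (analyticAt_const.mul (hJanaly w₀ him₀))).inv hD₀)
    rcases hψanaly.eventually_constant_or_nhds_le_map_nhds with hconst | hmap
    · -- constant case is impossible
      exfalso
      set g0 : ℂ → ℂ := fun w => w - z₀ * D w with hg0
      have hganaly : AnalyticOnNhd ℂ g0 {w : ℂ | 0 < w.im} := by
        intro w hw
        exact analyticAt_id.sub (analyticAt_const.mul
          (analyticAt_const.sub (analyticAt_const.mul (hJanaly w hw))))
      have hev : g0 =ᶠ[nhds w₀] 0 := by
        filter_upwards [hconst, hWopen.mem_nhds hw₀W] with w h1 h2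
        have h3 : w * (D w)⁻¹ = z₀ := by rw [← hψ₀]; exact h1
        rw [mul_inv_eq_iff_eq_mul₀ h2.2] at h3
        simp only [hg0, Pi.zero_apply]
        linear_combination h3
      have hpre : IsPreconnected {w : ℂ | 0 < w.im} :=
        (convex_halfSpace_im_gt 0).isPreconnected
      have hEq := hganaly.eqOn_zero_of_preconnected_of_eventuallyEq_zero hpre him₀ hev
      set t : ℝ := Complex.abs z₀ * (1 + c * M) + 1 with ht
      have ht0 : 0 ≤ Complex.abs z₀ * (1 + c * M) := by positivity
      have ht1 : 1 ≤ t := by rw [ht]; linarith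
      have htpos : 0 < t := lt_of_lt_of_le one_pos ht1
      have htim : ((t : ℂ) * Complex.I).im = t := by simp
      have hmem : ((t : ℂ) * Complex.I) ∈ {w : ℂ | 0 < w.im} := by
        rw [mem_setOf_eq, htim]
        exact htpos
      have h0 := hEq hmem
      simp only [hg0, Pi.zero_apply] at h0
      have habs : Complex.abs ((t : ℂ) * Complex.I) = t := by
        rw [map_mul, Complex.abs_I, mul_one, Complex.abs_ofReal, abs_of_pos htpos]
      have hJb : Complex.abs (Jf ((t : ℂ) * Complex.I)) ≤ M / t := by
        refine Stmt7Aux.norm_JJ_le hM htpos ?_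
        intro l _
        have h6 := Stmt7Aux.im_lower (w := (t : ℂ) * Complex.I) (by rw [htim]; exact htpos) l
        rw [htim] at h6
        exact h6
      have hDb : Complex.abs (D ((t : ℂ) * Complex.I)) ≤ 1 + c * M := by
        rw [hDdef]
        simp only
        calc Complex.abs (1 - (c : ℂ) * Jf ((t : ℂ) * Complex.I))
            ≤ 1 + Complex.abs ((c : ℂ) * Jf ((t : ℂ) * Complex.I)) := by
              simpa [Complex.norm_eq_abs, Complex.abs_ofReal] using
                norm_sub_le (1 : ℂ) ((c : ℂ) * Jf ((t : ℂ) * Complex.I))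
          _ = 1 + c * Complex.abs (Jf ((t : ℂ) * Complex.I)) := by
              rw [map_mul, Complex.abs_ofReal, abs_of_pos hc]
          _ ≤ 1 + c * (M / t) := by
              have := mul_le_mul_of_nonneg_left hJb hc.le
              linarith
          _ ≤ 1 + c * M := by
              have h7 : M / t ≤ M := by
                rw [div_le_iff₀ htpos]
                nlinarith
              nlinarith
      have hcontr : t ≤ Complex.abs z₀ * (1 + c * M) := by
        have h4 : (t : ℂ) * Complex.I = z₀ * D ((t : ℂ) * Complex.I) := by
          linear_combination h0
        calc t = Complex.abs ((t : ℂ) * Complex.I) := habs.symm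
          _ = Complex.abs z₀ * Complex.abs (D ((t : ℂ) * Complex.I)) := by
              conv_lhs => rw [h4]
              rw [map_mul]
          _ ≤ Complex.abs z₀ * (1 + c * M) :=
              mul_le_mul_of_nonneg_left hDb (Complex.abs.nonneg _)
      rw [ht] at hcontr
      linarith
    · -- open mapping gives a neighbourhood
      have hVnhds : V ∈ nhds w₀ := hVopen.mem_nhds hw₀V
      have himg : ψ '' V ∈ Filter.map ψ (nhds w₀) := Filter.image_mem_map hVnhds
      have h5 : ψ '' V ∈ nhds (ψ w₀) := hmap himg
      rw [hψ₀] at h5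
      exact mem_of_superset h5 hsub
  · -- Large |z|
    refine ⟨200 * (c + 1) * (M + 1), by positivity, ?_⟩
    intro z hzim hzabs
    set K : ℝ := Complex.abs z with hK
    have hKbig : 200 * (c + 1) * (M + 1) ≤ K := hzabs
    have hK0 : 0 < K := by nlinarith
    have hz0 : z ≠ 0 := by
      intro h; rw [h] at hzim; simp at hzim
    set S : Set ℂ :=
      {w : ℂ | Complex.abs (w - z) ≤ 4 * c * M ∧ z.im / 2 ≤ w.im ∧ w.im ≤ 2 * z.im} with hS
    have hScl : IsClosed S := by
      have hSeq : S = {w : ℂ | Complex.abs (w - z) ≤ 4 * c * M} ∩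
          ({w : ℂ | z.im / 2 ≤ w.im} ∩ {w : ℂ | w.im ≤ 2 * z.im}) := by
        ext w; simp [hS, and_assoc]
      rw [hSeq]
      refine IsClosed.inter ?_ (IsClosed.inter ?_ ?_)
      · exact isClosed_le (Complex.continuous_abs.comp
          (continuous_id.sub continuous_const)) continuous_const
      · exact isClosed_le continuous_const Complex.continuous_im
      · exact isClosed_le Complex.continuous_im continuous_const
    have hzS : z ∈ S := by
      refine ⟨?_, by linarith, by linarith⟩
      simp only [sub_self, map_zero]
      positivity
    have hlow : ∀ w ∈ S, ∀ l ∈ Set.Icc 0 M, K / 4 ≤ Complex.abs ((l : ℂ) - w) := by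
      intro w hw l hl
      have t1 : Complex.abs z - Complex.abs w ≤ Complex.abs (z - w) := by
        simpa [Complex.norm_eq_abs] using norm_sub_norm_le z w
      have t2 : Complex.abs (z - w) = Complex.abs (w - z) := Complex.abs.map_sub z w
      have t3 : Complex.abs w - Complex.abs ((l : ℂ)) ≤ Complex.abs (w - (l : ℂ)) := by
        simpa [Complex.norm_eq_abs, Complex.abs_ofReal] using norm_sub_norm_le w ((l : ℂ))
      have t4 : Complex.abs (w - (l : ℂ)) = Complex.abs ((l : ℂ) - w) :=
        Complex.abs.map_sub w ((l : ℂ))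
      have t5 : Complex.abs ((l : ℂ)) ≤ M := by
        rw [Complex.abs_ofReal, _root_.abs_of_nonneg hl.1]; exact hl.2
      have hw1 := hw.1
      rw [t2] at t1
      rw [t4] at t3
      nlinarith [hc.le, hM1, hKbig]
    set T : ℂ → ℂ := fun w => z * (1 - (c : ℂ) * Jf w) with hT
    have hKq : (0 : ℝ) < K / 4 := by positivity
    have hJab : ∀ w ∈ S, Complex.abs (Jf w) * K ≤ 4 * M := by
      intro w hw
      have h1 := Stmt7Aux.norm_JJ_le hM hKq (hlow w hw)
      rw [le_div_iff₀ hKq] at h1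
      linarith
    have hJim : ∀ w ∈ S, 0 ≤ (Jf w).im ∧ (Jf w).im * K ^ 2 ≤ 16 * M * w.im := by
      intro w hw
      have hwim : 0 < w.im := by have := hw.2.1; linarith
      have h := Stmt7Aux.im_JJ_bounds hM hKq (hlow w hw) hwim
      refine ⟨h.1, ?_⟩
      have h2 := h.2
      rw [le_div_iff₀ (by positivity)] at h2
      nlinarith [h2]
    have hmaps : Set.MapsTo T S S := by
      intro w hw
      obtain ⟨hw1, hw2, hw3⟩ := hw
      have hwim : 0 < w.im := by linarith
      have hja := hJab w ⟨hw1, hw2, hw3⟩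
      have hji := hJim w ⟨hw1, hw2, hw3⟩
      have hjabs0 : 0 ≤ Complex.abs (Jf w) := Complex.abs.nonneg _
      have hTim : (T w).im = z.im - c * (z.re * (Jf w).im + z.im * (Jf w).re) := by
        simp only [hT]
        simp [Complex.mul_im, Complex.mul_re, Complex.sub_im, Complex.sub_re]
        ring
      have hre : |z.re| ≤ K := Complex.abs_re_le_norm z
      have hure : |(Jf w).re| ≤ Complex.abs (Jf w) := Complex.abs_re_le_norm (Jf w)
      have hA : |z.re * (Jf w).im| * K ≤ 32 * M * z.im := by
        rw [abs_mul, _root_.abs_of_nonneg hji.1]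
        have p1 : |z.re| * (Jf w).im * K ≤ K * (Jf w).im * K :=
          mul_le_mul_of_nonneg_right (mul_le_mul_of_nonneg_right hre hji.1) hK0.le
        have p2 : 16 * M * w.im ≤ 16 * M * (2 * z.im) :=
          mul_le_mul_of_nonneg_left hw3 (by positivity)
        nlinarith [hji.2]
      have hB : |z.im * (Jf w).re| * K ≤ 4 * M * z.im := by
        rw [abs_mul, _root_.abs_of_pos hzim]
        have p1 : z.im * |(Jf w).re| * K ≤ z.im * (Complex.abs (Jf w) * K) := by
          have := mul_le_mul_of_nonneg_left hure hzim.le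
          nlinarith [this, hK0.le, hzim.le, abs_nonneg (Jf w).re]
        have p2 : z.im * (Complex.abs (Jf w) * K) ≤ z.im * (4 * M) :=
          mul_le_mul_of_nonneg_left hja hzim.le
        nlinarith
      have hsmall : c * |z.re * (Jf w).im + z.im * (Jf w).re| ≤ z.im / 2 := by
        have h1 : |z.re * (Jf w).im + z.im * (Jf w).re|
            ≤ |z.re * (Jf w).im| + |z.im * (Jf w).re| := abs_add_le _ _
        have h72 : 72 * c * M ≤ K := by nlinarith
        have p1 : c * |z.re * (Jf w).im + z.im * (Jf w).re| * K
            ≤ c * ((|z.re * (Jf w).im| + |z.im * (Jf w).re|) * K) := by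
          have := mul_le_mul_of_nonneg_right h1 hK0.le
          nlinarith [this, hc.le]
        have p2 : c * ((|z.re * (Jf w).im| + |z.im * (Jf w).re|) * K) ≤ c * (36 * M * z.im) := by
          refine mul_le_mul_of_nonneg_left ?_ hc.le
          nlinarith [hA, hB]
        have p3 : 72 * c * M * z.im ≤ K * z.im := mul_le_mul_of_nonneg_right h72 hzim.le
        have h2 : c * |z.re * (Jf w).im + z.im * (Jf w).re| * K ≤ (z.im / 2) * K := by
          nlinarith
        exact le_of_mul_le_mul_right h2 hK0
      have habs2 : |c * (z.re * (Jf w).im + z.im * (Jf w).re)| ≤ z.im / 2 := by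
        rw [abs_mul, _root_.abs_of_pos hc]; exact hsmall
      obtain ⟨hl2, hr2⟩ := abs_le.mp habs2
      refine ⟨?_, by rw [hTim]; linarith, by rw [hTim]; linarith⟩
      · have e1 : T w - z = -(z * ((c : ℂ) * Jf w)) := by simp only [hT]; ring
        rw [e1, Complex.abs.map_neg, map_mul, map_mul, Complex.abs_ofReal,
          _root_.abs_of_pos hc]
        nlinarith [hja, hc.le, mul_le_mul_of_nonneg_left hja hc.le]
    have hlip : LipschitzOnWith (1/2 : NNReal) T S := by
      rw [lipschitzOnWith_iff_dist_le_mul]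
      intro w₁ h₁ w₂ h₂
      have hJl := Stmt7Aux.JJ_lip hM hKq (hlow w₁ h₁) (hlow w₂ h₂)
      have e1 : T w₁ - T w₂ = z * (c : ℂ) * (Jf w₂ - Jf w₁) := by simp only [hT]; ring
      have e2 : Complex.abs (Jf w₂ - Jf w₁) = Complex.abs (Jf w₁ - Jf w₂) :=
        Complex.abs.map_sub _ _
      have e4 : M / (K/4)^2 = 16 * M / K^2 := by
        field_simp
        ring
      rw [e4] at hJl
      have h32 : 32 * c * M ≤ K := by nlinarith
      have coef : K * c * (16 * M / K^2) ≤ 1/2 := by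
        have e5 : K * c * (16 * M / K^2) = 16 * c * M / K := by
          field_simp
        rw [e5, div_le_iff₀ hK0]
        linarith
      have hgoal : Complex.abs (T w₁ - T w₂) ≤ 1/2 * Complex.abs (w₁ - w₂) := by
        rw [e1, map_mul, map_mul, Complex.abs_ofReal, _root_.abs_of_pos hc]
        calc Complex.abs z * c * Complex.abs (Jf w₂ - Jf w₁)
            ≤ K * c * (16 * M / K^2 * Complex.abs (w₁ - w₂)) := by
              rw [e2]
              exact mul_le_mul_of_nonneg_left hJl (by positivity)
          _ = (K * c * (16 * M / K^2)) * Complex.abs (w₁ - w₂) := by ring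
          _ ≤ 1/2 * Complex.abs (w₁ - w₂) :=
              mul_le_mul_of_nonneg_right coef (Complex.abs.nonneg _)
      calc dist (T w₁) (T w₂) = Complex.abs (T w₁ - T w₂) := Complex.dist_eq _ _
        _ ≤ 1/2 * Complex.abs (w₁ - w₂) := hgoal
        _ = ((1/2 : NNReal) : ℝ) * dist w₁ w₂ := by
            rw [Complex.dist_eq, Complex.norm_eq_abs]
            norm_num
    have hcontr : ContractingWith (1/2) (hmaps.restrict T S S) :=
      ⟨by rw [← NNReal.coe_lt_coe]; norm_num, hlip.mapsToRestrict hmaps⟩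
    set w : ℂ := ContractingWith.efixedPoint' T hScl.isComplete hmaps hcontr z hzS
      (edist_ne_top _ _) with hwdef
    have hwS : w ∈ S := ContractingWith.efixedPoint_mem' hScl.isComplete hmaps hcontr hzS
      (edist_ne_top _ _)
    have hfix : T w = w := ContractingWith.efixedPoint_isFixedPt' hScl.isComplete hmaps hcontr
      hzS (edist_ne_top _ _)
    obtain ⟨hw1, hw2, hw3⟩ := hwS
    have hwim : 0 < w.im := by linarith
    have hja := hJab w ⟨hw1, hw2, hw3⟩
    have hji := hJim w ⟨hw1, hw2, hw3⟩
    set s : ℂ := (Jf w - 1) * z⁻¹ with hs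
    have hzs : z * s = Jf w - 1 := by
      rw [hs, mul_comm z _, inv_mul_cancel_right₀ hz0]
    have hkey : (1 - (c : ℂ) * z * s - (c : ℂ)) * z = w := by
      calc (1 - (c : ℂ) * z * s - (c : ℂ)) * z
          = (1 - (c : ℂ) * (z * s) - (c : ℂ)) * z := by ring
        _ = (1 - (c : ℂ) * (Jf w - 1) - (c : ℂ)) * z := by rw [hzs]
        _ = z * (1 - (c : ℂ) * Jf w) := by ring
        _ = T w := by simp only [hT]
        _ = w := hfix
    refine ⟨hzim, s, ?_, ?_, ?_, ?_⟩
    · -- 0 < s.im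
      have hnq : (0 : ℝ) < Complex.normSq z := Complex.normSq_pos.mpr hz0
      have h1 : s.im = ((Jf w).im * z.re - ((Jf w).re - 1) * z.im) / Complex.normSq z := by
        rw [hs, Complex.mul_im, Complex.inv_re, Complex.inv_im]
        simp only [Complex.sub_re, Complex.sub_im, Complex.one_re, Complex.one_im]
        ring
      rw [h1]
      refine div_pos ?_ hnq
      have habsu : Complex.abs (Jf w) ≤ 1/2 := by
        have h8 : 8 * M ≤ K := by nlinarith
        nlinarith [hja, Complex.abs.nonneg (Jf w), hM0,
          mul_le_mul_of_nonneg_left h8 (Complex.abs.nonneg (Jf w))]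
      have hure : |(Jf w).re| ≤ Complex.abs (Jf w) := Complex.abs_re_le_norm (Jf w)
      have hre : |z.re| ≤ K := Complex.abs_re_le_norm z
      have ht3 : (Jf w).re - 1 ≤ -(1/2) := by
        have := (abs_le.mp hure).2
        linarith
      have ht2 : (Jf w).im * K ≤ z.im / 4 := by
        have h128 : 128 * M ≤ K := by nlinarith
        nlinarith [hji.1, hji.2, hw3, hM0, hK0, hzim,
          mul_le_mul_of_nonneg_left h128 (mul_nonneg hji.1 hK0.le)]
      have ht1 : -((Jf w).im * K) ≤ (Jf w).im * z.re := by
        nlinarith [hji.1, (abs_le.mp hre).1]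
      nlinarith [mul_le_mul_of_nonneg_right ht3 hzim.le, ht1, ht2]
    · -- the equation
      rw [hkey, hzs]
      have h2 : Jf w - 1 + 1 = Jf w := by ring
      rw [h2]
      rfl
    · rw [hkey]
      linarith
    · rw [hkey, hzs]
      have h3 : ((Jf w) - 1).im = (Jf w).im := by simp
      rw [h3, _root_.abs_of_nonneg hji.1]
      have h16 : 32 * c * M < K := by nlinarith
      have h5 : (c * K * (Jf w).im) * K ≤ 16 * c * M * w.im := by
        nlinarith [mul_le_mul_of_nonneg_left hji.2 hc.le]
      have h7 : (c * K * (Jf w).im) * K < (w.im / 2) * K := by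
        nlinarith [mul_lt_mul_of_pos_right h16 hwim]
      have h8 := lt_of_mul_lt_mul_right h7 hK0.le
      rw [Complex.norm_eq_abs, ← hK]
      linarith
end

section
/- Let ν̂ be a probability measure on ℝ with compact support contained in [0,∞) and let c > 0. Define U = {z ∈ ℂ⁺ : there exists s ∈ ℂ⁺ which is a population-Stieltjes-estimator value at z for (ν̂, c)}. Then there exists a function ŝ : U → ℂ which is holomorphic on U (complex-differentiable at every point of U) such that for every z ∈ U, ŝ(z) ∈ ℂ⁺ and ŝ(z) is a population-Stieltjes-estimator value at z for (ν̂, c). -/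
open MeasureTheory Filter Complex Set

namespace Stmt8Aux

open MeasureTheory Filter Complex Set

lemma measure_compl_msupport (ν : Measure ℝ) : ν (msupport ν)ᶜ = 0 := by
  have hcov : ∀ x : ℝ, ∃ V : Set ℝ, IsOpen V ∧ (x ∈ (msupport ν)ᶜ → x ∈ V) ∧ ν V = 0 := by
    intro x
    by_cases hx : x ∈ (msupport ν)ᶜ
    · simp only [msupport, mem_compl_iff, mem_setOf_eq, not_forall] at hx
      obtain ⟨U, hU, hU0⟩ := hx
      obtain ⟨V, hVU, hVopen, hxV⟩ := mem_nhds_iff.1 hU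
      exact ⟨V, hVopen, fun _ => hxV,
        le_antisymm (not_lt.1 fun h => hU0 (h.trans_le (measure_mono hVU))) bot_le⟩
    · exact ⟨∅, isOpen_empty, fun h => absurd h hx, measure_empty⟩
  choose V hVopen hxV hV0 using hcov
  have hsub : (msupport ν)ᶜ ⊆ ⋃ x, V x := fun x hx => mem_iUnion.2 ⟨x, hxV x hx⟩
  obtain ⟨T, hTc, hTU⟩ := TopologicalSpace.isOpen_iUnion_countable V hVopen
  have : ν (⋃ x, V x) = 0 := by
    rw [← hTU]
    exact (measure_biUnion_null_iff hTc).2 fun x _ => hV0 x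
  exact measure_mono_null hsub this

lemma ae_nonneg {ν : Measure ℝ} (hpos : msupport ν ⊆ Set.Ici 0) : ∀ᵐ l ∂ν, 0 ≤ l := by
  refine measure_mono_null (fun x hx => ?_) (measure_compl_msupport ν)
  simp only [mem_compl_iff, mem_setOf_eq] at hx ⊢
  exact fun hm => hx (hpos hm)

lemma im_le_norm_sub (l : ℝ) (w : ℂ) : w.im ≤ ‖(l : ℂ) - w‖ := by
  have h : |((l : ℂ) - w).im| ≤ ‖(l : ℂ) - w‖ := Complex.abs_im_le_norm _
  rw [Complex.sub_im, Complex.ofReal_im, zero_sub, abs_neg] at h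
  calc w.im ≤ |w.im| := le_abs_self _
    _ ≤ ‖(l : ℂ) - w‖ := h
    _ = ‖(l : ℂ) - w‖ := rfl


lemma sub_ne (l : ℝ) {w : ℂ} (hw : 0 < w.im) : (l : ℂ) - w ≠ 0 := by
  intro h
  have h2 : ((l : ℂ) - w).im = 0 := by rw [h]; rfl
  simp only [Complex.sub_im, Complex.ofReal_im, zero_sub, neg_eq_zero] at h2
  exact absurd h2 (ne_of_gt hw)

lemma abs_le_norm_mul (l : ℝ) {w : ℂ} (hw : 0 < w.im) :
    |l| ≤ ‖(l : ℂ) - w‖ * (1 + ‖w‖ / w.im) := by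
  have h1 : |l| = ‖(l : ℂ)‖ := (Complex.norm_real l).symm
  have h2 : ‖(l : ℂ)‖ ≤ ‖(l : ℂ) - w‖ + ‖w‖ := by
    calc ‖(l : ℂ)‖ = ‖(l : ℂ) - w + w‖ := by ring_nf
      _ ≤ ‖(l : ℂ) - w‖ + ‖w‖ := norm_add_le _ _
  have h3 : ‖w‖ ≤ ‖(l : ℂ) - w‖ * (‖w‖ / w.im) := by
    rw [mul_div_assoc', mul_comm, mul_div_assoc]
    have : (1:ℝ) ≤ ‖(l : ℂ) - w‖ / w.im := (one_le_div hw).2 (im_le_norm_sub l w)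
    nlinarith [norm_nonneg w]
  calc |l| = ‖(l : ℂ)‖ := h1
    _ ≤ ‖(l : ℂ) - w‖ + ‖w‖ := h2
    _ ≤ ‖(l : ℂ) - w‖ + ‖(l : ℂ) - w‖ * (‖w‖ / w.im) := by linarith
    _ = ‖(l : ℂ) - w‖ * (1 + ‖w‖ / w.im) := by ring

lemma integrable_of_bdd {ν : Measure ℝ} [IsFiniteMeasure ν] {f : ℝ → ℂ} (hf : Continuous f)
    {C : ℝ} (h : ∀ x, ‖f x‖ ≤ C) : Integrable f ν :=
  (integrable_const C).mono' hf.aestronglyMeasurable (Eventually.of_forall h)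

variable {ν : Measure ℝ} {w w₁ w₂ : ℂ}

lemma integrable_inv [IsFiniteMeasure ν] (hw : 0 < w.im) :
    Integrable (fun l : ℝ => ((l : ℂ) - w)⁻¹) ν := by
  refine integrable_of_bdd ((Complex.continuous_ofReal.sub continuous_const).inv₀
    fun l => sub_ne l hw) (C := (w.im)⁻¹) fun l => ?_
  rw [norm_inv]
  exact inv_anti₀ hw (im_le_norm_sub l w)

lemma integrable_div [IsFiniteMeasure ν] (hw : 0 < w.im) :
    Integrable (fun l : ℝ => (l : ℂ) / ((l : ℂ) - w)) ν := by
  refine integrable_of_bdd (Complex.continuous_ofReal.div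
    (Complex.continuous_ofReal.sub continuous_const) fun l => sub_ne l hw)
    (C := 1 + ‖w‖ / w.im) fun l => ?_
  rw [norm_div, Complex.norm_real, div_le_iff₀ (lt_of_lt_of_le hw (im_le_norm_sub l w))]
  calc |l| ≤ ‖(l : ℂ) - w‖ * (1 + ‖w‖ / w.im) := abs_le_norm_mul l hw
    _ = (1 + ‖w‖ / w.im) * ‖(l : ℂ) - w‖ := by ring

lemma integrable_cross [IsFiniteMeasure ν] (h1 : 0 < w₁.im) (h2 : 0 < w₂.im) :
    Integrable (fun l : ℝ => (l : ℂ) / (((l : ℂ) - w₁) * ((l : ℂ) - w₂))) ν := by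
  have heq : ∀ l : ℝ, (l : ℂ) / (((l : ℂ) - w₁) * ((l : ℂ) - w₂)) =
      ((l : ℂ) / ((l : ℂ) - w₁)) * ((l : ℂ) - w₂)⁻¹ := by
    intro l; rw [div_mul_eq_div_div, div_eq_mul_inv]
  simp_rw [heq]
  refine integrable_of_bdd ((Complex.continuous_ofReal.div
    (Complex.continuous_ofReal.sub continuous_const) fun l => sub_ne l h1).mul
    ((Complex.continuous_ofReal.sub continuous_const).inv₀ fun l => sub_ne l h2))
    (C := (1 + ‖w₁‖ / w₁.im) * (w₂.im)⁻¹) fun l => ?_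
  rw [norm_mul, norm_inv]
  have hb1 : ‖(l : ℂ) / ((l : ℂ) - w₁)‖ ≤ 1 + ‖w₁‖ / w₁.im := by
    rw [norm_div, Complex.norm_real, div_le_iff₀ (lt_of_lt_of_le h1 (im_le_norm_sub l w₁))]
    calc |l| ≤ ‖(l : ℂ) - w₁‖ * (1 + ‖w₁‖ / w₁.im) := abs_le_norm_mul l h1
      _ = (1 + ‖w₁‖ / w₁.im) * ‖(l : ℂ) - w₁‖ := by ring
  have hb2 : ‖(l : ℂ) - w₂‖⁻¹ ≤ (w₂.im)⁻¹ := inv_anti₀ h2 (im_le_norm_sub l w₂)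
  exact mul_le_mul hb1 hb2 (by positivity) (by positivity)

lemma integrable_sq [IsFiniteMeasure ν] (hw : 0 < w.im) :
    Integrable (fun l : ℝ => (l : ℂ) / ((l : ℂ) - w) ^ 2) ν := by
  have := integrable_cross (ν := ν) hw hw
  simpa [sq] using this

lemma integrable_inv_sq [IsFiniteMeasure ν] (hw : 0 < w.im) :
    Integrable (fun l : ℝ => (((l : ℂ) - w) ^ 2)⁻¹) ν := by
  refine integrable_of_bdd (Continuous.inv₀ (((Complex.continuous_ofReal.sub
    continuous_const).pow 2)) fun l => pow_ne_zero 2 (sub_ne l hw))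
    (C := ((w.im) ^ 2)⁻¹) fun l => ?_
  rw [norm_inv, norm_pow]
  refine inv_anti₀ (by positivity) ?_
  exact pow_le_pow_left₀ hw.le (im_le_norm_sub l w) 2

lemma integrable_I [IsFiniteMeasure ν] (hw : 0 < w.im) :
    Integrable (fun l : ℝ => l / Complex.normSq ((l : ℂ) - w)) ν := by
  refine Integrable.mono' (g := fun l : ℝ => (1 + ‖w‖ / w.im) * (w.im)⁻¹)
    (integrable_const _) ?_ (Eventually.of_forall fun l => ?_)
  · refine Continuous.aestronglyMeasurable ?_
    exact continuous_id.div (Complex.continuous_normSq.comp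
      (Complex.continuous_ofReal.sub continuous_const)) fun l => by
        simpa [Complex.normSq_eq_zero] using sub_ne l hw
  · have hnsq : Complex.normSq ((l : ℂ) - w) = ‖(l : ℂ) - w‖ ^ 2 := by
      rw [Complex.sq_norm]
    have ha : (0:ℝ) < ‖(l : ℂ) - w‖ := lt_of_lt_of_le hw (im_le_norm_sub l w)
    have hK : (0:ℝ) ≤ 1 + ‖w‖ / w.im := add_nonneg zero_le_one (div_nonneg (norm_nonneg _) hw.le)
    rw [Real.norm_eq_abs, abs_div, _root_.abs_of_nonneg (Complex.normSq_nonneg _), hnsq]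
    have key : |l| / ‖(l : ℂ) - w‖ ^ 2 ≤ (1 + ‖w‖ / w.im) / ‖(l : ℂ) - w‖ := by
      rw [div_le_div_iff₀ (by positivity) ha]
      nlinarith [mul_le_mul_of_nonneg_right (abs_le_norm_mul l hw) (norm_nonneg ((l : ℂ) - w))]
    refine key.trans ?_
    rw [div_eq_mul_inv]
    exact mul_le_mul_of_nonneg_left (inv_anti₀ hw (im_le_norm_sub l w)) hK


lemma integral_div_eq {ν : Measure ℝ} [IsProbabilityMeasure ν] {w : ℂ} (hw : 0 < w.im) :
    ∫ l, (l : ℂ) / ((l : ℂ) - w) ∂ν = 1 + w * St ν w := by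
  have h : ∀ l : ℝ, (l : ℂ) / ((l : ℂ) - w) = 1 + w * ((l : ℂ) - w)⁻¹ := by
    intro l
    field_simp [sub_ne l hw]
    ring
  simp_rw [h]
  rw [integral_add (integrable_const 1) ((integrable_inv hw).const_mul w),
    integral_const, probReal_univ, one_smul, integral_const_mul, St]

lemma integral_sq_eq {ν : Measure ℝ} [IsFiniteMeasure ν] {w : ℂ} (hw : 0 < w.im) :
    ∫ l, (l : ℂ) / ((l : ℂ) - w) ^ 2 ∂ν = St ν w + w * ∫ l, (((l : ℂ) - w) ^ 2)⁻¹ ∂ν := by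
  have h : ∀ l : ℝ, (l : ℂ) / ((l : ℂ) - w) ^ 2 =
      ((l : ℂ) - w)⁻¹ + w * (((l : ℂ) - w) ^ 2)⁻¹ := by
    intro l
    field_simp [sub_ne l hw]
    ring
  simp_rw [h]
  rw [integral_add (integrable_inv hw) ((integrable_inv_sq hw).const_mul w),
    integral_const_mul, St]

lemma im_integral_div {ν : Measure ℝ} [IsFiniteMeasure ν] {w : ℂ} (hw : 0 < w.im) :
    (∫ l, (l : ℂ) / ((l : ℂ) - w) ∂ν).im =
      w.im * ∫ l, l / Complex.normSq ((l : ℂ) - w) ∂ν := by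
  have him := integral_im (𝕜 := ℂ) (integrable_div (ν := ν) hw)
  rw [RCLike.im_eq_complex_im] at him
  rw [← him]
  have h : ∀ l : ℝ, ((l : ℂ) / ((l : ℂ) - w)).im =
      w.im * (l / Complex.normSq ((l : ℂ) - w)) := by
    intro l
    rw [Complex.div_im]
    simp only [Complex.ofReal_im, Complex.ofReal_re, Complex.sub_im, Complex.sub_re]
    push_cast
    ring
  simp_rw [h]
  rw [integral_const_mul]

lemma I_nonneg {ν : Measure ℝ} {w : ℂ} (hae : ∀ᵐ l ∂ν, 0 ≤ l) :
    0 ≤ ∫ l, l / Complex.normSq ((l : ℂ) - w) ∂ν :=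
  integral_nonneg_of_ae (hae.mono fun l hl => div_nonneg hl (Complex.normSq_nonneg _))

lemma norm_integral_sq_le {ν : Measure ℝ} [IsFiniteMeasure ν] {w : ℂ} (hw : 0 < w.im)
    (hae : ∀ᵐ l ∂ν, 0 ≤ l) :
    ‖∫ l, (l : ℂ) / ((l : ℂ) - w) ^ 2 ∂ν‖ ≤ ∫ l, l / Complex.normSq ((l : ℂ) - w) ∂ν := by
  refine (norm_integral_le_integral_norm _).trans (le_of_eq (integral_congr_ae
    (hae.mono fun l hl => ?_)))
  dsimp only
  rw [norm_div, norm_pow, Complex.norm_real, Real.norm_eq_abs, _root_.abs_of_nonneg hl,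
    Complex.sq_norm]

lemma norm_integral_cross_le {ν : Measure ℝ} [IsFiniteMeasure ν] {w₁ w₂ : ℂ} (h1 : 0 < w₁.im)
    (h2 : 0 < w₂.im) (hae : ∀ᵐ l ∂ν, 0 ≤ l) :
    ‖∫ l, (l : ℂ) / (((l : ℂ) - w₁) * ((l : ℂ) - w₂)) ∂ν‖ ≤
      ((∫ l, l / Complex.normSq ((l : ℂ) - w₁) ∂ν) +
        ∫ l, l / Complex.normSq ((l : ℂ) - w₂) ∂ν) / 2 := by
  refine (norm_integral_le_integral_norm _).trans ?_
  have hint : Integrable (fun l : ℝ => (l / Complex.normSq ((l : ℂ) - w₁) +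
      l / Complex.normSq ((l : ℂ) - w₂)) / 2) ν :=
    ((integrable_I h1).add (integrable_I h2)).div_const 2
  have hmono : ∫ l, ‖(l : ℂ) / (((l : ℂ) - w₁) * ((l : ℂ) - w₂))‖ ∂ν ≤
      ∫ l, (l / Complex.normSq ((l : ℂ) - w₁) + l / Complex.normSq ((l : ℂ) - w₂)) / 2 ∂ν := by
    refine integral_mono_ae ((integrable_cross h1 h2).norm) hint (hae.mono fun l hl => ?_)
    have ha : (0:ℝ) < ‖(l : ℂ) - w₁‖ := lt_of_lt_of_le h1 (im_le_norm_sub l w₁)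
    have hb : (0:ℝ) < ‖(l : ℂ) - w₂‖ := lt_of_lt_of_le h2 (im_le_norm_sub l w₂)
    have hnsq1 : Complex.normSq ((l : ℂ) - w₁) = ‖(l : ℂ) - w₁‖ ^ 2 := by
      rw [Complex.sq_norm]
    have hnsq2 : Complex.normSq ((l : ℂ) - w₂) = ‖(l : ℂ) - w₂‖ ^ 2 := by
      rw [Complex.sq_norm]
    simp only
    rw [norm_div, norm_mul, Complex.norm_real, Real.norm_eq_abs, _root_.abs_of_nonneg hl, hnsq1, hnsq2]
    set a := ‖(l : ℂ) - w₁‖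
    set b := ‖(l : ℂ) - w₂‖
    have key : (0:ℝ) ≤ l * (1/a - 1/b)^2 := mul_nonneg hl (sq_nonneg _)
    have expand : l * (1/a - 1/b)^2 = l/a^2 + l/b^2 - 2*(l/(a*b)) := by
      field_simp
      ring
    rw [expand] at key
    linarith
  refine hmono.trans (le_of_eq ?_)
  rw [integral_div, integral_add (integrable_I h1) (integrable_I h2)]

section EstValFacts

variable {ν : Measure ℝ} [IsProbabilityMeasure ν] {c : ℝ} {z s : ℂ}

lemma estval_key (h1 : z * s + 1 = ∫ l, (l : ℂ) / ((l : ℂ) - (1 - (c:ℂ)*z*s - (c:ℂ))*z) ∂ν)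
    (hw : 0 < ((1 - (c:ℂ)*z*s - (c:ℂ))*z).im) :
    z * s = ((1 - (c:ℂ)*z*s - (c:ℂ))*z) * St ν ((1 - (c:ℂ)*z*s - (c:ℂ))*z) := by
  rw [integral_div_eq hw] at h1
  linear_combination h1

lemma estval_I_lt (hc : 0 < c) (hae : ∀ᵐ l ∂ν, 0 ≤ l) (h : EstVal ν c z s) :
    c * ‖z‖ *
      (∫ l, l / Complex.normSq ((l : ℂ) - (1 - (c:ℂ)*z*s - (c:ℂ))*z) ∂ν) < 1 := by
  obtain ⟨he, hw, hlt⟩ := h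
  have hkey := estval_key he hw
  have him : (z*s).im = ((1 - (c:ℂ)*z*s - (c:ℂ))*z).im *
      ∫ l, l / Complex.normSq ((l : ℂ) - (1 - (c:ℂ)*z*s - (c:ℂ))*z) ∂ν := by
    have h1 : z*s = (∫ l, (l : ℂ) / ((l : ℂ) - (1 - (c:ℂ)*z*s - (c:ℂ))*z) ∂ν) - 1 := by
      linear_combination he
    rw [h1, Complex.sub_im, Complex.one_im, sub_zero, im_integral_div hw]
  rw [him] at hlt
  have hI := I_nonneg (ν := ν) (w := (1 - (c:ℂ)*z*s - (c:ℂ))*z) hae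
  have habs : |((1 - (c:ℂ)*z*s - (c:ℂ))*z).im *
      ∫ l, l / Complex.normSq ((l : ℂ) - (1 - (c:ℂ)*z*s - (c:ℂ))*z) ∂ν| =
      ((1 - (c:ℂ)*z*s - (c:ℂ))*z).im *
      ∫ l, l / Complex.normSq ((l : ℂ) - (1 - (c:ℂ)*z*s - (c:ℂ))*z) ∂ν :=
    _root_.abs_of_nonneg (mul_nonneg hw.le hI)
  rw [habs] at hlt
  nlinarith [hw, hI, norm_nonneg z]

lemma estval_unique (hz : 0 < z.im) (hc : 0 < c) (hae : ∀ᵐ l ∂ν, 0 ≤ l)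
    {s₁ s₂ : ℂ} (h1 : EstVal ν c z s₁) (h2 : EstVal ν c z s₂) : s₁ = s₂ := by
  have hz0 : z ≠ 0 := fun h => by simp [h] at hz
  have hc0 : (c : ℂ) ≠ 0 := by
    simpa using (Complex.ofReal_ne_zero).2 hc.ne'
  have hI1 := estval_I_lt hc hae h1
  have hI2 := estval_I_lt hc hae h2
  obtain ⟨he1, hw1, hlt1⟩ := h1
  obtain ⟨he2, hw2, hlt2⟩ := h2
  by_cases hww : (1 - (c:ℂ)*z*s₁ - (c:ℂ))*z = (1 - (c:ℂ)*z*s₂ - (c:ℂ))*z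
  · have h' := mul_right_cancel₀ hz0 hww
    have h'' : (c:ℂ)*z*s₁ = (c:ℂ)*z*s₂ := by linear_combination -h'
    exact mul_left_cancel₀ (mul_ne_zero hc0 hz0) h''
  · exfalso
    set w₁ := (1 - (c:ℂ)*z*s₁ - (c:ℂ))*z with hw1def
    set w₂ := (1 - (c:ℂ)*z*s₂ - (c:ℂ))*z with hw2def
    set K := ∫ l, (l : ℂ) / (((l : ℂ) - w₁) * ((l : ℂ) - w₂)) ∂ν with hKdef
    have hdiff : z*(s₁-s₂) = (w₁-w₂)*K := by
      have hsub : z*s₁ - z*s₂ =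
          (∫ l, (l : ℂ) / ((l : ℂ) - w₁) ∂ν) - ∫ l, (l : ℂ) / ((l : ℂ) - w₂) ∂ν := by
        linear_combination he1 - he2
      rw [← integral_sub (integrable_div hw1) (integrable_div hw2)] at hsub
      have hpt : ∀ l : ℝ, (l : ℂ)/((l : ℂ)-w₁) - (l : ℂ)/((l : ℂ)-w₂) =
          (w₁-w₂)*((l : ℂ)/(((l : ℂ)-w₁)*((l : ℂ)-w₂))) := by
        intro l
        field_simp [sub_ne l hw1, sub_ne l hw2]
        ring
      simp_rw [hpt, integral_const_mul] at hsub
      rw [mul_sub]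
      exact hsub
    have halso : z*(s₁-s₂) = (w₂-w₁)/((c:ℂ)*z) := by
      rw [hw1def, hw2def]
      field_simp
      ring
    have hKeq : K = -(1/((c:ℂ)*z)) := by
      have hzero : (w₁-w₂)*(K + 1/((c:ℂ)*z)) = 0 := by
        have : (w₁-w₂)*K = (w₂-w₁)/((c:ℂ)*z) := by rw [← hdiff, halso]
        field_simp at this ⊢
        linear_combination this
      rcases mul_eq_zero.1 hzero with h | h
      · exact absurd (sub_eq_zero.1 h) hww
      · linear_combination h
    have hnormK : c * ‖z‖ * ‖K‖ = 1 := by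
      rw [hKeq]
      rw [norm_neg, norm_div, norm_one, norm_mul]
      rw [Complex.norm_real, Real.norm_eq_abs, _root_.abs_of_pos hc]
      field_simp [norm_ne_zero_iff.mpr hz0]
    have hb := norm_integral_cross_le hw1 hw2 hae
    have hczpos : (0:ℝ) < c * ‖z‖ := mul_pos hc (norm_pos_iff.mpr hz0)
    nlinarith [mul_le_mul_of_nonneg_left hb hczpos.le]

end EstValFacts


section Analytic

variable {ν : Measure ℝ} {c : ℝ}

lemma hasDerivAt_St [IsFiniteMeasure ν] {w : ℂ} (hw : 0 < w.im) :
    HasDerivAt (St ν) (∫ l, (((l : ℂ) - w) ^ 2)⁻¹ ∂ν) w := by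
  have hε : 0 < w.im / 2 := by linarith
  have him : ∀ x : ℂ, x ∈ Metric.ball w (w.im/2) → w.im/2 ≤ x.im := by
    intro x hx
    have h1 : |(x - w).im| ≤ ‖x - w‖ := Complex.abs_im_le_norm _
    have hd : ‖x - w‖ < w.im/2 := by rwa [Metric.mem_ball, dist_eq_norm] at hx
    have h2 : |x.im - w.im| < w.im/2 := lt_of_le_of_lt (by simpa using h1) hd
    have := abs_lt.1 h2
    linarith [this.1]
  have himpos : ∀ x : ℂ, x ∈ Metric.ball w (w.im/2) → 0 < x.im := fun x hx =>
    lt_of_lt_of_le hε (him x hx)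
  refine (hasDerivAt_integral_of_dominated_loc_of_deriv_le (Metric.ball_mem_nhds w hε)
    (F := fun (x : ℂ) (l : ℝ) => ((l : ℂ) - x)⁻¹)
    (F' := fun (x : ℂ) (l : ℝ) => (((l : ℂ) - x) ^ 2)⁻¹)
    (bound := fun _ => ((w.im / 2) ^ 2)⁻¹) ?_ ?_ ?_ ?_ ?_ ?_).2
  · refine eventually_of_mem (Metric.ball_mem_nhds w hε) fun x hx => ?_
    exact ((Complex.continuous_ofReal.sub continuous_const).inv₀
      fun l => sub_ne l (himpos x hx)).aestronglyMeasurable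
  · exact integrable_inv hw
  · exact (Continuous.inv₀ ((Complex.continuous_ofReal.sub continuous_const).pow 2)
      fun l => pow_ne_zero 2 (sub_ne l hw)).aestronglyMeasurable
  · refine Eventually.of_forall fun l => fun x hx => ?_
    rw [norm_inv, norm_pow]
    refine inv_anti₀ (by positivity) ?_
    exact pow_le_pow_left₀ hε.le ((him x hx).trans (im_le_norm_sub l x)) 2
  · exact integrable_const _
  · refine Eventually.of_forall fun l => fun x hx => ?_
    have hne : (l : ℂ) - x ≠ 0 := sub_ne l (himpos x hx)
    have h1 : HasDerivAt (fun y : ℂ => (l : ℂ) - y) (-1) x := by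
      simpa using (hasDerivAt_id x).const_sub (l : ℂ)
    have h2 := h1.inv hne
    exact h2.congr_deriv (by field_simp)

lemma continuousOn_sUnder [IsFiniteMeasure ν] :
    ContinuousOn (sUnder ν c) {w : ℂ | 0 < w.im} := by
  intro w hw
  have hw' : 0 < w.im := hw
  have h1 : HasDerivAt (fun y : ℂ => (1 - (c:ℂ)) / y) (-((1 - (c:ℂ)) / w ^ 2)) w := by
    have hne : w ≠ 0 := fun h => by simp [h] at hw'
    have := (hasDerivAt_inv hne).const_mul (1 - (c:ℂ))
    simp only [div_eq_mul_inv]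
    exact this.congr_deriv (by ring)
  have h2 : HasDerivAt (sUnder ν c)
      ((c:ℂ) * ∫ l, (((l : ℂ) - w) ^ 2)⁻¹ ∂ν + (1 - (c:ℂ)) / w ^ 2) w := by
    have := ((hasDerivAt_St (ν := ν) hw').const_mul (c:ℂ)).sub h1
    exact this.congr_deriv (by ring)
  exact h2.continuousAt.continuousWithinAt

lemma hasDerivAt_sUnder [IsFiniteMeasure ν] {w : ℂ} (hw : 0 < w.im) :
    HasDerivAt (sUnder ν c)
      ((c:ℂ) * ∫ l, (((l : ℂ) - w) ^ 2)⁻¹ ∂ν + (1 - (c:ℂ)) / w ^ 2) w := by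
  have hne : w ≠ 0 := fun h => by simp [h] at hw
  have h1 : HasDerivAt (fun y : ℂ => (1 - (c:ℂ)) / y) (-((1 - (c:ℂ)) / w ^ 2)) w := by
    have := (hasDerivAt_inv hne).const_mul (1 - (c:ℂ))
    simp only [div_eq_mul_inv]
    exact this.congr_deriv (by ring)
  have := ((hasDerivAt_St (ν := ν) hw).const_mul (c:ℂ)).sub h1
  exact this.congr_deriv (by ring)

lemma isOpen_V [IsFiniteMeasure ν] :
    IsOpen {w : ℂ | 0 < w.im ∧ sUnder ν c w ≠ 0} := by
  have h1 : IsOpen {w : ℂ | 0 < w.im} := isOpen_lt continuous_const Complex.continuous_im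
  have h2 : {w : ℂ | 0 < w.im ∧ sUnder ν c w ≠ 0} =
      {w : ℂ | 0 < w.im} ∩ sUnder ν c ⁻¹' ({0}ᶜ) := by
    ext w
    simp [Set.mem_setOf_eq, Set.mem_inter_iff]
  rw [h2]
  exact (continuousOn_sUnder (ν := ν) (c := c)).isOpen_inter_preimage h1 isOpen_compl_singleton

lemma hasDerivAt_phiInv [IsFiniteMeasure ν] {w : ℂ} (hw : 0 < w.im)
    (hne : sUnder ν c w ≠ 0) :
    HasDerivAt (phiInv ν c)
      (((c:ℂ) * ∫ l, (((l : ℂ) - w) ^ 2)⁻¹ ∂ν + (1 - (c:ℂ)) / w ^ 2) / (sUnder ν c w) ^ 2)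
      w := by
  have h1 := (hasDerivAt_const w (-1 : ℂ)).div (hasDerivAt_sUnder (ν := ν) (c := c) hw) hne
  have h2 : HasDerivAt (phiInv ν c)
      ((-1 * ((c:ℂ) * ∫ l, (((l : ℂ) - w) ^ 2)⁻¹ ∂ν + (1 - (c:ℂ)) / w ^ 2) * -1) /
        (sUnder ν c w) ^ 2) w := by
    exact h1.congr_deriv (by ring)
  exact h2.congr_deriv (by ring)

lemma analyticAt_phiInv [IsFiniteMeasure ν] {w : ℂ} (hw : 0 < w.im)
    (hne : sUnder ν c w ≠ 0) : AnalyticAt ℂ (phiInv ν c) w := by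
  have hmem : {w : ℂ | 0 < w.im ∧ sUnder ν c w ≠ 0} ∈ nhds w :=
    (isOpen_V (ν := ν) (c := c)).mem_nhds ⟨hw, hne⟩
  refine DifferentiableOn.analyticAt (fun x hx => ?_) hmem
  exact (hasDerivAt_phiInv (ν := ν) (c := c) hx.1 hx.2).differentiableAt.differentiableWithinAt

lemma hasStrictDerivAt_phiInv [IsFiniteMeasure ν] {w : ℂ} (hw : 0 < w.im)
    (hne : sUnder ν c w ≠ 0) :
    HasStrictDerivAt (phiInv ν c)
      (((c:ℂ) * ∫ l, (((l : ℂ) - w) ^ 2)⁻¹ ∂ν + (1 - (c:ℂ)) / w ^ 2) / (sUnder ν c w) ^ 2)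
      w := by
  obtain ⟨p, hp⟩ := analyticAt_phiInv (ν := ν) (c := c) hw hne
  have hs := hp.hasStrictDerivAt
  have heq := hs.hasDerivAt.unique (hasDerivAt_phiInv (ν := ν) (c := c) hw hne)
  rwa [heq] at hs

end Analytic


lemma main_construction {ν : Measure ℝ} [IsProbabilityMeasure ν] {c : ℝ} (hc : 0 < c)
    (hae : ∀ᵐ l ∂ν, 0 ≤ l) {z₀ s₀ : ℂ} (hz₀ : 0 < z₀.im) (hs₀ : 0 < s₀.im)
    (h : EstVal ν c z₀ s₀) :
    ∃ S : ℂ → ℂ, DifferentiableAt ℂ S z₀ ∧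
      ∀ᶠ z in nhds z₀, 0 < z.im ∧ 0 < (S z).im ∧ EstVal ν c z (S z) := by
  have hz00 : z₀ ≠ 0 := fun hh => by simp [hh] at hz₀
  have hc0 : (c:ℂ) ≠ 0 := by simpa using Complex.ofReal_ne_zero.2 hc.ne'
  have hIlt := estval_I_lt hc hae h
  obtain ⟨he, hwim, hlt⟩ := h
  set w₀ := (1 - (c:ℂ)*z₀*s₀ - (c:ℂ))*z₀ with hw₀def
  have hw00 : w₀ ≠ 0 := fun hh => by rw [hh] at hwim; simp at hwim
  have hkey : z₀*s₀ = w₀ * St ν w₀ := estval_key he hwim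
  clear_value w₀
  have hu₀p : (c:ℂ) * St ν w₀ * w₀ * z₀ - (1-(c:ℂ)) * z₀ = -w₀ := by
    linear_combination -(c:ℂ) * z₀ * hkey + hw₀def
  have hu₀ : sUnder ν c w₀ = -1/z₀ := by
    rw [sUnder]
    field_simp
    linear_combination hu₀p
  have hune : sUnder ν c w₀ ≠ 0 := by rw [hu₀]; simp [hz00]
  have hφ0 : phiInv ν c w₀ = z₀ := by rw [phiInv, hu₀]; field_simp
  have hu₀' : (c:ℂ) * St ν w₀ - (1-(c:ℂ))/w₀ = -1/z₀ := by rw [← hu₀, sUnder]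
  have hT : ∫ l, (l:ℂ)/((l:ℂ)-w₀)^2 ∂ν = St ν w₀ + w₀ * ∫ l, (((l:ℂ)-w₀)^2)⁻¹ ∂ν :=
    integral_sq_eq hwim
  have hD0 : ((c:ℂ) * (∫ l, (((l:ℂ) - w₀)^2)⁻¹ ∂ν) + (1-(c:ℂ))/w₀^2) /
      (sUnder ν c w₀)^2 ≠ 0 := by
    refine div_ne_zero ?_ (pow_ne_zero 2 hune)
    intro h0
    have hwu : (c:ℂ) * (∫ l, (l:ℂ)/((l:ℂ)-w₀)^2 ∂ν) + 1/z₀ =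
        w₀*((c:ℂ) * (∫ l, (((l:ℂ) - w₀)^2)⁻¹ ∂ν) + (1-(c:ℂ))/w₀^2) := by
      rw [hT]
      field_simp
      linear_combination hu₀p
    rw [h0, mul_zero] at hwu
    have hTval : (c:ℂ) * (∫ l, (l:ℂ)/((l:ℂ)-w₀)^2 ∂ν) = -(1/z₀) := by
      linear_combination hwu
    have hnorm : c * ‖z₀‖ * ‖∫ l, (l:ℂ)/((l:ℂ)-w₀)^2 ∂ν‖ = 1 := by
      have hn := congrArg (‖·‖) hTval
      rw [norm_mul, norm_neg, norm_div, norm_one, Complex.norm_real, Real.norm_eq_abs,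
        _root_.abs_of_pos hc] at hn
      rw [mul_comm c ‖z₀‖, mul_assoc, hn]
      field_simp [norm_ne_zero_iff.mpr hz00]
    have hble := norm_integral_sq_le hwim hae
    nlinarith [norm_pos_iff.mpr hz00, norm_nonneg (∫ l, (l:ℂ)/((l:ℂ)-w₀)^2 ∂ν), hIlt,
      mul_le_mul_of_nonneg_left hble
        (mul_nonneg hc.le (norm_nonneg z₀))]
  have hstrict := hasStrictDerivAt_phiInv (ν := ν) (c := c) hwim hune
  have hfd := hstrict.hasStrictFDerivAt_equiv hD0
  set g : ℂ → ℂ := hfd.localInverse _ _ _ with hgdef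
  have hgr : ∀ᶠ z in nhds z₀, phiInv ν c (g z) = z := by
    have := hfd.eventually_right_inverse
    rwa [hφ0] at this
  have hg0 : g z₀ = w₀ := by
    have := hfd.localInverse_apply_image
    rwa [hφ0] at this
  have hgc : ContinuousAt g z₀ := by
    have := hfd.localInverse_continuousAt
    rwa [hφ0] at this
  have hgd : DifferentiableAt ℂ g z₀ := by
    have := hfd.to_localInverse
    rw [hφ0] at this
    exact this.differentiableAt
  set S : ℂ → ℂ := fun z => (1 - (c:ℂ) - g z / z) / ((c:ℂ) * z) with hSdef
  have hS0 : S z₀ = s₀ := by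
    simp only [hSdef, hg0, hw₀def]
    field_simp
    ring
  have hSdiff : DifferentiableAt ℂ S z₀ := by
    refine DifferentiableAt.div ?_ ?_ (mul_ne_zero hc0 hz00)
    · exact (differentiableAt_const _).sub (hgd.div differentiableAt_id hz00)
    · exact (differentiableAt_const _).mul differentiableAt_id
  have hScont : ContinuousAt S z₀ := hSdiff.continuousAt
  refine ⟨S, hSdiff, ?_⟩
  have hev1 : ∀ᶠ z in nhds z₀, 0 < z.im :=
    ContinuousAt.eventually_lt continuousAt_const Complex.continuous_im.continuousAt hz₀
  have hgim : ContinuousAt (fun z => (g z).im) z₀ := Complex.continuous_im.continuousAt.comp hgc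
  have hev2 : ∀ᶠ z in nhds z₀, 0 < (g z).im := by
    refine ContinuousAt.eventually_lt continuousAt_const hgim ?_
    simpa [hg0] using hwim
  have hev3 : ∀ᶠ z in nhds z₀, 0 < (S z).im := by
    refine ContinuousAt.eventually_lt continuousAt_const
      (Complex.continuous_im.continuousAt.comp hScont) ?_
    simpa [hS0] using hs₀
  have hev5 : ∀ᶠ z in nhds z₀, c * ‖z‖ * |(z * S z).im| < (g z).im := by
    refine ContinuousAt.eventually_lt ?_ hgim ?_
    · refine ContinuousAt.mul (ContinuousAt.mul continuousAt_const
        continuous_norm.continuousAt) ?_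
      exact (Complex.continuous_im.continuousAt.comp (continuousAt_id.mul hScont)).abs
    · simpa [hS0, hg0] using hlt
  filter_upwards [hev1, hev2, hev3, hgr, hev5] with z h1 h2 h3 h4 h5
  have hzne : z ≠ 0 := fun hh => by simp [hh] at h1
  have hgz : (1 - (c:ℂ)*z*(S z) - (c:ℂ))*z = g z := by
    simp only [hSdef]
    field_simp
    ring
  have hgne : g z ≠ 0 := fun hh => by rw [hh] at h2; simp at h2
  have hune2 : sUnder ν c (g z) ≠ 0 := by
    intro h0
    rw [phiInv, h0] at h4
    simp at h4
    exact hzne h4.symm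
  have hu2 : (c:ℂ) * (g z) * St ν (g z) * z = (1 - (c:ℂ)) * z - g z := by
    rw [phiInv] at h4
    rw [div_eq_iff hune2] at h4
    rw [sUnder] at h4
    field_simp at h4
    linear_combination -h4
  refine ⟨h1, h3, ?_, ?_, ?_⟩
  · rw [hgz, integral_div_eq h2]
    simp only [hSdef]
    field_simp
    linear_combination -hu2
  · rw [hgz]; exact h2
  · rw [hgz]; exact h5


end Stmt8Aux

theorem stmt8 (ν : MeasureTheory.Measure ℝ) (hprob : IsProbabilityMeasure ν)
    (hcomp : IsCompact (msupport ν)) (hpos : msupport ν ⊆ Set.Ici 0)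
    (c : ℝ) (hc : 0 < c) :
    ∃ shat : ℂ → ℂ,
      ∀ z ∈ {z : ℂ | 0 < z.im ∧ ∃ s : ℂ, 0 < s.im ∧ EstVal ν c z s},
        DifferentiableAt ℂ shat z ∧ 0 < (shat z).im ∧ EstVal ν c z (shat z) := by
  classical
  have hae : ∀ᵐ l ∂ν, 0 ≤ l := Stmt8Aux.ae_nonneg hpos
  refine ⟨fun z => if h : ∃ s : ℂ, 0 < s.im ∧ EstVal ν c z s then h.choose else 0,
    fun z₀ hz₀mem => ?_⟩
  obtain ⟨hz₀, hex⟩ := hz₀mem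
  have hval : ∀ (z : ℂ) (h : ∃ s : ℂ, 0 < s.im ∧ EstVal ν c z s),
      (if h' : ∃ s : ℂ, 0 < s.im ∧ EstVal ν c z s then h'.choose else 0) = h.choose :=
    fun z h => dif_pos h
  have h₀ := hex.choose_spec
  refine ⟨?_, by simp only [hval z₀ hex]; exact h₀.1, by simp only [hval z₀ hex]; exact h₀.2⟩
  obtain ⟨S, hSdiff, hSev⟩ := Stmt8Aux.main_construction hc hae hz₀ h₀.1 h₀.2
  refine hSdiff.congr_of_eventuallyEq ?_
  filter_upwards [hSev] with z hz
  obtain ⟨hzim, hSim, hEst⟩ := hz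
  have hzU : ∃ s : ℂ, 0 < s.im ∧ EstVal ν c z s := ⟨S z, hSim, hEst⟩
  simp only [hval z hzU]
  exact Stmt8Aux.estval_unique hzim hc hae hzU.choose_spec.2 hEst
end
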